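/- arXiv:2101.02517 — 9 statements merged into one kernel-verified Lean document; each statement's English description precedes it below -/
import Mathlib

section
/- For any probability measure η on ℝ, the pushforward of the product measure η ⊗ λ (λ the Lebesgue measure on (0,1)) under the map (z,w) ↦ F_η(z-) + w·η({z}) is the Lebesgue measure λ on (0,1). -/
open MeasureTheory Set Filter Topology

namespace Stmt3Aux

private lemma one_div_mono {n m : ℕ} (h : n ≤ m) : (1:ℝ)/(m+1) ≤ 1/(n+1) :=
  one_div_le_one_div_of_le (by positivity) (by exact_mod_cast Nat.succ_le_succ h)

private lemma iUnion_Iic_eq (x : ℝ) : (⋃ n : ℕ, Iic (x - 1/(n+1))) = Iio x := by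
  ext z
  simp only [mem_iUnion, mem_Iic, mem_Iio]
  constructor
  · rintro ⟨n, hn⟩
    have h1 : 0 < 1/((n:ℝ)+1) := by positivity
    linarith
  · intro hz
    obtain ⟨n, hn⟩ := exists_nat_one_div_lt (show 0 < x - z by linarith)
    exact ⟨n, by linarith⟩

private lemma iInter_Iic_eq (x : ℝ) : (⋂ n : ℕ, Iic (x + 1/(n+1))) = Iic x := by
  ext z
  simp only [mem_iInter, mem_Iic]
  constructor
  · intro h
    by_contra hz
    push_neg at hz
    obtain ⟨n, hn⟩ := exists_nat_one_div_lt (show 0 < z - x by linarith)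
    exact absurd (h n) (by push_neg; linarith)
  · intro hz n
    have h1 : 0 < 1/((n:ℝ)+1) := by positivity
    linarith

private lemma iInter_Iio_eq (x : ℝ) : (⋂ n : ℕ, Iio (x + 1/(n+1))) = Iic x := by
  ext z
  simp only [mem_iInter, mem_Iio, mem_Iic]
  constructor
  · intro h
    by_contra hz
    push_neg at hz
    obtain ⟨n, hn⟩ := exists_nat_one_div_lt (show 0 < z - x by linarith)
    exact absurd (h n) (by push_neg; linarith)
  · intro hz n
    have h1 : 0 < 1/((n:ℝ)+1) := by positivity
    linarith

instance : IsProbabilityMeasure (volume.restrict (Ioo (0:ℝ) 1)) := by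
  constructor
  rw [Measure.restrict_apply_univ, Real.volume_Ioo]
  norm_num

private lemma nu_Ioo {r s : ℝ} (h0 : 0 ≤ r) (hs : s ≤ 1) :
    (volume.restrict (Ioo (0:ℝ) 1)) (Ioo r s) = ENNReal.ofReal (s - r) := by
  rw [Measure.restrict_apply measurableSet_Ioo, Ioo_inter_Ioo, max_eq_left h0,
    min_eq_left hs, Real.volume_Ioo]

variable (η : Measure ℝ) [IsProbabilityMeasure η]

private lemma toReal_Iic (z : ℝ) :
    (η (Iic z)).toReal = (η (Iio z)).toReal + (η {z}).toReal := by
  have h : η (Iic z) = η (Iio z) + η {z} := by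
    rw [← Iio_union_right, measure_union (by simp) (measurableSet_singleton z)]
  rw [h, ENNReal.toReal_add (measure_ne_top η _) (measure_ne_top η _)]

private lemma exists_Iic_lt {t : ℝ} (ht0 : 0 < t) :
    ∃ z : ℝ, η (Iic z) < ENNReal.ofReal t := by
  have hI : (⋂ n : ℕ, Iic (-(n:ℝ))) = (∅ : Set ℝ) := by
    ext z
    simp only [mem_iInter, mem_Iic, mem_empty_iff_false, iff_false, not_forall, not_le]
    obtain ⟨n, hn⟩ := exists_nat_gt (-z)
    exact ⟨n, by linarith⟩
  have h3 : Tendsto (fun n : ℕ => η (Iic (-(n:ℝ)))) atTop (𝓝 0) := by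
    have h := tendsto_measure_iInter_atTop (μ := η) (s := fun n : ℕ => Iic (-(n:ℝ)))
      (fun _ => measurableSet_Iic.nullMeasurableSet)
      (fun n m h => Iic_subset_Iic.2 (neg_le_neg (Nat.cast_le.2 h)))
      ⟨0, measure_ne_top η _⟩
    rwa [hI, measure_empty] at h
  obtain ⟨n, hn⟩ := (h3.eventually_lt_const (ENNReal.ofReal_pos.2 ht0)).exists
  exact ⟨-(n:ℝ), hn⟩

private lemma lower_Iic {t : ℝ} (ht0 : 0 < t) (ht1 : t < 1) :
    ENNReal.ofReal t ≤ (η.prod (volume.restrict (Ioo (0:ℝ) 1)))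
      {p : ℝ × ℝ | (η (Iio p.1)).toReal + p.2 * (η {p.1}).toReal ≤ t} := by
  set A : Set ℝ := {z | ENNReal.ofReal t ≤ η (Iic z)} with hA
  have hAne : A.Nonempty := by
    have h1 : Tendsto (fun x : ℝ => η (Iic x)) atTop (𝓝 1) := by
      simpa using tendsto_measure_Iic_atTop (μ := η)
    obtain ⟨x, hx⟩ := (h1.eventually_const_lt (ENNReal.ofReal_lt_one.2 ht1)).exists
    exact ⟨x, hx.le⟩
  have hAbdd : BddBelow A := by
    obtain ⟨z₀, hz₀⟩ := exists_Iic_lt η ht0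
    exact ⟨z₀, fun y hy => le_of_not_gt fun h =>
      absurd (hy.trans (measure_mono (Iic_subset_Iic.2 h.le))) hz₀.not_ge⟩
  set x := sInf A with hx
  have hIic : ENNReal.ofReal t ≤ η (Iic x) := by
    have hmono : Antitone (fun n : ℕ => Iic (x + 1/(n+1))) :=
      fun n m h => Iic_subset_Iic.2 (by linarith [one_div_mono h])
    have htd := tendsto_measure_iInter_atTop (μ := η)
      (fun _ => measurableSet_Iic.nullMeasurableSet) hmono ⟨0, measure_ne_top η _⟩
    rw [iInter_Iic_eq] at htd
    refine ge_of_tendsto' htd fun n => ?_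
    obtain ⟨a, ha, hax⟩ := (csInf_lt_iff hAbdd hAne).1 (show sInf A < x + 1/(n+1) by
      have h1 : 0 < 1/((n:ℝ)+1) := by positivity
      rw [← hx]; linarith)
    exact ha.trans (measure_mono (Iic_subset_Iic.2 hax.le))
  have hIio : η (Iio x) ≤ ENNReal.ofReal t := by
    have hmono : Monotone (fun n : ℕ => Iic (x - 1/(n+1))) :=
      fun n m h => Iic_subset_Iic.2 (by linarith [one_div_mono h])
    have htd := tendsto_measure_iUnion_atTop (μ := η) hmono
    rw [iUnion_Iic_eq] at htd
    refine le_of_tendsto' htd fun n => ?_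
    have hnm : x - 1/(n+1) ∉ A := by
      refine fun hmem => absurd (csInf_le hAbdd hmem) ?_
      have h1 : 0 < 1/((n:ℝ)+1) := by positivity
      rw [← hx]; push_neg; linarith
    exact (not_le.1 hnm).le
  have haR : (η (Iio x)).toReal ≤ t := by
    have h := ENNReal.toReal_mono ENNReal.ofReal_ne_top hIio
    rwa [ENNReal.toReal_ofReal ht0.le] at h
  have htR : t ≤ (η (Iic x)).toReal := by
    have h := ENNReal.toReal_mono (measure_ne_top η _) hIic
    rwa [ENNReal.toReal_ofReal ht0.le] at h
  have hc0 : 0 ≤ (η {x}).toReal := ENNReal.toReal_nonneg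
  set r : ℝ := if (η {x}).toReal = 0 then 1
    else (t - (η (Iio x)).toReal) / (η {x}).toReal with hr
  have hr0 : 0 ≤ r := by
    rw [hr]; split_ifs with h
    · norm_num
    · exact div_nonneg (by linarith) hc0
  have hr1 : r ≤ 1 := by
    rw [hr]; split_ifs with h
    · exact le_refl 1
    · rw [div_le_one (lt_of_le_of_ne hc0 (Ne.symm h))]
      have h2 := toReal_Iic η x
      linarith
  have hsub : (Iio x ×ˢ Ioo (0:ℝ) 1) ∪ ({x} ×ˢ Ioo (0:ℝ) r) ⊆
      {p : ℝ × ℝ | (η (Iio p.1)).toReal + p.2 * (η {p.1}).toReal ≤ t} := by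
    rintro ⟨z, w⟩ (⟨hz, hw⟩ | ⟨hz, hw⟩)
    · simp only [mem_Iio] at hz
      simp only [mem_setOf_eq]
      have hzA : z ∉ A := notMem_of_lt_csInf (show z < sInf A by rw [← hx]; exact hz) hAbdd
      have hlt : (η (Iic z)).toReal < t :=
        ENNReal.toReal_lt_of_lt_ofReal (not_le.1 hzA)
      have h2 := toReal_Iic η z
      have h3 : w * (η {z}).toReal ≤ (η {z}).toReal :=
        mul_le_of_le_one_left ENNReal.toReal_nonneg hw.2.le
      linarith
    · simp only [mem_singleton_iff] at hz
      subst hz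
      simp only [mem_setOf_eq]
      by_cases h : (η {x}).toReal = 0
      · rw [h, mul_zero, add_zero]; linarith
      · have hcpos : 0 < (η {x}).toReal := lt_of_le_of_ne hc0 (Ne.symm h)
        have hw2 : w < (t - (η (Iio x)).toReal) / (η {x}).toReal := by
          have := hw.2; rwa [hr, if_neg h] at this
        have h4 : w * (η {x}).toReal < t - (η (Iio x)).toReal :=
          (lt_div_iff₀ hcpos).1 hw2
        linarith
  have hdisj : Disjoint (Iio x ×ˢ Ioo (0:ℝ) 1) ({x} ×ˢ Ioo (0:ℝ) r) := by
    rw [Set.disjoint_left]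
    rintro ⟨z, w⟩ ⟨hz, -⟩ ⟨hz', -⟩
    rw [mem_singleton_iff] at hz'
    exact absurd hz' (ne_of_lt hz)
  have hcalc : (η.prod (volume.restrict (Ioo (0:ℝ) 1)))
      ((Iio x ×ˢ Ioo (0:ℝ) 1) ∪ ({x} ×ˢ Ioo (0:ℝ) r))
      = η (Iio x) + η {x} * ENNReal.ofReal r := by
    rw [measure_union hdisj ((measurableSet_singleton x).prod measurableSet_Ioo),
      Measure.prod_prod, Measure.prod_prod, nu_Ioo le_rfl le_rfl, nu_Ioo le_rfl hr1]
    norm_num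
  calc ENNReal.ofReal t ≤ η (Iio x) + η {x} * ENNReal.ofReal r := by
        have hx1 : η (Iio x) = ENNReal.ofReal ((η (Iio x)).toReal) :=
          (ENNReal.ofReal_toReal (measure_ne_top η _)).symm
        have hx2 : η {x} = ENNReal.ofReal ((η {x}).toReal) :=
          (ENNReal.ofReal_toReal (measure_ne_top η _)).symm
        rw [hx1, hx2, ← ENNReal.ofReal_mul hc0,
          ← ENNReal.ofReal_add ENNReal.toReal_nonneg (mul_nonneg hc0 hr0)]
        apply ENNReal.ofReal_le_ofReal
        by_cases h : (η {x}).toReal = 0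
        · have h2 := toReal_Iic η x
          rw [h, zero_mul, add_zero]
          rw [h] at h2; linarith
        · have h5 : (η {x}).toReal * r = t - (η (Iio x)).toReal := by
            rw [hr, if_neg h, mul_comm, div_mul_cancel₀ _ h]
          linarith
    _ = (η.prod (volume.restrict (Ioo (0:ℝ) 1)))
          ((Iio x ×ˢ Ioo (0:ℝ) 1) ∪ ({x} ×ˢ Ioo (0:ℝ) r)) := hcalc.symm
    _ ≤ _ := measure_mono hsub

private lemma lower_Ioi {t : ℝ} (ht0 : 0 < t) (ht1 : t < 1) :
    ENNReal.ofReal (1 - t) ≤ (η.prod (volume.restrict (Ioo (0:ℝ) 1)))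
      {p : ℝ × ℝ | t < (η (Iio p.1)).toReal + p.2 * (η {p.1}).toReal} := by
  set B : Set ℝ := {z | ENNReal.ofReal t < η (Iio z)} with hB
  have hBne : B.Nonempty := by
    have h1 : Tendsto (fun x : ℝ => η (Iic x)) atTop (𝓝 1) := by
      simpa using tendsto_measure_Iic_atTop (μ := η)
    obtain ⟨x, hx⟩ := (h1.eventually_const_lt (ENNReal.ofReal_lt_one.2 ht1)).exists
    exact ⟨x + 1, hx.trans_le (measure_mono (fun z hz => by
      simp only [mem_Iic] at hz
      simp only [mem_Iio]
      linarith))⟩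
  have hBbdd : BddBelow B := by
    obtain ⟨z₀, hz₀⟩ := exists_Iic_lt η ht0
    refine ⟨z₀, fun y hy => le_of_not_gt fun h => ?_⟩
    have h2 : η (Iio y) ≤ η (Iic z₀) := measure_mono (fun z hz => le_of_lt (lt_trans hz h))
    exact absurd (hy.trans_le h2) hz₀.not_gt.elim
  set x := sInf B with hx
  have hIic : ENNReal.ofReal t ≤ η (Iic x) := by
    have hmono : Antitone (fun n : ℕ => Iio (x + 1/(n+1))) :=
      fun n m h => Iio_subset_Iio (by linarith [one_div_mono h])
    have htd := tendsto_measure_iInter_atTop (μ := η)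
      (fun _ => measurableSet_Iio.nullMeasurableSet) hmono ⟨0, measure_ne_top η _⟩
    rw [iInter_Iio_eq] at htd
    refine ge_of_tendsto' htd fun n => ?_
    obtain ⟨b, hb, hbx⟩ := (csInf_lt_iff hBbdd hBne).1 (show sInf B < x + 1/(n+1) by
      have h1 : 0 < 1/((n:ℝ)+1) := by positivity
      rw [← hx]; linarith)
    exact (le_of_lt hb).trans (measure_mono (Iio_subset_Iio hbx.le))
  have hIio : η (Iio x) ≤ ENNReal.ofReal t := by
    have hmono : Monotone (fun n : ℕ => Iic (x - 1/(n+1))) :=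
      fun n m h => Iic_subset_Iic.2 (by linarith [one_div_mono h])
    have htd := tendsto_measure_iUnion_atTop (μ := η) hmono
    rw [iUnion_Iic_eq] at htd
    refine le_of_tendsto' htd fun n => ?_
    have h1 : 0 < 1/((n:ℝ)+1) := by positivity
    have hm : x - 1/(2*(n+1)) ∉ B := by
      apply notMem_of_lt_csInf _ hBbdd
      rw [← hx]
      have : 0 < 1/(2*((n:ℝ)+1)) := by positivity
      linarith
    have hm2 : η (Iio (x - 1/(2*(n+1)))) ≤ ENNReal.ofReal t := not_lt.1 hm
    refine le_trans (measure_mono (fun z hz => ?_)) hm2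
    simp only [mem_Iic] at hz
    simp only [mem_Iio]
    have h2 : 1/(2*((n:ℝ)+1)) < 1/((n:ℝ)+1) := by
      rw [div_lt_div_iff₀ (by positivity) (by positivity)]
      nlinarith [Nat.cast_nonneg (α := ℝ) n]
    linarith
  have haR : (η (Iio x)).toReal ≤ t := by
    have h := ENNReal.toReal_mono ENNReal.ofReal_ne_top hIio
    rwa [ENNReal.toReal_ofReal ht0.le] at h
  have htR : t ≤ (η (Iic x)).toReal := by
    have h := ENNReal.toReal_mono (measure_ne_top η _) hIic
    rwa [ENNReal.toReal_ofReal ht0.le] at h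
  have hc0 : 0 ≤ (η {x}).toReal := ENNReal.toReal_nonneg
  set r : ℝ := if (η {x}).toReal = 0 then 1
    else (t - (η (Iio x)).toReal) / (η {x}).toReal with hr
  have hr0 : 0 ≤ r := by
    rw [hr]; split_ifs with h
    · norm_num
    · exact div_nonneg (by linarith) hc0
  have hr1 : r ≤ 1 := by
    rw [hr]; split_ifs with h
    · exact le_refl 1
    · rw [div_le_one (lt_of_le_of_ne hc0 (Ne.symm h))]
      have h2 := toReal_Iic η x
      linarith
  have hmemgt : ∀ z : ℝ, x < z → t < (η (Iio z)).toReal := by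
    intro z hz
    obtain ⟨b, hb, hbz⟩ := (csInf_lt_iff hBbdd hBne).1 (show sInf B < z by rw [← hx]; exact hz)
    have h2 : ENNReal.ofReal t < η (Iio z) :=
      hb.trans_le (measure_mono (Iio_subset_Iio hbz.le))
    exact (ENNReal.ofReal_lt_iff_lt_toReal ht0.le (measure_ne_top η _)).1 h2
  have hsub : (Ioi x ×ˢ Ioo (0:ℝ) 1) ∪ ({x} ×ˢ Ioo r 1) ⊆
      {p : ℝ × ℝ | t < (η (Iio p.1)).toReal + p.2 * (η {p.1}).toReal} := by
    rintro ⟨z, w⟩ (⟨hz, hw⟩ | ⟨hz, hw⟩)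
    · simp only [mem_Ioi] at hz
      simp only [mem_setOf_eq]
      have h1 := hmemgt z hz
      have h3 : 0 ≤ w * (η {z}).toReal := mul_nonneg hw.1.le ENNReal.toReal_nonneg
      linarith
    · simp only [mem_singleton_iff] at hz
      subst hz
      simp only [mem_setOf_eq]
      by_cases h : (η {x}).toReal = 0
      · exfalso
        have hw1 := hw.1
        rw [hr, if_pos h] at hw1
        linarith [hw.2]
      · have hcpos : 0 < (η {x}).toReal := lt_of_le_of_ne hc0 (Ne.symm h)
        have hw1 : (t - (η (Iio x)).toReal) / (η {x}).toReal < w := by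
          have := hw.1; rwa [hr, if_neg h] at this
        have h4 : t - (η (Iio x)).toReal < w * (η {x}).toReal :=
          (div_lt_iff₀ hcpos).1 hw1
        linarith
  have hdisj : Disjoint (Ioi x ×ˢ Ioo (0:ℝ) 1) ({x} ×ˢ Ioo r 1) := by
    rw [Set.disjoint_left]
    rintro ⟨z, w⟩ ⟨hz, -⟩ ⟨hz', -⟩
    rw [mem_singleton_iff] at hz'
    exact absurd hz' (ne_of_gt hz)
  have hcalc : (η.prod (volume.restrict (Ioo (0:ℝ) 1)))
      ((Ioi x ×ˢ Ioo (0:ℝ) 1) ∪ ({x} ×ˢ Ioo r 1))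
      = η (Ioi x) + η {x} * ENNReal.ofReal (1 - r) := by
    rw [measure_union hdisj ((measurableSet_singleton x).prod measurableSet_Ioo),
      Measure.prod_prod, Measure.prod_prod, nu_Ioo le_rfl le_rfl, nu_Ioo hr0 le_rfl]
    norm_num
  have hcompl : (η (Ioi x)).toReal = 1 - (η (Iic x)).toReal := by
    have h1 : η (Ioi x) = 1 - η (Iic x) := by
      rw [← Set.compl_Iic, measure_compl measurableSet_Iic (measure_ne_top η _), measure_univ]
    rw [h1, ENNReal.toReal_sub_of_le prob_le_one ENNReal.one_ne_top, ENNReal.toReal_one]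
  calc ENNReal.ofReal (1 - t) ≤ η (Ioi x) + η {x} * ENNReal.ofReal (1 - r) := by
        have hx1 : η (Ioi x) = ENNReal.ofReal ((η (Ioi x)).toReal) :=
          (ENNReal.ofReal_toReal (measure_ne_top η _)).symm
        have hx2 : η {x} = ENNReal.ofReal ((η {x}).toReal) :=
          (ENNReal.ofReal_toReal (measure_ne_top η _)).symm
        rw [hx1, hx2, ← ENNReal.ofReal_mul hc0,
          ← ENNReal.ofReal_add ENNReal.toReal_nonneg (mul_nonneg hc0 (by linarith))]
        apply ENNReal.ofReal_le_ofReal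
        have h2 := toReal_Iic η x
        by_cases h : (η {x}).toReal = 0
        · rw [h, zero_mul, add_zero, hcompl]
          rw [h] at h2; linarith
        · have h5 : (η {x}).toReal * r = t - (η (Iio x)).toReal := by
            rw [hr, if_neg h, mul_comm, div_mul_cancel₀ _ h]
          rw [hcompl]
          nlinarith [h5]
    _ = (η.prod (volume.restrict (Ioo (0:ℝ) 1)))
          ((Ioi x ×ˢ Ioo (0:ℝ) 1) ∪ ({x} ×ˢ Ioo r 1)) := hcalc.symm
    _ ≤ _ := measure_mono hsub

end Stmt3Aux

/-- Inverse transform sampling identity: the pushforward of `η ⊗ λ` (with `λ` the uniform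
distribution on `(0,1)`) under `(z,w) ↦ F_η(z-) + w·η({z})` is `λ`. -/
theorem stmt3 (η : Measure ℝ) [IsProbabilityMeasure η] :
    (η.prod (volume.restrict (Set.Ioo (0 : ℝ) 1))).map
      (fun p : ℝ × ℝ => (η (Set.Iio p.1)).toReal + p.2 * (η {p.1}).toReal)
    = volume.restrict (Set.Ioo (0 : ℝ) 1) := by
  have hm1 : Measurable fun z : ℝ => (η (Set.Iio z)).toReal :=
    Monotone.measurable fun u v h =>
      ENNReal.toReal_mono (measure_ne_top η _) (measure_mono (Set.Iio_subset_Iio h))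
  have hm2 : Measurable fun z : ℝ => (η (Set.Iic z)).toReal :=
    Monotone.measurable fun u v h =>
      ENNReal.toReal_mono (measure_ne_top η _) (measure_mono (Set.Iic_subset_Iic.2 h))
  have hm3 : Measurable fun z : ℝ => (η {z}).toReal := by
    have h : (fun z : ℝ => (η {z}).toReal)
        = fun z => (η (Set.Iic z)).toReal - (η (Set.Iio z)).toReal := by
      funext z
      rw [Stmt3Aux.toReal_Iic η z]; ring
    rw [h]; exact hm2.sub hm1
  have hf : Measurable fun p : ℝ × ℝ => (η (Set.Iio p.1)).toReal + p.2 * (η {p.1}).toReal :=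
    (hm1.comp measurable_fst).add (measurable_snd.mul (hm3.comp measurable_fst))
  have key : ∀ u : ℝ, 0 < u → u < 1 →
      (η.prod (volume.restrict (Set.Ioo (0 : ℝ) 1)))
        ((fun p : ℝ × ℝ => (η (Set.Iio p.1)).toReal + p.2 * (η {p.1}).toReal) ⁻¹' Set.Iic u)
      = ENNReal.ofReal u := by
    intro u hu0 hu1
    set F : ℝ × ℝ → ℝ := fun p => (η (Set.Iio p.1)).toReal + p.2 * (η {p.1}).toReal with hF
    have hms : MeasurableSet (F ⁻¹' Set.Iic u) := hf measurableSet_Iic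
    have hsplit := measure_add_measure_compl
      (μ := η.prod (volume.restrict (Set.Ioo (0 : ℝ) 1))) hms
    rw [measure_univ] at hsplit
    have hcompl : (F ⁻¹' Set.Iic u)ᶜ = F ⁻¹' Set.Ioi u := by
      rw [← Set.preimage_compl, Set.compl_Iic]
    have hgeI : ENNReal.ofReal (1 - u) ≤
        (η.prod (volume.restrict (Set.Ioo (0 : ℝ) 1))) ((F ⁻¹' Set.Iic u)ᶜ) := by
      rw [hcompl]
      exact Stmt3Aux.lower_Ioi η hu0 hu1
    have hle : ENNReal.ofReal u ≤
        (η.prod (volume.restrict (Set.Ioo (0 : ℝ) 1))) (F ⁻¹' Set.Iic u) :=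
      Stmt3Aux.lower_Iic η hu0 hu1
    refine le_antisymm ?_ hle
    have h1 : (η.prod (volume.restrict (Set.Ioo (0 : ℝ) 1))) (F ⁻¹' Set.Iic u)
        = 1 - (η.prod (volume.restrict (Set.Ioo (0 : ℝ) 1))) ((F ⁻¹' Set.Iic u)ᶜ) :=
      ENNReal.eq_sub_of_add_eq (measure_ne_top _ _) hsplit
    have hadd : ENNReal.ofReal u + ENNReal.ofReal (1 - u) = 1 := by
      rw [← ENNReal.ofReal_add hu0.le (by linarith)]
      norm_num
    have h2 : (1:ENNReal) - ENNReal.ofReal (1 - u) = ENNReal.ofReal u :=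
      (ENNReal.eq_sub_of_add_eq ENNReal.ofReal_ne_top hadd).symm
    rw [h1, ← h2]
    exact tsub_le_tsub_left hgeI 1
  have hlim0 : Tendsto (fun n : ℕ => ((n:ℝ)+2)⁻¹) atTop (𝓝 0) :=
    tendsto_inv_atTop_zero.comp (tendsto_atTop_add_const_right _ 2 tendsto_natCast_atTop_atTop)
  haveI := MeasureTheory.Measure.isProbabilityMeasure_map (μ := η.prod (volume.restrict (Set.Ioo (0 : ℝ) 1)))
    hf.aemeasurable
  refine Measure.ext_of_Iic _ _ fun t => ?_
  rw [Measure.map_apply hf measurableSet_Iic]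
  rcases le_or_gt t 0 with ht | ht
  · have hν0 : (volume.restrict (Set.Ioo (0 : ℝ) 1)) (Set.Iic t) = 0 := by
      rw [Measure.restrict_apply measurableSet_Iic]
      have h : Set.Iic t ∩ Set.Ioo (0:ℝ) 1 = ∅ := by
        ext z
        simp only [Set.mem_inter_iff, Set.mem_Iic, Set.mem_Ioo, Set.mem_empty_iff_false,
          iff_false, not_and]
        intro hz h0
        exact fun _ => (not_lt.2 (hz.trans ht)) h0
      rw [h, measure_empty]
    rw [hν0]
    have hmono : ∀ n : ℕ, (η.prod (volume.restrict (Set.Ioo (0 : ℝ) 1)))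
        ((fun p : ℝ × ℝ => (η (Set.Iio p.1)).toReal + p.2 * (η {p.1}).toReal) ⁻¹' Set.Iic t)
        ≤ ENNReal.ofReal (((n:ℝ)+2)⁻¹) := by
      intro n
      have h1 : (0:ℝ) < ((n:ℝ)+2)⁻¹ := by positivity
      have h2 : ((n:ℝ)+2)⁻¹ < 1 := by
        rw [inv_lt_one_iff₀]
        right; linarith [Nat.cast_nonneg (α := ℝ) n]
      calc _ ≤ (η.prod (volume.restrict (Set.Ioo (0 : ℝ) 1)))
            ((fun p : ℝ × ℝ => (η (Set.Iio p.1)).toReal + p.2 * (η {p.1}).toReal)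
              ⁻¹' Set.Iic (((n:ℝ)+2)⁻¹)) :=
          measure_mono (Set.preimage_mono (Set.Iic_subset_Iic.2 (by linarith)))
        _ = ENNReal.ofReal (((n:ℝ)+2)⁻¹) := key _ h1 h2
    have hlim : Tendsto (fun n : ℕ => ENNReal.ofReal (((n:ℝ)+2)⁻¹)) atTop (𝓝 0) := by
      rw [← ENNReal.ofReal_zero]
      exact ENNReal.tendsto_ofReal hlim0
    exact le_antisymm (ge_of_tendsto' hlim hmono) (zero_le)
  · rcases lt_or_ge t 1 with ht1 | ht1
    · rw [key t ht ht1, Measure.restrict_apply measurableSet_Iic]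
      have h : Set.Iic t ∩ Set.Ioo (0:ℝ) 1 = Set.Ioc 0 t := by
        ext z
        simp only [Set.mem_inter_iff, Set.mem_Iic, Set.mem_Ioo, Set.mem_Ioc]
        constructor
        · rintro ⟨h1, h2, h3⟩; exact ⟨h2, h1⟩
        · rintro ⟨h1, h2⟩; exact ⟨h2, h1, by linarith⟩
      rw [h, Real.volume_Ioc]
      norm_num
    · have hν1 : (volume.restrict (Set.Ioo (0 : ℝ) 1)) (Set.Iic t) = 1 := by
        have hss : Set.Ioo (0:ℝ) 1 ⊆ Set.Iic t :=
          fun z hz => le_trans (le_of_lt (Set.mem_Ioo.1 hz).2) ht1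
        rw [Measure.restrict_apply measurableSet_Iic, Set.inter_eq_self_of_subset_right hss,
          Real.volume_Ioo]
        norm_num
      rw [hν1]
      refine le_antisymm prob_le_one ?_
      have hge : ∀ n : ℕ, ENNReal.ofReal (1 - ((n:ℝ)+2)⁻¹)
          ≤ (η.prod (volume.restrict (Set.Ioo (0 : ℝ) 1)))
            ((fun p : ℝ × ℝ => (η (Set.Iio p.1)).toReal + p.2 * (η {p.1}).toReal)
              ⁻¹' Set.Iic t) := by
        intro n
        have hpos : (0:ℝ) < ((n:ℝ)+2)⁻¹ := by positivity
        have h2 : ((n:ℝ)+2)⁻¹ < 1 := by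
          rw [inv_lt_one_iff₀]
          right; linarith [Nat.cast_nonneg (α := ℝ) n]
        have h1 : 0 < 1 - ((n:ℝ)+2)⁻¹ := by linarith
        calc ENNReal.ofReal (1 - ((n:ℝ)+2)⁻¹)
            = (η.prod (volume.restrict (Set.Ioo (0 : ℝ) 1)))
              ((fun p : ℝ × ℝ => (η (Set.Iio p.1)).toReal + p.2 * (η {p.1}).toReal)
                ⁻¹' Set.Iic (1 - ((n:ℝ)+2)⁻¹)) := (key _ h1 (by linarith)).symm
          _ ≤ _ := measure_mono (Set.preimage_mono (Set.Iic_subset_Iic.2 (by linarith)))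
      have hlim1 : Tendsto (fun n : ℕ => ENNReal.ofReal (1 - ((n:ℝ)+2)⁻¹)) atTop (𝓝 1) := by
        have h : Tendsto (fun n : ℕ => 1 - ((n:ℝ)+2)⁻¹) atTop (𝓝 1) := by
          simpa using tendsto_const_nhds.sub hlim0
        rw [← ENNReal.ofReal_one]
        exact ENNReal.tendsto_ofReal h
      exact le_of_tendsto' hlim1 hge
end

section
/- Let r ≥ 1 and μ be a probability measure on a Polish space X with finite r-th moment. Let μ̄ be the pushforward of μ under x ↦ d(x,x₀)^r. Then for every ε ∈ (0,1), I^r_ε(μ) = ∫_{1-ε}^{1} F_{μ̄}^{-1}(u) du, where I^r_ε(μ) = sup{ ∫ d(x,x₀)^r dτ : τ ≤ μ, τ(X) ≤ ε }. -/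
open MeasureTheory Set Filter ProbabilityTheory
open scoped Topology ENNReal

/-- `I^r_ε(μ) = sup { ∫ d(x,x₀)^r dτ : τ ≤ μ, τ(X) ≤ ε }`. -/
noncomputable def Ieps {X : Type*} [MetricSpace X] [MeasurableSpace X]
    (r : ℝ) (x₀ : X) (μ : Measure X) (ε : ℝ) : ℝ :=
  sSup {c : ℝ | ∃ τ : Measure X, τ ≤ μ ∧ τ Set.univ ≤ ENNReal.ofReal ε ∧
    c = ∫ x, dist x x₀ ^ r ∂τ}

/-- The cumulative distribution function of a measure on ℝ. -/
noncomputable def cdf' (η : Measure ℝ) (x : ℝ) : ℝ := (η (Set.Iic x)).toReal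

/-- The quantile function `F_η⁻¹(u) = inf {x | F_η(x) ≥ u}`. -/
noncomputable def quantile' (η : Measure ℝ) (u : ℝ) : ℝ := sInf {x : ℝ | u ≤ cdf' η x}

set_option linter.unusedSectionVars false
set_option linter.unusedVariables false
set_option linter.deprecated false

section Quantile

variable {η : Measure ℝ} [IsProbabilityMeasure η]

lemma cdf'_eq (x : ℝ) : cdf' η x = cdf η x := (cdf_eq_real η x).symm

lemma qset_eq (u : ℝ) : {x : ℝ | u ≤ cdf' η x} = {x : ℝ | u ≤ cdf η x} := by
  simp only [cdf'_eq]

lemma qset_nonempty {u : ℝ} (hu : u < 1) : {x : ℝ | u ≤ cdf' η x}.Nonempty := by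
  rw [qset_eq]
  obtain ⟨x, hx⟩ := ((tendsto_cdf_atTop η).eventually (eventually_ge_nhds hu)).exists
  exact ⟨x, hx⟩

lemma qset_subset (hsupp : η (Set.Iio 0) = 0) {u : ℝ} (hu : 0 < u) :
    {x : ℝ | u ≤ cdf' η x} ⊆ Set.Ici 0 := by
  intro x hx
  by_contra hx0
  simp only [mem_Ici, not_le] at hx0
  have : cdf' η x = 0 := by
    have : η (Set.Iic x) = 0 :=
      le_antisymm (le_trans (measure_mono (Iic_subset_Iio.2 hx0)) hsupp.le) zero_le
    simp [cdf', this]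
  simp only [mem_setOf_eq, this] at hx
  linarith

lemma qset_bddBelow (hsupp : η (Set.Iio 0) = 0) {u : ℝ} (hu : 0 < u) :
    BddBelow {x : ℝ | u ≤ cdf' η x} :=
  ⟨0, fun x hx => qset_subset hsupp hu hx⟩

lemma quantile'_nonneg (hsupp : η (Set.Iio 0) = 0) {u : ℝ} (hu : 0 < u) :
    0 ≤ quantile' η u :=
  Real.sInf_nonneg fun _ hx => qset_subset hsupp hu hx

lemma cdf_quantile'_ge (hsupp : η (Set.Iio 0) = 0) {u : ℝ} (hu : 0 < u) (hu1 : u < 1) :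
    u ≤ cdf η (quantile' η u) := by
  set m := quantile' η u with hm
  have hne := qset_nonempty (η := η) hu1
  have hbd := qset_bddBelow hsupp hu
  have key : ∀ z, m < z → u ≤ cdf η z := by
    intro z hz
    obtain ⟨y, hy, hyz⟩ := (csInf_lt_iff hbd hne).mp hz
    rw [qset_eq] at hy
    exact hy.trans (monotone_cdf η hyz.le)
  have hcont : ContinuousWithinAt (cdf η) (Set.Ioi m) m :=
    ((cdf η).right_continuous m).mono Ioi_subset_Ici_self
  have : Tendsto (cdf η) (𝓝[>] m) (𝓝 (cdf η m)) := hcont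
  refine ge_of_tendsto this ?_
  filter_upwards [self_mem_nhdsWithin] with z hz using key z hz

lemma quantile'_le_iff (hsupp : η (Set.Iio 0) = 0) {u x : ℝ} (hu : 0 < u) (hu1 : u < 1) :
    quantile' η u ≤ x ↔ u ≤ cdf η x := by
  constructor
  · intro h
    exact (cdf_quantile'_ge hsupp hu hu1).trans (monotone_cdf η h)
  · intro h
    exact csInf_le (qset_bddBelow hsupp hu) (by rw [qset_eq]; exact h)

lemma quantile'_monotoneOn (hsupp : η (Set.Iio 0) = 0) :
    MonotoneOn (quantile' η) (Set.Ioo (0:ℝ) 1) := by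
  intro u hu v hv huv
  exact csInf_le_csInf (qset_bddBelow hsupp hu.1) (qset_nonempty hv.2)
    (fun x hx => le_trans huv hx)

lemma quantile'_map (hsupp : η (Set.Iio 0) = 0) :
    (volume.restrict (Set.Ioo (0:ℝ) 1)).map (quantile' η) = η := by
  have hQ : AEMeasurable (quantile' η) (volume.restrict (Set.Ioo (0:ℝ) 1)) :=
    aemeasurable_restrict_of_monotoneOn measurableSet_Ioo (quantile'_monotoneOn hsupp)
  refine Measure.ext_of_Iic _ _ (fun x => ?_)
  rw [Measure.map_apply_of_aemeasurable hQ measurableSet_Iic]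
  rw [Measure.restrict_apply' measurableSet_Ioo]
  have hset : quantile' η ⁻¹' (Set.Iic x) ∩ Set.Ioo (0:ℝ) 1
      = Set.Iic (cdf η x) ∩ Set.Ioo (0:ℝ) 1 := by
    ext u
    simp only [mem_inter_iff, mem_preimage, mem_Iic, mem_Ioo, and_congr_left_iff]
    intro hu
    rw [quantile'_le_iff hsupp hu.1 hu.2]
  rw [hset, ← ofReal_cdf η x]
  have h0 : 0 ≤ cdf η x := cdf_nonneg η x
  have h1 : cdf η x ≤ 1 := cdf_le_one η x
  rcases lt_or_ge (cdf η x) 1 with h | h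
  · have : Set.Iic (cdf η x) ∩ Set.Ioo (0:ℝ) 1 = Set.Ioc 0 (cdf η x) := by
      ext u; simp only [mem_inter_iff, mem_Iic, mem_Ioo, mem_Ioc]
      constructor
      · rintro ⟨h1, h2, h3⟩; exact ⟨h2, h1⟩
      · rintro ⟨h1, h2⟩; exact ⟨h2, h1, lt_of_le_of_lt h2 h⟩
    rw [this, Real.volume_Ioc]
    norm_num
  · have h1' : cdf η x = 1 := le_antisymm h1 h
    have : Set.Iic (cdf η x) ∩ Set.Ioo (0:ℝ) 1 = Set.Ioo (0:ℝ) 1 := by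
      rw [inter_eq_self_of_subset_right]
      intro u hu; simp only [mem_Iic]; rw [h1']; exact hu.2.le
    rw [this, Real.volume_Ioo, h1']
    norm_num

/-- transfer of integrals along the quantile map -/
lemma integral_quantile' (hsupp : η (Set.Iio 0) = 0) {g : ℝ → ℝ} (hg : Continuous g) :
    ∫ x, g x ∂η = ∫ u in Set.Ioo (0:ℝ) 1, g (quantile' η u) := by
  conv_lhs => rw [← quantile'_map hsupp]
  rw [integral_map (aemeasurable_restrict_of_monotoneOn measurableSet_Ioo
    (quantile'_monotoneOn hsupp)) hg.aestronglyMeasurable]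

lemma integrable_quantile' (hsupp : η (Set.Iio 0) = 0) (hmom : Integrable id η) :
    Integrable (quantile' η) (volume.restrict (Set.Ioo (0:ℝ) 1)) := by
  have h := (integrable_map_measure (μ := volume.restrict (Set.Ioo (0:ℝ) 1)) (g := (id : ℝ → ℝ))
    (by rw [quantile'_map hsupp]; exact aestronglyMeasurable_id)
    (aemeasurable_restrict_of_monotoneOn measurableSet_Ioo
      (quantile'_monotoneOn hsupp))).mp
  rw [quantile'_map hsupp] at h
  exact h hmom

/-- The right-hand side computation. -/
lemma rhs_eq (hsupp : η (Set.Iio 0) = 0) (hmom : Integrable id η)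
    {ε : ℝ} (hε : 0 < ε) (hε1 : ε < 1) :
    ∫ u in Set.Ioo (1 - ε) 1, quantile' η u
      = (∫ x, max (x - quantile' η (1 - ε)) 0 ∂η) + quantile' η (1 - ε) * ε := by
  set q := quantile' η (1 - ε) with hq
  have h1ε : (1 - ε) ∈ Set.Ioo (0:ℝ) 1 := ⟨by linarith, by linarith⟩
  have hsub : Set.Ioo (1 - ε) 1 ⊆ Set.Ioo (0:ℝ) 1 := fun u hu => ⟨by linarith [hu.1], hu.2⟩
  have hQint : Integrable (quantile' η) (volume.restrict (Set.Ioo (0:ℝ) 1)) :=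
    integrable_quantile' hsupp hmom
  have hQint' : Integrable (quantile' η) (volume.restrict (Set.Ioo (1 - ε) 1)) :=
    hQint.mono_measure (Measure.restrict_mono hsub le_rfl)
  have hcont : Continuous (fun x : ℝ => max (x - q) 0) :=
    (continuous_id.sub continuous_const).max continuous_const
  rw [integral_quantile' hsupp hcont]
  have heq : ∀ u ∈ Set.Ioo (0:ℝ) 1, max (quantile' η u - q) 0
      = (Set.Ioo (1 - ε) 1).indicator (fun u => quantile' η u - q) u := by
    intro u hu
    rcases le_or_gt u (1 - ε) with h | h
    · have hQle : quantile' η u ≤ q := quantile'_monotoneOn hsupp hu h1ε h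
      rw [Set.indicator_of_notMem (by simp only [Set.mem_Ioo, not_and, not_lt]; intro hlt; linarith)]
      simp [max_eq_right, sub_nonpos.mpr hQle]
    · have hQge : q ≤ quantile' η u := quantile'_monotoneOn hsupp h1ε hu h.le
      rw [Set.indicator_of_mem (Set.mem_Ioo.mpr ⟨h, hu.2⟩)]
      exact max_eq_left (by linarith)
  rw [setIntegral_congr_fun measurableSet_Ioo heq]
  rw [integral_indicator measurableSet_Ioo, Measure.restrict_restrict measurableSet_Ioo,
    Set.inter_eq_self_of_subset_left hsub]
  rw [integral_sub hQint' (integrable_const q)]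
  rw [setIntegral_const, measureReal_def, Real.volume_Ioo]
  have : (1 - (1 - ε)) = ε := by ring
  rw [this, ENNReal.toReal_ofReal hε.le, smul_eq_mul]
  ring

end Quantile

/-- For a probability measure `μ` with finite `r`-th moment on a Polish space and
`μ̄` the pushforward of `μ` under `x ↦ d(x,x₀)^r`, for every `ε ∈ (0,1)`,
`I^r_ε(μ) = ∫_{1-ε}^1 F_{μ̄}⁻¹(u) du`. -/
theorem stmt5 {X : Type*} [MetricSpace X] [CompleteSpace X]
    [SecondCountableTopology X] [MeasurableSpace X] [BorelSpace X]
    (r : ℝ) (hr : 1 ≤ r) (x₀ : X) (μ : Measure X) [IsProbabilityMeasure μ]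
    (hmom : Integrable (fun x => dist x x₀ ^ r) μ)
    (ε : ℝ) (hε : ε ∈ Set.Ioo (0 : ℝ) 1) :
    Ieps r x₀ μ ε
      = ∫ u in Set.Ioo (1 - ε) 1, quantile' (μ.map (fun x => dist x x₀ ^ r)) u := by
  obtain ⟨hε0, hε1⟩ := hε
  set f : X → ℝ := fun x => dist x x₀ ^ r with hf
  have hf0 : ∀ x, 0 ≤ f x := fun x => Real.rpow_nonneg dist_nonneg r
  have hfc : Continuous f :=
    (continuous_id.dist continuous_const).rpow_const (fun x => Or.inr (by linarith))
  have hfm : Measurable f := hfc.measurable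
  set η := μ.map f with hη
  haveI : IsProbabilityMeasure η := Measure.isProbabilityMeasure_map hfm.aemeasurable
  have hsupp : η (Set.Iio 0) = 0 := by
    rw [hη, Measure.map_apply hfm measurableSet_Iio]
    convert measure_empty (μ := μ)
    ext x
    simp only [Set.mem_preimage, Set.mem_Iio, Set.mem_empty_iff_false, iff_false, not_lt]
    exact hf0 x
  have hmomη : Integrable id η :=
    (integrable_map_measure aestronglyMeasurable_id hfm.aemeasurable).mpr hmom
  have h1ε0 : (0:ℝ) < 1 - ε := by linarith
  have h1ε1 : (1:ℝ) - ε < 1 := by linarith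
  set q := quantile' η (1 - ε) with hqdef
  have hq0 : 0 ≤ q := quantile'_nonneg hsupp h1ε0
  have hFq : 1 - ε ≤ cdf η q := cdf_quantile'_ge hsupp h1ε0 h1ε1
  set g : ℝ → ℝ := fun x => max (x - q) 0 with hg
  have hgcont : Continuous g := (continuous_id.sub continuous_const).max continuous_const
  have hgint : Integrable g η := (hmomη.sub (integrable_const q)).pos_part
  have hgfint : Integrable (fun x => g (f x)) μ := (hmom.sub (integrable_const q)).pos_part
  have hgmap : ∫ x, g (f x) ∂μ = ∫ x, g x ∂η :=
    (integral_map hfm.aemeasurable hgcont.aestronglyMeasurable).symm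
  set M := (∫ x, g x ∂η) + q * ε with hM
  -- upper bound
  have hub : ∀ c ∈ {c : ℝ | ∃ τ : Measure X, τ ≤ μ ∧ τ Set.univ ≤ ENNReal.ofReal ε ∧
      c = ∫ x, dist x x₀ ^ r ∂τ}, c ≤ M := by
    rintro c ⟨τ, hτμ, hτε, rfl⟩
    haveI : IsFiniteMeasure τ :=
      ⟨lt_of_le_of_lt (Measure.le_iff'.mp hτμ Set.univ) (measure_lt_top μ Set.univ)⟩
    have hτf : Integrable f τ := hmom.mono_measure hτμ
    have hτgf : Integrable (fun x => g (f x)) τ := hgfint.mono_measure hτμ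
    have h1 : ∫ x, f x ∂τ ≤ ∫ x, (g (f x) + q) ∂τ := by
      refine integral_mono hτf (hτgf.add (integrable_const q)) (fun x => ?_)
      simp only [hg, Pi.add_apply]
      have := le_max_left (f x - q) 0
      linarith
    have h2 : ∫ x, (g (f x) + q) ∂τ = (∫ x, g (f x) ∂τ) + q * (τ Set.univ).toReal := by
      rw [integral_add hτgf (integrable_const q), integral_const, smul_eq_mul, measureReal_def]
      ring
    have h3 : ∫ x, g (f x) ∂τ ≤ ∫ x, g (f x) ∂μ := by
      refine integral_mono_measure hτμ ?_ hgfint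
      filter_upwards with x
      exact le_max_right _ _
    have h4 : (τ Set.univ).toReal ≤ ε := by
      have := ENNReal.toReal_mono ENNReal.ofReal_ne_top hτε
      rwa [ENNReal.toReal_ofReal hε0.le] at this
    have h5 : q * (τ Set.univ).toReal ≤ q * ε := mul_le_mul_of_nonneg_left h4 hq0
    calc ∫ x, f x ∂τ ≤ (∫ x, g (f x) ∂τ) + q * (τ Set.univ).toReal := by rw [← h2]; exact h1
      _ ≤ (∫ x, g (f x) ∂μ) + q * ε := add_le_add h3 h5
      _ = M := by rw [hgmap]
  -- the optimal measure
  set A : Set X := f ⁻¹' (Set.Ioi q) with hA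
  set B : Set X := f ⁻¹' {q} with hB
  have hAm : MeasurableSet A := hfm measurableSet_Ioi
  have hBm : MeasurableSet B := hfm (measurableSet_singleton q)
  have hdisj : Disjoint A B := Disjoint.preimage f (by simp)
  set a' := η (Set.Ioi q) with ha'
  set b' := η {q} with hb'
  have hμA : μ A = a' := (Measure.map_apply hfm measurableSet_Ioi).symm
  have hμB : μ B = b' := (Measure.map_apply hfm (measurableSet_singleton q)).symm
  have hone : (1:ℝ≥0∞) - ENNReal.ofReal (1-ε) = ENNReal.ofReal ε := by
    rw [← ENNReal.ofReal_one, ← ENNReal.ofReal_sub _ (by linarith : (0:ℝ) ≤ 1 - ε)]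
    norm_num
  have ha : a' ≤ ENNReal.ofReal ε := by
    have h1 : η (Set.Ioi q) = 1 - η (Set.Iic q) := by
      rw [← Set.compl_Iic, measure_compl measurableSet_Iic (measure_ne_top η _), measure_univ]
    rw [ha', h1, ← ofReal_cdf η q, ← hone]
    exact tsub_le_tsub_left (ENNReal.ofReal_le_ofReal hFq) 1
  have hlt : ∀ y, y < q → cdf η y < 1 - ε := by
    intro y hy
    by_contra hc
    push_neg at hc
    have : q ≤ y := csInf_le (qset_bddBelow hsupp h1ε0)
      (by rw [Set.mem_setOf_eq, cdf'_eq]; exact hc)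
    linarith
  have hIio : η (Set.Iio q) ≤ ENNReal.ofReal (1 - ε) := by
    have hcover : Set.Iio q = ⋃ n : ℕ, Set.Iic (q - ((n:ℝ)+1)⁻¹) := by
      ext x
      simp only [Set.mem_Iio, Set.mem_iUnion, Set.mem_Iic]
      constructor
      · intro hx
        obtain ⟨n, hn⟩ := exists_nat_gt (q - x)⁻¹
        refine ⟨n, ?_⟩
        have h1 : (0:ℝ) < q - x := by linarith
        have h2 : ((n:ℝ)+1)⁻¹ ≤ q - x := by
          rw [inv_le_comm₀ (by positivity) h1]
          exact le_trans hn.le (by linarith)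
        linarith
      · rintro ⟨n, hn⟩
        have : (0:ℝ) < ((n:ℝ)+1)⁻¹ := by positivity
        linarith
    have hmono : Monotone (fun n : ℕ => Set.Iic (q - ((n:ℝ)+1)⁻¹)) := by
      intro m n hmn
      apply Set.Iic_subset_Iic.mpr
      have h1 : ((n:ℝ)+1)⁻¹ ≤ ((m:ℝ)+1)⁻¹ := by
        apply inv_anti₀ (by positivity)
        exact_mod_cast by omega
      linarith
    rw [hcover, hmono.directed_le.measure_iUnion]
    refine iSup_le (fun n => ?_)
    rw [← ofReal_cdf η _]
    refine ENNReal.ofReal_le_ofReal (hlt _ (by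
      have : (0:ℝ) < ((n:ℝ)+1)⁻¹ := by positivity
      linarith)).le
  have hb : ENNReal.ofReal ε ≤ η (Set.Ici q) := by
    have h1 : η (Set.Ici q) = 1 - η (Set.Iio q) := by
      rw [← Set.compl_Iio, measure_compl measurableSet_Iio (measure_ne_top η _), measure_univ]
    rw [h1, ← hone]
    exact tsub_le_tsub_left hIio 1
  have hab : η (Set.Ici q) = b' + a' := by
    rw [← Set.Ioi_insert, Set.insert_eq,
      measure_union (by simp) measurableSet_Ioi]
  have hεab : ENNReal.ofReal ε - a' ≤ b' := by
    rw [tsub_le_iff_right]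
    rw [hab] at hb
    exact hb
  set θ : ℝ≥0∞ := (ENNReal.ofReal ε - a') / b' with hθ
  have hθ1 : θ ≤ 1 := ENNReal.div_le_of_le_mul (by rwa [one_mul])
  have hθtop : θ ≠ ∞ := (hθ1.trans_lt ENNReal.one_lt_top).ne
  have hθb : θ * b' = ENNReal.ofReal ε - a' := by
    by_cases hb0 : b' = 0
    · rw [hb0, mul_zero]
      rw [hb0] at hεab
      exact (le_antisymm hεab zero_le).symm ▸ rfl
    · rw [hθ, ENNReal.div_mul_cancel hb0 (by rw [hb']; exact measure_ne_top η _)]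
  set τ : Measure X := μ.restrict A + θ • μ.restrict B with hτ
  have hτle : τ ≤ μ := by
    rw [Measure.le_iff']
    intro s
    have h1 : τ s = μ.restrict A s + θ * μ.restrict B s := by
      simp [hτ, Measure.add_apply, Measure.smul_apply, smul_eq_mul]
    have h2 : θ * μ.restrict B s ≤ μ.restrict B s :=
      mul_le_of_le_one_left zero_le hθ1
    calc τ s ≤ μ.restrict A s + μ.restrict B s := by rw [h1]; exact add_le_add_right h2 _
      _ = μ.restrict (A ∪ B) s := by rw [Measure.restrict_union hdisj hBm]; rfl
      _ ≤ μ s := Measure.le_iff'.mp Measure.restrict_le_self s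
  have hτmass : τ Set.univ = ENNReal.ofReal ε := by
    have : τ Set.univ = μ A + θ * μ B := by
      simp [hτ, Measure.add_apply, Measure.smul_apply, smul_eq_mul,
        Measure.restrict_apply_univ]
    rw [this, hμA, hμB, hθb, add_tsub_cancel_of_le ha]
  have hatop : a' ≠ ∞ := by rw [ha']; exact measure_ne_top η _
  have hθbre : θ.toReal * b'.toReal = ε - a'.toReal := by
    rw [← ENNReal.toReal_mul, hθb, ENNReal.toReal_sub_of_le ha ENNReal.ofReal_ne_top,
      ENNReal.toReal_ofReal hε0.le]
  -- integral of f against τ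
  have hint1 : Integrable f (μ.restrict A) := hmom.restrict
  have hint2 : Integrable f (θ • μ.restrict B) := hmom.restrict.smul_measure hθtop
  have hIB : ∫ x in B, f x ∂μ = (μ B).toReal * q := by
    rw [setIntegral_congr_fun hBm (g := fun _ => q) (fun x hx => hx), setIntegral_const,
      smul_eq_mul, measureReal_def]
  have hIA : ∫ x in A, f x ∂μ = (∫ x, g (f x) ∂μ) + q * (μ A).toReal := by
    have e1 : ∫ x in A, f x ∂μ = ∫ x in A, (g (f x) + q) ∂μ := by
      refine setIntegral_congr_fun hAm (fun x hx => ?_)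
      have hx' : q < f x := hx
      simp only [hg]
      rw [max_eq_left (by linarith)]
      ring
    rw [e1, integral_add hgfint.restrict (integrable_const q), integral_const,
      measureReal_def, Measure.restrict_apply_univ, smul_eq_mul]
    congr 1
    · exact setIntegral_eq_integral_of_forall_compl_eq_zero (fun x hx => by
        simp only [hg]
        have : f x ≤ q := not_lt.mp hx
        rw [max_eq_right (by linarith)])
    · ring
  have hτint : ∫ x, f x ∂τ = M := by
    rw [hτ, integral_add_measure hint1 hint2, integral_smul_measure, smul_eq_mul, hIB, hIA,
      hμA, hμB, hgmap, hM]
    have : θ.toReal * (b'.toReal * q) = (ε - a'.toReal) * q := by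
      rw [← mul_assoc, hθbre]
    rw [this]
    ring
  -- conclude
  have hmem : M ∈ {c : ℝ | ∃ τ : Measure X, τ ≤ μ ∧ τ Set.univ ≤ ENNReal.ofReal ε ∧
      c = ∫ x, dist x x₀ ^ r ∂τ} := ⟨τ, hτle, hτmass.le, hτint.symm⟩
  have hsup : Ieps r x₀ μ ε = M := by
    rw [Ieps]
    exact le_antisymm (csSup_le ⟨M, hmem⟩ hub) (le_csSup ⟨M, hub⟩ hmem)
  rw [hsup, rhs_eq hsupp hmomη hε0 hε1, ← hqdef, hM, hg]
end

section
/- Let r ≥ 1, and μ, μ' be finite positive measures on a Polish space X with equal mass and finite r-th moments. Then I^r_ε(μ) ≤ 2^{r-1}( I^r_ε(μ') + W_r^r(μ,μ') ), where W_r is the Wasserstein distance of order r. -/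
open MeasureTheory
open scoped ProbabilityTheory

/-- `W_r^r(μ,ν) = inf { ∫ d(x,y)^r dπ : π ∈ Π(μ,ν) }`. -/
noncomputable def WrRpow {X : Type*} [MetricSpace X] [MeasurableSpace X]
    (r : ℝ) (μ ν : Measure X) : ℝ :=
  sInf {c : ℝ | ∃ π : Measure (X × X), π.map Prod.fst = μ ∧ π.map Prod.snd = ν ∧
    c = ∫ p, dist p.1 p.2 ^ r ∂π}

private lemma rpow_add_aux {r : ℝ} (hr : 1 ≤ r) {a b : ℝ} (ha : 0 ≤ a) (hb : 0 ≤ b) :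
    (a + b) ^ r ≤ 2 ^ (r - 1) * (a ^ r + b ^ r) := by
  have h := NNReal.coe_le_coe.2 (NNReal.rpow_add_le_mul_rpow_add_rpow a.toNNReal b.toNNReal hr)
  push_cast at h
  rwa [Real.coe_toNNReal _ ha, Real.coe_toNNReal _ hb] at h

private lemma key_aux {X : Type*} [MetricSpace X] [CompleteSpace X]
    [SecondCountableTopology X] [MeasurableSpace X] [BorelSpace X]
    (r : ℝ) (hr : 1 ≤ r) (x₀ : X) (μ μ' : Measure X)
    [IsFiniteMeasure μ] [IsFiniteMeasure μ']
    (hmom : Integrable (fun x => dist x x₀ ^ r) μ)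
    (hmom' : Integrable (fun x => dist x x₀ ^ r) μ')
    (ε : ℝ)
    (τ : Measure X) (hτle : τ ≤ μ) (hτε : τ Set.univ ≤ ENNReal.ofReal ε)
    (π : Measure (X × X)) (hπ1 : π.map Prod.fst = μ) (hπ2 : π.map Prod.snd = μ') :
    ∫ x, dist x x₀ ^ r ∂τ ≤
      2 ^ (r - 1) * (Ieps r x₀ μ' ε + ∫ p, dist p.1 p.2 ^ r ∂π) := by
  have hg : Measurable fun x : X => dist x x₀ ^ r := by fun_prop
  have hgnn : ∀ x : X, 0 ≤ dist x x₀ ^ r := fun x => Real.rpow_nonneg dist_nonneg r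
  have h2nn : (0:ℝ) ≤ 2 ^ (r - 1) := (Real.rpow_pos_of_pos two_pos _).le
  haveI : IsFiniteMeasure π := by
    constructor
    rw [← Set.preimage_univ (f := @Prod.fst X X),
      ← Measure.map_apply measurable_fst MeasurableSet.univ, hπ1]
    exact measure_lt_top μ _
  haveI : IsFiniteMeasure τ := isFiniteMeasure_of_le μ hτle
  haveI : Nonempty X := ⟨x₀⟩
  have hfst : π.fst = μ := hπ1
  set κ := π.condKernel with hκ
  have hdis : μ ⊗ₘ κ = π := by rw [← hfst]; exact π.disintegrate κ
  set σ := τ ⊗ₘ κ with hσ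
  have hσle : σ ≤ π := by
    rw [← hdis]
    refine Measure.le_iff.2 fun s hs => ?_
    rw [Measure.compProd_apply hs, Measure.compProd_apply hs]
    exact lintegral_mono' hτle le_rfl
  have hσfst : σ.map Prod.fst = τ := Measure.fst_compProd τ κ
  set τ' := σ.map Prod.snd with hτ'def
  have hτ'le : τ' ≤ μ' := hπ2 ▸ Measure.map_mono hσle measurable_snd
  have hτ'ε : τ' Set.univ ≤ ENNReal.ofReal ε := by
    rw [hτ'def, Measure.map_apply measurable_snd MeasurableSet.univ, Set.preimage_univ, hσ,
      Measure.compProd_apply_univ]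
    exact hτε
  -- transfer integrals
  have h1 : ∫ x, dist x x₀ ^ r ∂τ = ∫ p : X × X, dist p.1 x₀ ^ r ∂σ := by
    rw [← hσfst, integral_map measurable_fst.aemeasurable hg.aestronglyMeasurable]
  have h2 : ∫ p : X × X, dist p.2 x₀ ^ r ∂σ = ∫ x, dist x x₀ ^ r ∂τ' := by
    rw [hτ'def, integral_map measurable_snd.aemeasurable hg.aestronglyMeasurable]
  -- integrability under π
  have hi1 : Integrable (fun p : X × X => dist p.1 x₀ ^ r) π := by
    have := (integrable_map_measure hg.aestronglyMeasurable measurable_fst.aemeasurable).1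
      (hπ1 ▸ hmom)
    exact this
  have hi2 : Integrable (fun p : X × X => dist p.2 x₀ ^ r) π := by
    have := (integrable_map_measure hg.aestronglyMeasurable measurable_snd.aemeasurable).1
      (hπ2 ▸ hmom')
    exact this
  have hcost_meas : Measurable fun p : X × X => dist p.1 p.2 ^ r := by fun_prop
  have hcostnn : ∀ p : X × X, 0 ≤ dist p.1 p.2 ^ r :=
    fun p => Real.rpow_nonneg dist_nonneg r
  have hptw1 : ∀ p : X × X,
      dist p.1 p.2 ^ r ≤ 2 ^ (r - 1) * (dist p.1 x₀ ^ r + dist p.2 x₀ ^ r) := by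
    intro p
    calc dist p.1 p.2 ^ r ≤ (dist p.1 x₀ + dist p.2 x₀) ^ r :=
          Real.rpow_le_rpow dist_nonneg (dist_triangle_right p.1 p.2 x₀)
            (le_trans zero_le_one hr)
      _ ≤ _ := rpow_add_aux hr dist_nonneg dist_nonneg
  have hptw2 : ∀ p : X × X,
      dist p.1 x₀ ^ r ≤ 2 ^ (r - 1) * (dist p.1 p.2 ^ r + dist p.2 x₀ ^ r) := by
    intro p
    calc dist p.1 x₀ ^ r ≤ (dist p.1 p.2 + dist p.2 x₀) ^ r :=
          Real.rpow_le_rpow dist_nonneg (dist_triangle p.1 p.2 x₀)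
            (le_trans zero_le_one hr)
      _ ≤ _ := rpow_add_aux hr dist_nonneg dist_nonneg
  have hicost : Integrable (fun p : X × X => dist p.1 p.2 ^ r) π := by
    refine ((hi1.add hi2).const_mul ((2:ℝ) ^ (r - 1))).mono'
      hcost_meas.aestronglyMeasurable ?_
    filter_upwards with p
    rw [Real.norm_eq_abs, abs_of_nonneg (hcostnn p)]
    exact hptw1 p
  have hi1σ := hi1.mono_measure hσle
  have hi2σ := hi2.mono_measure hσle
  have hicostσ := hicost.mono_measure hσle
  -- step 1: pointwise bound integrated over σ
  have step1 : ∫ p : X × X, dist p.1 x₀ ^ r ∂σ ≤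
      2 ^ (r - 1) * ((∫ p : X × X, dist p.1 p.2 ^ r ∂σ)
        + ∫ p : X × X, dist p.2 x₀ ^ r ∂σ) := by
    have := integral_mono hi1σ ((hicostσ.add hi2σ).const_mul ((2:ℝ) ^ (r - 1))) hptw2
    simp only [Pi.add_apply] at this
    rwa [integral_const_mul, integral_add hicostσ hi2σ] at this
  -- step 2: cost integral monotone
  have step2 : ∫ p : X × X, dist p.1 p.2 ^ r ∂σ ≤ ∫ p : X × X, dist p.1 p.2 ^ r ∂π :=
    integral_mono_measure hσle (Filter.Eventually.of_forall hcostnn) hicost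
  -- step 3: second marginal term bounded by Ieps μ'
  have hbdd : BddAbove {c : ℝ | ∃ τ : Measure X, τ ≤ μ' ∧ τ Set.univ ≤ ENNReal.ofReal ε ∧
      c = ∫ x, dist x x₀ ^ r ∂τ} := by
    refine ⟨∫ x, dist x x₀ ^ r ∂μ', ?_⟩
    rintro c ⟨ν, hν1, hν2, rfl⟩
    exact integral_mono_measure hν1 (Filter.Eventually.of_forall hgnn) hmom'
  have step3 : ∫ x, dist x x₀ ^ r ∂τ' ≤ Ieps r x₀ μ' ε :=
    le_csSup hbdd ⟨τ', hτ'le, hτ'ε, rfl⟩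
  calc ∫ x, dist x x₀ ^ r ∂τ
      = ∫ p : X × X, dist p.1 x₀ ^ r ∂σ := h1
    _ ≤ 2 ^ (r - 1) * ((∫ p : X × X, dist p.1 p.2 ^ r ∂σ)
        + ∫ p : X × X, dist p.2 x₀ ^ r ∂σ) := step1
    _ ≤ 2 ^ (r - 1) * (Ieps r x₀ μ' ε + ∫ p, dist p.1 p.2 ^ r ∂π) := by
        apply mul_le_mul_of_nonneg_left _ h2nn
        rw [h2]
        linarith [step2, step3]

/-- `I^r_ε(μ) ≤ 2^{r-1} (I^r_ε(μ') + W_r^r(μ,μ'))`. -/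
theorem stmt6 {X : Type*} [MetricSpace X] [CompleteSpace X]
    [SecondCountableTopology X] [MeasurableSpace X] [BorelSpace X]
    (r : ℝ) (hr : 1 ≤ r) (x₀ : X) (μ μ' : Measure X)
    [IsFiniteMeasure μ] [IsFiniteMeasure μ']
    (hmass : μ Set.univ = μ' Set.univ)
    (hmom : Integrable (fun x => dist x x₀ ^ r) μ)
    (hmom' : Integrable (fun x => dist x x₀ ^ r) μ')
    (ε : ℝ) (hε : 0 < ε) :
    Ieps r x₀ μ ε ≤ (2 : ℝ) ^ (r - 1) * (Ieps r x₀ μ' ε + WrRpow r μ μ') := by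
  have h2pos : (0:ℝ) < 2 ^ (r - 1) := Real.rpow_pos_of_pos two_pos _
  set W := {c : ℝ | ∃ π : Measure (X × X), π.map Prod.fst = μ ∧ π.map Prod.snd = μ' ∧
    c = ∫ p, dist p.1 p.2 ^ r ∂π} with hW
  have hWne : W.Nonempty := by
    by_cases h0 : μ Set.univ = 0
    · have hμ : μ = 0 := Measure.measure_univ_eq_zero.1 h0
      have hμ' : μ' = 0 := Measure.measure_univ_eq_zero.1 (hmass ▸ h0)
      exact ⟨_, ⟨0, by simp [hμ], by simp [hμ'], rfl⟩⟩
    · refine ⟨_, ⟨(μ Set.univ)⁻¹ • (μ.prod μ'), ?_, ?_, rfl⟩⟩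
      · rw [Measure.map_smul, Measure.map_fst_prod, ← hmass, smul_smul,
          ENNReal.inv_mul_cancel h0 (measure_ne_top μ _), one_smul]
      · rw [Measure.map_smul, Measure.map_snd_prod, smul_smul,
          ENNReal.inv_mul_cancel h0 (measure_ne_top μ _), one_smul]
  refine csSup_le ⟨0, ⟨0, Measure.zero_le μ, zero_le, (integral_zero_measure _).symm⟩⟩
    fun c hc => ?_
  obtain ⟨τ, hτle, hτε, rfl⟩ := hc
  have hInf : (∫ x, dist x x₀ ^ r ∂τ) / 2 ^ (r - 1) - Ieps r x₀ μ' ε ≤ sInf W := by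
    refine le_csInf hWne ?_
    rintro w ⟨π, hπ1, hπ2, rfl⟩
    have hk := key_aux r hr x₀ μ μ' hmom hmom' ε τ hτle hτε π hπ1 hπ2
    rw [sub_le_iff_le_add, div_le_iff₀ h2pos]
    linarith [hk]
  rw [sub_le_iff_le_add, div_le_iff₀ h2pos] at hInf
  have hWr : WrRpow r μ μ' = sInf W := by rw [WrRpow, hW]
  rw [hWr]
  linarith [hInf]
end

section
/- Let μ, ν be finite positive measures on ℝ^d with finite first moments and μ ≤_c ν in the convex order. Then for every ε > 0, I^1_ε(μ) ≤ I^1_ε(ν), where I^1_ε(η) = sup{ ∫ |x - x₀| dτ(x) : τ ≤ η, τ(ℝ^d) ≤ ε }. -/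
open MeasureTheory Set Filter
open scoped ENNReal

variable {d : ℕ}

lemma aux_convex (x₀ : EuclideanSpace ℝ (Fin d)) (t : ℝ) :
    ConvexOn ℝ Set.univ (fun x : EuclideanSpace ℝ (Fin d) => max (‖x - x₀‖ - t) 0) := by
  have hg : ConvexOn ℝ Set.univ (fun x : EuclideanSpace ℝ (Fin d) => ‖x - x₀‖) := by
    refine ⟨convex_univ, fun x _ y _ a b ha hb hab => ?_⟩
    have h : a • x + b • y - x₀ = a • (x - x₀) + b • (y - x₀) := by
      rw [smul_sub, smul_sub]
      rw [show a • x - a • x₀ + (b • y - b • x₀) = a • x + b • y - (a • x₀ + b • x₀) by abel,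
        ← add_smul, hab, one_smul]
    simp only []
    rw [h]
    calc ‖a • (x - x₀) + b • (y - x₀)‖ ≤ ‖a • (x - x₀)‖ + ‖b • (y - x₀)‖ := norm_add_le _ _
      _ = a * ‖x - x₀‖ + b * ‖y - x₀‖ := by
          rw [norm_smul, norm_smul, Real.norm_eq_abs, Real.norm_eq_abs, abs_of_nonneg ha,
            abs_of_nonneg hb]
      _ = a • ‖x - x₀‖ + b • ‖y - x₀‖ := rfl
  have h1 : ConvexOn ℝ Set.univ (fun x : EuclideanSpace ℝ (Fin d) => ‖x - x₀‖ - t) :=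
    hg.sub (concaveOn_const t convex_univ)
  exact h1.sup (convexOn_const 0 convex_univ)

lemma aux_int_g (x₀ : EuclideanSpace ℝ (Fin d)) (η : Measure (EuclideanSpace ℝ (Fin d)))
    [IsFiniteMeasure η] (h : Integrable (fun x => ‖x‖) η) :
    Integrable (fun x : EuclideanSpace ℝ (Fin d) => ‖x - x₀‖) η := by
  refine Integrable.mono' (h.add (integrable_const ‖x₀‖))
    ((continuous_id.sub continuous_const).norm.aestronglyMeasurable) ?_
  filter_upwards with x
  rw [Real.norm_eq_abs, abs_of_nonneg (norm_nonneg _)]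
  exact (norm_sub_le x x₀)

lemma aux_int_f (x₀ : EuclideanSpace ℝ (Fin d)) (t : ℝ) (ht : 0 ≤ t)
    (η : Measure (EuclideanSpace ℝ (Fin d))) [IsFiniteMeasure η]
    (h : Integrable (fun x : EuclideanSpace ℝ (Fin d) => ‖x - x₀‖) η) :
    Integrable (fun x : EuclideanSpace ℝ (Fin d) => max (‖x - x₀‖ - t) 0) η := by
  refine Integrable.mono' h
    (((continuous_id.sub continuous_const).norm.sub continuous_const).max
      continuous_const).aestronglyMeasurable ?_
  filter_upwards with x
  rw [Real.norm_eq_abs, abs_of_nonneg (le_max_right _ _)]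
  exact max_le (by linarith [norm_nonneg (x - x₀)]) (norm_nonneg _)

lemma aux_sigma (x₀ : EuclideanSpace ℝ (Fin d)) (ν : Measure (EuclideanSpace ℝ (Fin d)))
    [IsFiniteMeasure ν] (hν : Integrable (fun x : EuclideanSpace ℝ (Fin d) => ‖x - x₀‖) ν)
    (ε : ℝ) (hε : 0 < ε) :
    ∃ t : ℝ, 0 ≤ t ∧ ∃ σ : Measure (EuclideanSpace ℝ (Fin d)), σ ≤ ν ∧
      σ Set.univ ≤ ENNReal.ofReal ε ∧
      t * ε + ∫ x, max (‖x - x₀‖ - t) 0 ∂ν ≤ ∫ x, ‖x - x₀‖ ∂σ := by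
  set g : EuclideanSpace ℝ (Fin d) → ℝ := fun x => ‖x - x₀‖ with hgdef
  have hgc : Continuous g := (continuous_id.sub continuous_const).norm
  have hg0 : ∀ x, 0 ≤ g x := fun x => norm_nonneg _
  by_cases hsmall : ν Set.univ ≤ ENNReal.ofReal ε
  · refine ⟨0, le_refl 0, ν, le_refl ν, hsmall, ?_⟩
    rw [zero_mul, zero_add]
    refine integral_mono (aux_int_f x₀ 0 le_rfl ν hν) hν fun x => ?_
    simp only [sub_zero]
    exact max_le le_rfl (hg0 x)
  · push_neg at hsmall
    set F : ℝ → ℝ≥0∞ := fun t => ν {x | t < g x} with hFdef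
    have hFmeas : ∀ t : ℝ, MeasurableSet {x | t < g x} :=
      fun t => measurableSet_lt measurable_const hgc.measurable
    have hFmono : ∀ {s t : ℝ}, s ≤ t → F t ≤ F s :=
      fun h => measure_mono (fun x hx => lt_of_le_of_lt h hx)
    set S : Set ℝ := {t | 0 ≤ t ∧ F t ≤ ENNReal.ofReal ε} with hSdef
    have hSne : S.Nonempty := by
      have hanti : Antitone (fun n : ℕ => {x : EuclideanSpace ℝ (Fin d) | (n : ℝ) < g x}) := by
        intro m n hmn x hx
        simp only [Set.mem_setOf_eq] at hx ⊢
        exact lt_of_le_of_lt (Nat.cast_le.2 hmn) hx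
      have hinter : (⋂ n : ℕ, {x : EuclideanSpace ℝ (Fin d) | (n : ℝ) < g x}) = ∅ := by
        ext x
        simp only [Set.mem_iInter, Set.mem_setOf_eq, Set.mem_empty_iff_false, iff_false, not_forall,
          not_lt]
        obtain ⟨n, hn⟩ := exists_nat_gt (g x)
        exact ⟨n, hn.le⟩
      have := hanti.measure_iInter (μ := ν) (fun n => (hFmeas _).nullMeasurableSet)
        ⟨0, measure_ne_top ν _⟩
      rw [hinter, measure_empty] at this
      have hlt : ⨅ n : ℕ, ν {x : EuclideanSpace ℝ (Fin d) | (n : ℝ) < g x} < ENNReal.ofReal ε := by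
        rw [← this]; exact ENNReal.ofReal_pos.2 hε
      obtain ⟨n, hn⟩ := iInf_lt_iff.1 hlt
      exact ⟨n, Nat.cast_nonneg n, hn.le⟩
    have hSbd : BddBelow S := ⟨0, fun s hs => hs.1⟩
    set t : ℝ := sInf S with htdef
    have ht0 : 0 ≤ t := le_csInf hSne fun s hs => hs.1
    have hFnot : ∀ s : ℝ, 0 ≤ s → s < t → ENNReal.ofReal ε < F s := by
      intro s hs0 hst
      by_contra hcon
      push_neg at hcon
      exact absurd (csInf_le hSbd ⟨hs0, hcon⟩) (not_le.2 hst)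
    have h1 : F t ≤ ENNReal.ofReal ε := by
      have hU : {x : EuclideanSpace ℝ (Fin d) | t < g x}
          = ⋃ n : ℕ, {x | t + 1 / (n + 1) < g x} := by
        ext x
        simp only [Set.mem_setOf_eq, Set.mem_iUnion]
        constructor
        · intro h
          obtain ⟨n, hn⟩ := exists_nat_one_div_lt (sub_pos.2 h)
          exact ⟨n, by linarith⟩
        · rintro ⟨n, hn⟩
          have hp : (0:ℝ) < 1 / ((n:ℝ) + 1) := by positivity
          linarith
      have hmono : Monotone (fun n : ℕ => {x : EuclideanSpace ℝ (Fin d) | t + 1 / (n + 1) < g x}) := by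
        intro m n hmn x hx
        refine lt_of_le_of_lt (add_le_add_right ?_ t) hx
        exact one_div_le_one_div_of_le (by positivity) (by exact_mod_cast Nat.succ_le_succ hmn)
      calc F t = ν (⋃ n : ℕ, {x | t + 1 / (n + 1) < g x}) := congrArg ν hU
        _ = ⨆ n : ℕ, ν {x | t + 1 / (n + 1) < g x} := hmono.measure_iUnion
        _ ≤ ENNReal.ofReal ε := by
            refine iSup_le fun n => ?_
            have hp : (0:ℝ) < 1 / ((n:ℝ) + 1) := by positivity
            obtain ⟨s, hsS, hst⟩ := exists_lt_of_csInf_lt hSne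
              (show sInf S < t + 1 / ((n:ℝ) + 1) by rw [← htdef]; linarith)
            exact le_trans (measure_mono fun x hx => lt_of_le_of_lt hst.le hx) hsS.2
    have h2 : ENNReal.ofReal ε ≤ ν {x | t ≤ g x} := by
      rcases eq_or_lt_of_le ht0 with h0 | h0
      · have huniv : {x : EuclideanSpace ℝ (Fin d) | t ≤ g x} = Set.univ := by
          ext x; simp [← h0, hg0 x]
        rw [huniv]; exact hsmall.le
      · have hI : {x : EuclideanSpace ℝ (Fin d) | t ≤ g x}
            = ⋂ n : ℕ, {x | t - 1 / (n + 1) < g x} := by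
          ext x
          simp only [Set.mem_setOf_eq, Set.mem_iInter]
          constructor
          · intro h n
            have hp : (0:ℝ) < 1 / ((n:ℝ) + 1) := by positivity
            linarith
          · intro h
            by_contra hlt
            push_neg at hlt
            obtain ⟨n, hn⟩ := exists_nat_one_div_lt (sub_pos.2 hlt)
            have := h n
            linarith
        have hanti : Antitone (fun n : ℕ => {x : EuclideanSpace ℝ (Fin d) | t - 1 / (n + 1) < g x}) := by
          intro m n hmn x hx
          refine lt_of_le_of_lt (sub_le_sub_left ?_ t) hx
          exact one_div_le_one_div_of_le (by positivity) (by exact_mod_cast Nat.succ_le_succ hmn)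
        rw [hI, hanti.measure_iInter (fun n => (hFmeas _).nullMeasurableSet) ⟨0, measure_ne_top ν _⟩]
        refine le_iInf fun n => ?_
        have hp : (0:ℝ) < 1 / ((n:ℝ) + 1) := by positivity
        rcases le_or_gt 0 (t - 1 / ((n:ℝ) + 1)) with hs | hs
        · exact (hFnot _ hs (by linarith)).le
        · exact le_trans (hFnot 0 le_rfl h0).le (hFmono hs.le)
    -- now the construction
    set A : Set (EuclideanSpace ℝ (Fin d)) := {x | t < g x} with hAdef
    set B : Set (EuclideanSpace ℝ (Fin d)) := {x | g x = t} with hBdef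
    have hAm : MeasurableSet A := hFmeas t
    have hBm : MeasurableSet B := hgc.measurable (measurableSet_singleton t)
    have hABdisj : Disjoint A B := by
      rw [Set.disjoint_left]
      intro x hxA hxB
      exact absurd hxB (ne_of_gt hxA)
    have hABunion : {x : EuclideanSpace ℝ (Fin d) | t ≤ g x} = A ∪ B := by
      ext x
      simp only [Set.mem_setOf_eq, Set.mem_union, hAdef, hBdef]
      rw [le_iff_lt_or_eq]
      exact or_congr Iff.rfl eq_comm
    have hA : ν A ≤ ENNReal.ofReal ε := h1
    have hAB : ENNReal.ofReal ε ≤ ν A + ν B := by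
      refine le_trans h2 ?_
      rw [hABunion]
      exact measure_union_le A B
    set θ : ℝ≥0∞ := (ENNReal.ofReal ε - ν A) / ν B with hθdef
    have hθB : θ * ν B = ENNReal.ofReal ε - ν A := by
      rcases eq_or_ne (ν B) 0 with hB0 | hB0
      · have hAε : ENNReal.ofReal ε ≤ ν A := by rwa [hB0, add_zero] at hAB
        have : ENNReal.ofReal ε - ν A = 0 := tsub_eq_zero_of_le hAε
        rw [hB0, mul_zero, this]
      · exact ENNReal.div_mul_cancel hB0 (measure_ne_top ν B)
    have hθ1 : θ ≤ 1 := by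
      refine ENNReal.div_le_of_le_mul ?_
      rw [one_mul]
      rw [tsub_le_iff_right]
      rwa [add_comm]
    have hθtop : θ ≠ ∞ := (lt_of_le_of_lt hθ1 (by norm_num)).ne
    set σ : Measure (EuclideanSpace ℝ (Fin d)) := ν.restrict A + θ • ν.restrict B with hσdef
    have hσν : σ ≤ ν := by
      refine le_trans ?_ (Measure.restrict_le_self (s := A ∪ B))
      rw [Measure.restrict_union hABdisj hBm]
      rw [Measure.le_iff']
      intro s
      simp only [hσdef, Measure.add_apply, Measure.smul_apply, smul_eq_mul]
      exact add_le_add_right (mul_le_of_le_one_left zero_le hθ1) _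
    have hmass : σ Set.univ = ENNReal.ofReal ε := by
      simp only [hσdef, Measure.add_apply, Measure.smul_apply, smul_eq_mul,
        Measure.restrict_apply_univ]
      rw [hθB]
      exact add_tsub_cancel_of_le hA
    refine ⟨t, ht0, σ, hσν, hmass.le, ?_⟩
    -- integral computations
    have hgA : Integrable g (ν.restrict A) := hν.restrict
    have hgB : Integrable g (ν.restrict B) := hν.restrict
    have hfint : Integrable (fun x => max (g x - t) 0) ν := aux_int_f x₀ t ht0 ν hν
    have hIB : ∫ x, g x ∂(ν.restrict B) = (ν B).toReal * t := by
      rw [setIntegral_congr_fun hBm (g := fun _ => t) (fun x hx => hx)]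
      rw [setIntegral_const, smul_eq_mul]; rfl
    have hIf : ∫ x, max (g x - t) 0 ∂ν = ∫ x, g x ∂(ν.restrict A) - (ν A).toReal * t := by
      rw [← integral_add_compl hAm hfint]
      have hc1 : ∫ x in Aᶜ, max (g x - t) 0 ∂ν = 0 := by
        rw [setIntegral_congr_fun hAm.compl (g := fun _ => 0)]
        · exact integral_zero _ _
        · intro x hx
          simp only [Set.mem_compl_iff, hAdef, Set.mem_setOf_eq, not_lt] at hx
          exact max_eq_right (by linarith)
      have hc2 : ∫ x in A, max (g x - t) 0 ∂ν = ∫ x, g x ∂(ν.restrict A) - (ν A).toReal * t := by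
        rw [setIntegral_congr_fun hAm (g := fun x => g x - t)]
        · rw [integral_sub hgA (integrable_const t), integral_const,
            measureReal_restrict_apply_univ, smul_eq_mul]; rfl
        · intro x hx
          simp only [hAdef, Set.mem_setOf_eq] at hx
          exact max_eq_left (by linarith)
      rw [hc1, hc2, add_zero]
    have hIσ : ∫ x, g x ∂σ
        = ∫ x, g x ∂(ν.restrict A) + θ.toReal * ((ν B).toReal * t) := by
      rw [hσdef, integral_add_measure hgA (hgB.smul_measure hθtop),
        integral_smul_measure, hIB, smul_eq_mul]
    rw [hIσ, hIf]
    have hkey : (ν A).toReal + θ.toReal * (ν B).toReal = ε := by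
      have h1' : ν A + θ * ν B = ENNReal.ofReal ε := by
        rw [hθB]
        exact add_tsub_cancel_of_le hA
      have h2' : ((ν A) + θ * ν B).toReal = ε := by
        rw [h1', ENNReal.toReal_ofReal hε.le]
      rwa [ENNReal.toReal_add (measure_ne_top ν A) (ENNReal.mul_ne_top hθtop (measure_ne_top ν B)),
        ENNReal.toReal_mul] at h2'
    nlinarith [hkey]


/-- `I^1_ε(η) = sup { ∫ |x - x₀| dτ : τ ≤ η, τ(ℝ^d) ≤ ε }`. -/
noncomputable def I1eps {d : ℕ} (x₀ : EuclideanSpace ℝ (Fin d))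
    (η : Measure (EuclideanSpace ℝ (Fin d))) (ε : ℝ) : ℝ :=
  sSup {c : ℝ | ∃ τ : Measure (EuclideanSpace ℝ (Fin d)), τ ≤ η ∧
    τ Set.univ ≤ ENNReal.ofReal ε ∧ c = ∫ x, ‖x - x₀‖ ∂τ}

/-- If `μ ≤_c ν` in convex order, then `I^1_ε(μ) ≤ I^1_ε(ν)` for every `ε > 0`. -/
theorem stmt7 {d : ℕ} (x₀ : EuclideanSpace ℝ (Fin d))
    (μ ν : Measure (EuclideanSpace ℝ (Fin d)))
    [IsFiniteMeasure μ] [IsFiniteMeasure ν]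
    (hμ : Integrable (fun x => ‖x‖) μ) (hν : Integrable (fun x => ‖x‖) ν)
    (hc : ∀ f : EuclideanSpace ℝ (Fin d) → ℝ, ConvexOn ℝ Set.univ f →
      Integrable f μ → Integrable f ν → ∫ x, f x ∂μ ≤ ∫ x, f x ∂ν) :
    ∀ ε : ℝ, 0 < ε → I1eps x₀ μ ε ≤ I1eps x₀ ν ε := by
  intro ε hε
  have hgμ : Integrable (fun x : EuclideanSpace ℝ (Fin d) => ‖x - x₀‖) μ := aux_int_g x₀ μ hμ
  have hgν : Integrable (fun x : EuclideanSpace ℝ (Fin d) => ‖x - x₀‖) ν := aux_int_g x₀ ν hν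
  obtain ⟨t, ht0, σ, hσν, hσm, hσint⟩ := aux_sigma x₀ ν hgν ε hε
  set Sν : Set ℝ := {c : ℝ | ∃ τ : Measure (EuclideanSpace ℝ (Fin d)), τ ≤ ν ∧
    τ Set.univ ≤ ENNReal.ofReal ε ∧ c = ∫ x, ‖x - x₀‖ ∂τ} with hSνdef
  have hbdd : BddAbove Sν := by
    refine ⟨∫ x, ‖x - x₀‖ ∂ν, ?_⟩
    rintro c ⟨τ, hτν, _, rfl⟩
    exact integral_mono_measure hτν (Filter.Eventually.of_forall fun x => norm_nonneg _) hgν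
  have hmemσ : (∫ x, ‖x - x₀‖ ∂σ) ∈ Sν := ⟨σ, hσν, hσm, rfl⟩
  have hσle : (∫ x, ‖x - x₀‖ ∂σ) ≤ I1eps x₀ ν ε := le_csSup hbdd hmemσ
  refine Real.sSup_le ?_ ?_
  · rintro c ⟨τ, hτμ, hτm, rfl⟩
    haveI : IsFiniteMeasure τ := isFiniteMeasure_of_le μ hτμ
    have hgτ : Integrable (fun x : EuclideanSpace ℝ (Fin d) => ‖x - x₀‖) τ := hgμ.mono_measure hτμ
    have hfτ : Integrable (fun x : EuclideanSpace ℝ (Fin d) => max (‖x - x₀‖ - t) 0) τ :=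
      aux_int_f x₀ t ht0 τ hgτ
    have hfμ : Integrable (fun x : EuclideanSpace ℝ (Fin d) => max (‖x - x₀‖ - t) 0) μ :=
      aux_int_f x₀ t ht0 μ hgμ
    have hfν : Integrable (fun x : EuclideanSpace ℝ (Fin d) => max (‖x - x₀‖ - t) 0) ν :=
      aux_int_f x₀ t ht0 ν hgν
    have hτε : (τ Set.univ).toReal ≤ ε := by
      refine ENNReal.toReal_le_of_le_ofReal hε.le hτm
    calc ∫ x, ‖x - x₀‖ ∂τ
        ≤ ∫ x, (t + max (‖x - x₀‖ - t) 0) ∂τ := by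
          refine integral_mono hgτ ((integrable_const t).add hfτ) fun x => ?_
          have := le_max_left (‖x - x₀‖ - t) 0
          linarith
      _ = (τ Set.univ).toReal * t + ∫ x, max (‖x - x₀‖ - t) 0 ∂τ := by
          rw [integral_add (integrable_const t) hfτ, integral_const, smul_eq_mul]; rfl
      _ ≤ t * ε + ∫ x, max (‖x - x₀‖ - t) 0 ∂ν := by
          have h1 : (τ Set.univ).toReal * t ≤ t * ε := by
            rw [mul_comm]
            exact mul_le_mul_of_nonneg_left hτε ht0
          have h2 : ∫ x, max (‖x - x₀‖ - t) 0 ∂τ ≤ ∫ x, max (‖x - x₀‖ - t) 0 ∂μ :=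
            integral_mono_measure hτμ (Filter.Eventually.of_forall fun x => le_max_right _ _) hfμ
          have h3 : ∫ x, max (‖x - x₀‖ - t) 0 ∂μ ≤ ∫ x, max (‖x - x₀‖ - t) 0 ∂ν :=
            hc _ (aux_convex x₀ t) hfμ hfν
          linarith
      _ ≤ ∫ x, ‖x - x₀‖ ∂σ := hσint
      _ ≤ I1eps x₀ ν ε := hσle
  · refine le_trans ?_ hσle
    exact integral_nonneg fun x => norm_nonneg _
end

section
/- Let μ^k, ν^k, μ, ν be probability measures on ℝ with finite first moments such that W_1(μ^k, μ) → 0 and W_1(ν^k, ν) → 0, all with common barycentre m₁. Then the convex-order supremum μ^k ∨_c ν^k converges to μ ∨_c ν in W_1, and the convex-order infimum μ^k ∧_c ν^k converges to μ ∧_c ν in W_1. -/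
open MeasureTheory ProbabilityTheory Filter Set Topology

/-- The potential function `u_η(y) = ∫ |y - x| dη(x)`. -/
noncomputable def pot (η : Measure ℝ) (y : ℝ) : ℝ := ∫ x, |y - x| ∂η

/-- The convex hull (convex envelope) of a function. -/
noncomputable def coFun (f : ℝ → ℝ) (y : ℝ) : ℝ :=
  sSup {c : ℝ | ∃ g : ℝ → ℝ, ConvexOn ℝ Set.univ g ∧ (∀ z, g z ≤ f z) ∧ c = g y}

/-- The Wasserstein-1 distance. -/
noncomputable def W1R (μ ν : Measure ℝ) : ℝ :=
  sInf {c : ℝ | ∃ π : Measure (ℝ × ℝ), π.map Prod.fst = μ ∧ π.map Prod.snd = ν ∧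
    c = ∫ p, |p.1 - p.2| ∂π}

namespace Wp

def cset (μ ν : Measure ℝ) : Set ℝ := {c : ℝ | ∃ π : Measure (ℝ × ℝ),
    π.map Prod.fst = μ ∧ π.map Prod.snd = ν ∧ c = ∫ p, |p.1 - p.2| ∂π}

lemma W1R_eq (μ ν : Measure ℝ) : W1R μ ν = sInf (cset μ ν) := rfl

lemma cset_nonneg {μ ν : Measure ℝ} {c : ℝ} (hc : c ∈ cset μ ν) : 0 ≤ c := by
  obtain ⟨π, -, -, rfl⟩ := hc
  exact integral_nonneg fun p => abs_nonneg _

lemma W1R_nonneg (μ ν : Measure ℝ) : 0 ≤ W1R μ ν :=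
  Real.sInf_nonneg fun c hc => cset_nonneg hc

lemma integrable_abs_sub {α : Measure ℝ} [IsProbabilityMeasure α]
    (hi : Integrable (fun x => |x|) α) (y : ℝ) : Integrable (fun x => |y - x|) α := by
  refine (hi.add (integrable_const |y|)).mono
    (((continuous_const.sub continuous_id).abs).aestronglyMeasurable) ?_
  filter_upwards with x
  simp only [Real.norm_eq_abs, abs_abs]
  have : |y - x| ≤ |x| + |y| := by
    calc |y - x| ≤ |y| + |x| := abs_sub y x
    _ = |x| + |y| := by ring
  simp only [Pi.add_apply]
  rw [abs_of_nonneg (by positivity : (0:ℝ) ≤ |x| + |y|)]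
  exact this

lemma integrable_id_of_abs {α : Measure ℝ} (hi : Integrable (fun x => |x|) α) :
    Integrable (fun x => x) α := by
  refine hi.mono (aestronglyMeasurable_id) ?_
  filter_upwards with x
  simp [Real.norm_eq_abs]

/-- Jensen: `|y - m| ≤ pot α y`. -/
lemma abs_sub_mean_le_pot {α : Measure ℝ} [IsProbabilityMeasure α]
    (hi : Integrable (fun x => |x|) α) (y : ℝ) : |y - ∫ x, x ∂α| ≤ pot α y := by
  have h1 : ∫ x, (y - x) ∂α = y - ∫ x, x ∂α := by
    rw [integral_sub (integrable_const y) (integrable_id_of_abs hi), integral_const]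
    simp
  rw [← h1]
  simpa [Real.norm_eq_abs, pot] using norm_integral_le_integral_norm (μ := α) (fun x => y - x)



variable {α β : Measure ℝ}

lemma cset_nonempty (α β : Measure ℝ) [IsProbabilityMeasure α] [IsProbabilityMeasure β] :
    (cset α β).Nonempty := by
  refine ⟨_, α.prod β, ?_, ?_, rfl⟩
  · rw [Measure.map_fst_prod]; simp
  · rw [Measure.map_snd_prod]; simp

lemma abs_pot_sub_le_of_mem [IsProbabilityMeasure α] [IsProbabilityMeasure β]
    (hα : Integrable (fun x => |x|) α) (hβ : Integrable (fun x => |x|) β)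
    {c : ℝ} (hc : c ∈ cset α β) (y : ℝ) : |pot α y - pot β y| ≤ c := by
  obtain ⟨π, h1, h2, rfl⟩ := hc
  -- π is a probability measure
  have hπ : IsProbabilityMeasure π := by
    constructor
    have := congrArg (fun m : Measure ℝ => m Set.univ) h1
    rw [Measure.map_apply measurable_fst MeasurableSet.univ] at this
    · simpa using this
  -- integrability of the coordinates
  have hf1 : Integrable (fun p : ℝ × ℝ => |y - p.1|) π := by
    have := (integrable_map_measure
      (((continuous_const.sub continuous_id).abs).aestronglyMeasurable)
      measurable_fst.aemeasurable (μ := π)).mp (by rw [h1]; exact integrable_abs_sub hα y)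
    exact this
  have hf2 : Integrable (fun p : ℝ × ℝ => |y - p.2|) π := by
    have := (integrable_map_measure
      (((continuous_const.sub continuous_id).abs).aestronglyMeasurable)
      measurable_snd.aemeasurable (μ := π)).mp (by rw [h2]; exact integrable_abs_sub hβ y)
    exact this
  have e1 : pot α y = ∫ p, |y - p.1| ∂π := by
    rw [pot, ← h1]
    exact integral_map measurable_fst.aemeasurable
      (((measurable_const.sub measurable_id).abs : Measurable (fun x : ℝ => |y - x|)).aestronglyMeasurable)
  have e2 : pot β y = ∫ p, |y - p.2| ∂π := by
    rw [pot, ← h2]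
    exact integral_map measurable_snd.aemeasurable
      (((measurable_const.sub measurable_id).abs : Measurable (fun x : ℝ => |y - x|)).aestronglyMeasurable)
  rw [e1, e2, ← integral_sub hf1 hf2]
  calc |∫ p, (|y - p.1| - |y - p.2|) ∂π| ≤ ∫ p, |(|y - p.1| - |y - p.2|)| ∂π := by
        simpa [Real.norm_eq_abs] using
          norm_integral_le_integral_norm (μ := π) (fun p : ℝ × ℝ => |y - p.1| - |y - p.2|)
    _ ≤ ∫ p, |p.1 - p.2| ∂π := by
        refine integral_mono ((hf1.sub hf2).abs) ?_ ?_
        · refine (hf1.add hf2).mono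
            ((continuous_fst.sub continuous_snd).abs.aestronglyMeasurable) ?_
          filter_upwards with p
          simp only [Real.norm_eq_abs, abs_abs, Pi.add_apply]
          rw [abs_of_nonneg (by positivity : (0:ℝ) ≤ |y - p.1| + |y - p.2|)]
          calc |p.1 - p.2| = |(y - p.2) - (y - p.1)| := by ring_nf
            _ ≤ |y - p.2| + |y - p.1| := abs_sub _ _
            _ = |y - p.1| + |y - p.2| := by ring
        · intro p
          calc |(|y - p.1| - |y - p.2|)| ≤ |(y - p.1) - (y - p.2)| := abs_abs_sub_abs_le_abs_sub _ _
            _ = |p.2 - p.1| := by ring_nf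
            _ = |p.1 - p.2| := abs_sub_comm _ _

lemma abs_pot_sub_le_W1R [IsProbabilityMeasure α] [IsProbabilityMeasure β]
    (hα : Integrable (fun x => |x|) α) (hβ : Integrable (fun x => |x|) β) (y : ℝ) :
    |pot α y - pot β y| ≤ W1R α β :=
  le_csInf (cset_nonempty α β) fun c hc => abs_pot_sub_le_of_mem hα hβ hc y


lemma integrable_abs_of_pot_ne_zero {α : Measure ℝ} [IsProbabilityMeasure α] {y : ℝ}
    (h : pot α y ≠ 0) : Integrable (fun x => |x|) α := by
  by_contra hni
  apply h
  rw [pot, integral_undef]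
  intro hint
  apply hni
  refine (hint.add (integrable_const |y|)).mono measurable_abs.aestronglyMeasurable ?_
  · filter_upwards with x
    simp only [Real.norm_eq_abs, abs_abs, Pi.add_apply]
    rw [abs_of_nonneg (by positivity : (0:ℝ) ≤ |y - x| + |y|)]
    calc |x| = |y - (y - x)| := by ring_nf
      _ ≤ |y| + |y - x| := abs_sub _ _
      _ = |y - x| + |y| := by ring

lemma tendsto_nat_sub_pot {α : Measure ℝ} [IsProbabilityMeasure α]
    (hi : Integrable (fun x => |x|) α) :
    Tendsto (fun n : ℕ => (n : ℝ) - pot α n) atTop (nhds (∫ x, x ∂α)) := by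
  have key : ∀ n : ℕ, (n : ℝ) - pot α n = ∫ x, ((n : ℝ) - |(n : ℝ) - x|) ∂α := by
    intro n
    rw [integral_sub (integrable_const _) (integrable_abs_sub hi _), integral_const]
    simp [pot]
  simp_rw [key]
  refine tendsto_integral_filter_of_dominated_convergence (fun x => |x|) ?_ ?_ hi ?_
  · filter_upwards with n
    exact ((measurable_const.sub (measurable_const.sub measurable_id).abs).aestronglyMeasurable)
  · filter_upwards with n
    filter_upwards with x
    have hn : (0:ℝ) ≤ n := Nat.cast_nonneg n
    rw [Real.norm_eq_abs]
    calc |((n:ℝ) - |(n:ℝ) - x|)| = |(|(n:ℝ)| - |(n:ℝ) - x|)| := by rw [abs_of_nonneg hn]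
      _ ≤ |(n:ℝ) - ((n:ℝ) - x)| := abs_abs_sub_abs_le_abs_sub _ _
      _ = |x| := by ring_nf
  · filter_upwards with x
    have : ∀ᶠ n : ℕ in atTop, (n : ℝ) - |(n:ℝ) - x| = x := by
      filter_upwards [eventually_ge_atTop (Nat.ceil |x|)] with n hn
      have : x ≤ (n : ℝ) := le_trans (le_abs_self x) (le_trans (Nat.le_ceil _) (by exact_mod_cast hn))
      rw [abs_of_nonneg (by linarith)]
      ring
    exact Tendsto.congr' (EventuallyEq.symm this) tendsto_const_nhds

/-- A convex minorant evaluated at a point is at most the convex envelope. -/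
lemma le_coFun {f g : ℝ → ℝ} (hg : ConvexOn ℝ Set.univ g) (hle : ∀ z, g z ≤ f z) (y : ℝ) :
    g y ≤ coFun f y := by
  refine le_csSup ⟨f y, ?_⟩ ⟨g, hg, hle, rfl⟩
  rintro c ⟨h, hh, hhle, rfl⟩
  exact hhle y

lemma coFun_le {f : ℝ → ℝ} (hne : ∃ g : ℝ → ℝ, ConvexOn ℝ Set.univ g ∧ ∀ z, g z ≤ f z)
    (y : ℝ) : coFun f y ≤ f y := by
  obtain ⟨g, hg, hle⟩ := hne
  refine csSup_le ⟨g y, g, hg, hle, rfl⟩ ?_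
  rintro c ⟨h, hh, hhle, rfl⟩
  exact hhle y

lemma coFun_le_coFun_add {f₁ f₂ : ℝ → ℝ} {ε : ℝ}
    (hne : ∃ g : ℝ → ℝ, ConvexOn ℝ Set.univ g ∧ ∀ z, g z ≤ f₁ z)
    (hle : ∀ z, f₁ z ≤ f₂ z + ε) (y : ℝ) : coFun f₁ y ≤ coFun f₂ y + ε := by
  obtain ⟨g₀, hg₀, hg₀le⟩ := hne
  refine csSup_le ⟨g₀ y, g₀, hg₀, hg₀le, rfl⟩ ?_
  rintro c ⟨h, hh, hhle, rfl⟩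
  have hconv : ConvexOn ℝ Set.univ (fun z => h z - ε) := by
    have := hh.sub (concaveOn_const ε convex_univ)
    exact this
  have hle2 : ∀ z, h z - ε ≤ f₂ z := fun z => by linarith [hhle z, hle z]
  have h3 := le_coFun (f := f₂) hconv hle2 y
  linarith

lemma convexOn_abs_sub (m : ℝ) : ConvexOn ℝ Set.univ (fun z : ℝ => |z - m|) := by
  refine ⟨convex_univ, ?_⟩
  intro x _ y _ a b ha hb hab
  simp only [smul_eq_mul]
  have h1 : a * x + b * y - m = a * (x - m) + b * (y - m) := by linear_combination m * hab
  rw [h1]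
  calc |a * (x - m) + b * (y - m)| ≤ |a * (x - m)| + |b * (y - m)| := abs_add_le _ _
    _ = a * |x - m| + b * |y - m| := by
        rw [abs_mul, abs_mul, abs_of_nonneg ha, abs_of_nonneg hb]

noncomputable def Q (α : Measure ℝ) (t : ℝ) : ℝ := sInf {x | t ≤ cdf α x}

lemma Qset_nonempty (α : Measure ℝ) {t : ℝ} (ht : t < 1) : {x | t ≤ cdf α x}.Nonempty := by
  have h := (tendsto_cdf_atTop α).eventually_const_le ht
  exact h.exists

lemma Qset_bddBelow (α : Measure ℝ) {t : ℝ} (ht : 0 < t) : BddBelow {x | t ≤ cdf α x} := by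
  have h := (tendsto_cdf_atBot α).eventually_lt_const ht
  obtain ⟨x₀, hx₀⟩ := h.exists
  refine ⟨x₀, fun x hx => ?_⟩
  by_contra hc
  push_neg at hc
  exact absurd (le_trans hx (monotone_cdf α hc.le)) (not_le.mpr hx₀)

lemma Q_le_iff (α : Measure ℝ) {t : ℝ} (ht : t ∈ Ioo (0:ℝ) 1) {x : ℝ} :
    Q α t ≤ x ↔ t ≤ cdf α x := by
  constructor
  · intro h
    have key : ∀ z, x < z → t ≤ cdf α z := by
      intro z hz
      obtain ⟨w, hw, hwz⟩ := exists_lt_of_csInf_lt (Qset_nonempty α ht.2) (lt_of_le_of_lt h hz)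
      exact le_trans hw (monotone_cdf α hwz.le)
    have hrc : Tendsto (cdf α) (nhdsWithin x (Ioi x)) (nhds (cdf α x)) :=
      ((cdf α).right_continuous x).tendsto.mono_left (nhdsWithin_mono x Ioi_subset_Ici_self)
    refine ge_of_tendsto hrc ?_
    filter_upwards [self_mem_nhdsWithin] with z hz
    exact key z hz
  · intro h
    exact csInf_le (Qset_bddBelow α ht.1) h

lemma monotoneOn_Q (α : Measure ℝ) : MonotoneOn (Q α) (Ioo (0:ℝ) 1) := by
  intro t₁ h₁ t₂ h₂ h12
  exact csInf_le_csInf (Qset_bddBelow α h₁.1) (Qset_nonempty α h₂.2)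
    (fun x hx => le_trans h12 hx)

lemma aemeasurable_Q (α : Measure ℝ) :
    AEMeasurable (Q α) (volume.restrict (Ioo (0:ℝ) 1)) :=
  aemeasurable_restrict_of_monotoneOn measurableSet_Ioo (monotoneOn_Q α)

lemma map_Q (α : Measure ℝ) [IsProbabilityMeasure α] :
    (volume.restrict (Ioo (0:ℝ) 1)).map (Q α) = α := by
  have hQm := aemeasurable_Q α
  have hIic : ∀ x : ℝ, ((volume.restrict (Ioo (0:ℝ) 1)).map (Q α)) (Iic x) = α (Iic x) := by
    intro x
    rw [Measure.map_apply_of_aemeasurable hQm measurableSet_Iic,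
      Measure.restrict_apply' measurableSet_Ioo]
    have hset : (Q α) ⁻¹' (Iic x) ∩ Ioo 0 1 = Iic (cdf α x) ∩ Ioo 0 1 := by
      ext t
      simp only [mem_inter_iff, mem_preimage, mem_Iic, mem_Ioo]
      constructor
      · rintro ⟨h1, h2⟩; exact ⟨(Q_le_iff α ⟨h2.1, h2.2⟩).mp h1, h2⟩
      · rintro ⟨h1, h2⟩; exact ⟨(Q_le_iff α ⟨h2.1, h2.2⟩).mpr h1, h2⟩
    rw [hset, ← ofReal_cdf α x]
    rcases lt_or_ge (cdf α x) 1 with hc | hc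
    · have : Iic (cdf α x) ∩ Ioo 0 1 = Ioc 0 (cdf α x) := by
        ext t
        simp only [mem_inter_iff, mem_Iic, mem_Ioo, mem_Ioc]
        constructor
        · rintro ⟨h1, h2⟩; exact ⟨h2.1, h1⟩
        · rintro ⟨h1, h2⟩; exact ⟨h2, h1, lt_of_le_of_lt h2 hc⟩
      rw [this, Real.volume_Ioc]
      simp
    · have hc1 : cdf α x = 1 := le_antisymm (cdf_le_one α x) hc
      have : Iic (cdf α x) ∩ Ioo 0 1 = Ioo 0 1 := by
        rw [hc1]
        ext t
        simp only [mem_inter_iff, mem_Iic, mem_Ioo]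
        exact ⟨fun h => h.2, fun h => ⟨h.2.le, h⟩⟩
      rw [this, Real.volume_Ioo, hc1]
      simp
  haveI : IsProbabilityMeasure ((volume.restrict (Ioo (0:ℝ) 1)).map (Q α)) := by
    constructor
    rw [Measure.map_apply_of_aemeasurable hQm MeasurableSet.univ]
    simp [Real.volume_Ioo]
  exact Measure.ext_of_Iic _ α hIic

noncomputable def TF (α : Measure ℝ) (y : ℝ) : ℝ := ∫ x, max (x - y) 0 ∂α

lemma integrable_max_sub {α : Measure ℝ} [IsProbabilityMeasure α]
    (hi : Integrable (fun x => |x|) α) (y : ℝ) : Integrable (fun x => max (x - y) 0) α := by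
  refine (hi.add (integrable_const |y|)).mono
    ((measurable_id.sub measurable_const).max measurable_const).aestronglyMeasurable ?_
  filter_upwards with x
  simp only [Real.norm_eq_abs, Pi.add_apply]
  rw [abs_of_nonneg (le_max_right _ _), abs_of_nonneg (by positivity : (0:ℝ) ≤ |x| + |y|)]
  rcases le_or_gt x y with h | h
  · rw [max_eq_right (by linarith)]; positivity
  · rw [max_eq_left (by linarith)]
    calc x - y ≤ |x| + |y| := by
          have h1 := le_abs_self x
          have h2 := neg_abs_le y
          linarith

lemma TF_eq {α : Measure ℝ} [IsProbabilityMeasure α]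
    (hi : Integrable (fun x => |x|) α) (y : ℝ) :
    TF α y = (pot α y - y + ∫ x, x ∂α) / 2 := by
  have key : ∀ x : ℝ, max (x - y) 0 = (|y - x| - y + x) / 2 := by
    intro x
    rcases le_or_gt x y with h | h
    · rw [max_eq_right (by linarith), abs_of_nonneg (by linarith)]; ring
    · rw [max_eq_left (by linarith), abs_of_neg (by linarith)]; ring
  rw [TF]
  simp_rw [key]
  rw [integral_div]
  have h1 : ∫ a, (|y - a| - y + a) ∂α = (∫ a, (|y - a| - y) ∂α) + ∫ a, a ∂α :=
    integral_add ((integrable_abs_sub hi y).sub (integrable_const y) :)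
      (integrable_id_of_abs hi)
  have h2 : ∫ a, (|y - a| - y) ∂α = (∫ a, |y - a| ∂α) - ∫ _, y ∂α :=
    integral_sub (integrable_abs_sub hi y) (integrable_const y)
  rw [h1, h2, integral_const]
  simp [pot]

lemma one_sub_cdf (α : Measure ℝ) [IsProbabilityMeasure α] (c : ℝ) :
    (α (Ioi c)).toReal = 1 - cdf α c := by
  have h1 : α (Ioi c) = 1 - α (Iic c) := by
    rw [← Set.compl_Iic]
    exact prob_compl_eq_one_sub measurableSet_Iic
  rw [h1, ENNReal.toReal_sub_of_le prob_le_one ENNReal.one_ne_top, cdf_eq_real]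
  simp [measureReal_def]

lemma clamp_lb {y h x : ℝ} (hh : 0 < h) :
    (Ioi (y + h)).indicator (fun _ => h) x ≤ max (x - y) 0 - max (x - y - h) 0 := by
  by_cases hx : y + h < x
  · rw [Set.indicator_of_mem (Set.mem_Ioi.mpr hx) (fun _ => h),
      max_eq_left (by linarith), max_eq_left (by linarith)]
    linarith
  · rw [Set.indicator_of_notMem (by simpa [Set.mem_Ioi] using hx) (fun _ => h)]
    push_neg at hx
    rcases le_or_gt x y with h2 | h2
    · rw [max_eq_right (by linarith), max_eq_right (by linarith)]; linarith
    · rw [max_eq_left (by linarith), max_eq_right (by linarith)]; linarith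

lemma clamp_ub {y h x : ℝ} (hh : 0 < h) :
    max (x - y) 0 - max (x - y - h) 0 ≤ (Ioi y).indicator (fun _ => h) x := by
  by_cases hx : y < x
  · rw [Set.indicator_of_mem (Set.mem_Ioi.mpr hx) (fun _ => h), max_eq_left (by linarith)]
    rcases le_or_gt x (y + h) with h2 | h2
    · rw [max_eq_right (by linarith)]; linarith
    · rw [max_eq_left (by linarith)]; linarith
  · rw [Set.indicator_of_notMem (by simpa [Set.mem_Ioi] using hx) (fun _ => h)]
    push_neg at hx
    rw [max_eq_right (by linarith), max_eq_right (by linarith)]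
    linarith

lemma TF_sub_bounds {α : Measure ℝ} [IsProbabilityMeasure α]
    (hi : Integrable (fun x => |x|) α) {y h : ℝ} (hh : 0 < h) :
    (1 - cdf α (y + h)) * h ≤ TF α y - TF α (y + h) ∧
      TF α y - TF α (y + h) ≤ (1 - cdf α y) * h := by
  have hint : Integrable (fun x => max (x - y) 0 - max (x - y - h) 0) α := by
    have := (integrable_max_sub hi y).sub (integrable_max_sub hi (y + h))
    simpa [sub_sub, Pi.sub_def] using this
  have hTF : TF α y - TF α (y + h) = ∫ x, (max (x - y) 0 - max (x - y - h) 0) ∂α := by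
    rw [TF, TF, ← integral_sub (integrable_max_sub hi y) (integrable_max_sub hi (y + h))]
    congr 1 with x
    ring_nf
  constructor
  · rw [hTF, ← one_sub_cdf α (y + h)]
    have hind : ∫ x, (Ioi (y + h)).indicator (fun _ => h) x ∂α = (α (Ioi (y + h))).toReal * h := by
      rw [integral_indicator_const _ measurableSet_Ioi]
      simp [mul_comm, measureReal_def]
    rw [← hind]
    exact integral_mono ((integrable_const h).indicator measurableSet_Ioi) hint
      (fun x => clamp_lb hh)
  · rw [hTF, ← one_sub_cdf α y]
    have hind : ∫ x, (Ioi y).indicator (fun _ => h) x ∂α = (α (Ioi y)).toReal * h := by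
      rw [integral_indicator_const _ measurableSet_Ioi]
      simp [mul_comm, measureReal_def]
    rw [← hind]
    exact integral_mono hint ((integrable_const h).indicator measurableSet_Ioi)
      (fun x => clamp_ub hh)

lemma aux1 {A c h : ℝ} (hh : 0 < h) (hb : (1 - c) * h ≤ A) : 1 - A / h ≤ c := by
  have : (1 - c) ≤ A / h := (le_div_iff₀ hh).mpr hb
  linarith

lemma aux2 {A c h : ℝ} (hh : 0 < h) (hb : A ≤ (1 - c) * h) : c ≤ 1 - A / h := by
  have : A / h ≤ 1 - c := (div_le_iff₀ hh).mpr hb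
  linarith

lemma tendsto_cdf_of_tendsto_TF {αk : ℕ → Measure ℝ} {α : Measure ℝ}
    [∀ k, IsProbabilityMeasure (αk k)] [IsProbabilityMeasure α]
    (hik : ∀ k, Integrable (fun x => |x|) (αk k)) (hi : Integrable (fun x => |x|) α)
    (hT : ∀ y, Tendsto (fun k => TF (αk k) y) atTop (nhds (TF α y)))
    {y : ℝ} (hy : ContinuousAt (cdf α) y) :
    Tendsto (fun k => cdf (αk k) y) atTop (nhds (cdf α y)) := by
  rw [Metric.tendsto_nhds]
  intro ε hε
  obtain ⟨δ, hδ, hδ2⟩ := Metric.continuousAt_iff.mp hy (ε / 2) (by linarith)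
  set h := δ / 2 with hh
  have hhpos : 0 < h := by positivity
  have hFyp : cdf α (y + h) < cdf α y + ε / 2 := by
    have := hδ2 (show dist (y + h) y < δ by
      rw [Real.dist_eq]; rw [hh]; rw [abs_of_nonneg (by linarith)]; linarith)
    rw [Real.dist_eq, abs_sub_lt_iff] at this
    linarith [this.1]
  have hFym : cdf α y - ε / 2 < cdf α (y - h) := by
    have := hδ2 (show dist (y - h) y < δ by
      rw [Real.dist_eq]; rw [hh]; rw [abs_of_nonpos (by linarith)]; linarith)
    rw [Real.dist_eq, abs_sub_lt_iff] at this
    linarith [this.2]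
  -- upper bound
  have hub : ∀ᶠ k in atTop, cdf (αk k) y < cdf α y + ε := by
    have hconv : Tendsto (fun k => 1 - (TF (αk k) y - TF (αk k) (y + h)) / h) atTop
        (nhds (1 - (TF α y - TF α (y + h)) / h)) :=
      tendsto_const_nhds.sub (((hT y).sub (hT (y + h))).div_const h)
    have hlim : 1 - (TF α y - TF α (y + h)) / h < cdf α y + ε := by
      have hb := (TF_sub_bounds hi (y := y) hhpos).1
      have := aux1 hhpos hb
      linarith
    filter_upwards [hconv.eventually_lt_const hlim] with k hk
    have hbk := (TF_sub_bounds (hik k) (y := y) hhpos).2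
    have := aux2 hhpos hbk
    linarith
  -- lower bound
  have hlb : ∀ᶠ k in atTop, cdf α y - ε < cdf (αk k) y := by
    have hconv : Tendsto (fun k => 1 - (TF (αk k) (y - h) - TF (αk k) y) / h) atTop
        (nhds (1 - (TF α (y - h) - TF α y) / h)) :=
      tendsto_const_nhds.sub (((hT (y - h)).sub (hT y)).div_const h)
    have hlim : cdf α y - ε < 1 - (TF α (y - h) - TF α y) / h := by
      have hb := (TF_sub_bounds hi (y := y - h) hhpos).2
      rw [show y - h + h = y by ring] at hb
      have := aux2 hhpos hb
      linarith
    filter_upwards [hconv.eventually_const_lt hlim] with k hk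
    have hbk := (TF_sub_bounds (hik k) (y := y - h) hhpos).1
    rw [show y - h + h = y by ring] at hbk
    have := aux1 hhpos hbk
    linarith
  filter_upwards [hub, hlb] with k h1 h2
  rw [Real.dist_eq, abs_sub_lt_iff]
  constructor <;> linarith

lemma exists_continuousAt_cdf (α : Measure ℝ) {a b : ℝ} (hab : a < b) :
    ∃ x, x ∈ Ioo a b ∧ ContinuousAt (cdf α) x := by
  by_contra h
  push_neg at h
  have hsub : Ioo a b ⊆ {x | ¬ContinuousAt (cdf α) x} := fun x hx => h x hx
  have hc : (Ioo a b).Countable := Set.Countable.mono hsub (monotone_cdf α).countable_not_continuousAt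
  have h0 : volume (Ioo a b) = 0 := hc.measure_zero _
  rw [Real.volume_Ioo] at h0
  simp only [ENNReal.ofReal_eq_zero, sub_nonpos] at h0
  linarith

def Bad (α : Measure ℝ) : Set ℝ :=
  {t : ℝ | t ∈ Ioo (0:ℝ) 1 ∧ ∃ z, Q α t < z ∧ ∀ t' ∈ Ioo (0:ℝ) 1, t < t' → z ≤ Q α t'}

lemma countable_bad (α : Measure ℝ) : (Bad α).Countable := by
  set f : (Ioo (0:ℝ) 1) → ℝ := fun t => Q α t.1 with hf
  have hS := countable_image_lt_image_Ioi f
  have himg : Bad α ⊆ Subtype.val '' {x : (Ioo (0:ℝ) 1) | ∃ z, f x < z ∧ ∀ y, x < y → z ≤ f y} := by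
    rintro t ⟨htI, z, hz1, hz2⟩
    refine ⟨⟨t, htI⟩, ⟨z, hz1, ?_⟩, rfl⟩
    intro y hy
    exact hz2 y.1 y.2 hy
  exact Set.Countable.mono himg (hS.image _)

lemma tendsto_Q_of_cdf {αk : ℕ → Measure ℝ} {α : Measure ℝ}
    [∀ k, IsProbabilityMeasure (αk k)] [IsProbabilityMeasure α]
    (hcdf : ∀ x, ContinuousAt (cdf α) x →
      Tendsto (fun k => cdf (αk k) x) atTop (nhds (cdf α x)))
    {t : ℝ} (ht : t ∈ Ioo (0:ℝ) 1)
    (hreg : ∀ ε > (0:ℝ), ∃ t', t' ∈ Ioo (0:ℝ) 1 ∧ t < t' ∧ Q α t' < Q α t + ε) :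
    Tendsto (fun k => Q (αk k) t) atTop (nhds (Q α t)) := by
  rw [Metric.tendsto_nhds]
  intro ε hε
  -- upper bound
  have hub : ∀ᶠ k in atTop, Q (αk k) t < Q α t + ε := by
    obtain ⟨t', ht'I, htt', hQt'⟩ := hreg (ε / 2) (by linarith)
    obtain ⟨x, hxI, hxc⟩ := exists_continuousAt_cdf α (show Q α t' < Q α t + ε by linarith)
    have hFx : t < cdf α x := by
      have h1 : Q α t' ≤ x := hxI.1.le
      have h2 : t' ≤ cdf α x := (Q_le_iff α ht'I).mp h1
      linarith [ht'I.1, htt']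
    have := (hcdf x hxc).eventually_const_lt hFx
    filter_upwards [this] with k hk
    have : Q (αk k) t ≤ x := (Q_le_iff (αk k) ht).mpr hk.le
    exact lt_of_le_of_lt this hxI.2
  -- lower bound
  have hlb : ∀ᶠ k in atTop, Q α t - ε < Q (αk k) t := by
    obtain ⟨x, hxI, hxc⟩ := exists_continuousAt_cdf α
      (show Q α t - ε < Q α t by linarith)
    have hFx : cdf α x < t := by
      by_contra hc
      push_neg at hc
      have : Q α t ≤ x := (Q_le_iff α ht).mpr hc
      linarith [hxI.2]
    have := (hcdf x hxc).eventually_lt_const hFx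
    filter_upwards [this] with k hk
    have : ¬ Q (αk k) t ≤ x := by
      intro hle
      have := (Q_le_iff (αk k) ht).mp hle
      linarith
    push_neg at this
    linarith [hxI.1, this]
  filter_upwards [hub, hlb] with k h1 h2
  rw [Real.dist_eq, abs_sub_lt_iff]
  constructor <;> linarith

lemma ae_tendsto_Q {αk : ℕ → Measure ℝ} {α : Measure ℝ}
    [∀ k, IsProbabilityMeasure (αk k)] [IsProbabilityMeasure α]
    (hcdf : ∀ x, ContinuousAt (cdf α) x →
      Tendsto (fun k => cdf (αk k) x) atTop (nhds (cdf α x))) :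
    ∀ᵐ t ∂(volume.restrict (Ioo (0:ℝ) 1)),
      Tendsto (fun k => Q (αk k) t) atTop (nhds (Q α t)) := by
  have hB0 : (volume.restrict (Ioo (0:ℝ) 1)) (Bad α) = 0 :=
    le_antisymm (le_trans (Measure.restrict_le_self _) ((countable_bad α).measure_zero _).le)
      (by simp)
  have h0 : ∀ᵐ t ∂(volume.restrict (Ioo (0:ℝ) 1)), t ∉ Bad α := by
    rw [ae_iff]
    simpa using hB0
  have h1 : ∀ᵐ t ∂(volume.restrict (Ioo (0:ℝ) 1)), t ∈ Ioo (0:ℝ) 1 :=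
    ae_restrict_mem measurableSet_Ioo
  filter_upwards [h0, h1] with t htB htI
  refine tendsto_Q_of_cdf hcdf htI ?_
  intro ε hε
  by_contra hc
  push_neg at hc
  refine htB ⟨htI, Q α t + ε, by linarith, ?_⟩
  intro t' ht'I htt'
  exact hc t' ht'I htt'

lemma scheffe {X : Type*} [MeasurableSpace X] {m : Measure X}
    {q : ℕ → X → ℝ} {ql : X → ℝ}
    (hqi : ∀ k, Integrable (q k) m) (hqli : Integrable ql m)
    (hae : ∀ᵐ t ∂m, Tendsto (fun k => q k t) atTop (nhds (ql t)))
    (hnorm : Tendsto (fun k => ∫ t, |q k t| ∂m) atTop (nhds (∫ t, |ql t| ∂m))) :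
    Tendsto (fun k => ∫ t, |q k t - ql t| ∂m) atTop (nhds 0) := by
  set I : ℝ := ∫ t, |ql t| ∂m with hI
  set a : ℕ → ℝ := fun k => ∫ t, |q k t - ql t| ∂m with ha
  set b : ℕ → ℝ := fun k => ∫ t, (|q k t| + |ql t|) ∂m with hb
  set c : ℕ → ℝ := fun k => ∫ t, (|q k t| + |ql t| - |q k t - ql t|) ∂m with hc
  have hbk : ∀ k, b k = (∫ t, |q k t| ∂m) + I := fun k => integral_add (hqi k).abs hqli.abs
  have hbtend : Tendsto b atTop (nhds (2 * I)) := by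
    rw [show b = fun k => (∫ t, |q k t| ∂m) + I from funext hbk]
    have := hnorm.add_const I
    convert this using 2
    ring
  have hck : ∀ k, c k = b k - a k := fun k =>
    integral_sub ((hqi k).abs.add hqli.abs) ((hqi k).sub hqli).abs
  have hcnonneg : ∀ k t, (0:ℝ) ≤ |q k t| + |ql t| - |q k t - ql t| := by
    intro k t
    linarith [abs_sub (q k t) (ql t)]
  have hcint : ∀ k, Integrable (fun t => |q k t| + |ql t| - |q k t - ql t|) m :=
    fun k => ((hqi k).abs.add hqli.abs).sub ((hqi k).sub hqli).abs
  -- Fatou in ℝ≥0∞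
  have hmeas : ∀ k, AEMeasurable
      (fun t => ENNReal.ofReal (|q k t| + |ql t| - |q k t - ql t|)) m := fun k =>
    ENNReal.measurable_ofReal.comp_aemeasurable
      ((hcint k).aestronglyMeasurable.aemeasurable)
  have hfatou := lintegral_liminf_le' (u := atTop) hmeas
  have hliminf_ae : (fun t => liminf
        (fun k => ENNReal.ofReal (|q k t| + |ql t| - |q k t - ql t|)) atTop)
      =ᵐ[m] (fun t => ENNReal.ofReal (2 * |ql t|)) := by
    filter_upwards [hae] with t ht
    have h1 : Tendsto (fun k => |q k t|) atTop (nhds |ql t|) := ht.abs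
    have h2 : Tendsto (fun k => |q k t - ql t|) atTop (nhds 0) := by
      have := (ht.sub (tendsto_const_nhds (x := ql t))).abs
      simpa using this
    have h3 : Tendsto (fun k => |q k t| + |ql t| - |q k t - ql t|) atTop
        (nhds (2 * |ql t|)) := by
      have := (h1.add_const |ql t|).sub h2
      convert this using 2
      ring
    exact (ENNReal.tendsto_ofReal h3).liminf_eq
  rw [lintegral_congr_ae hliminf_ae] at hfatou
  have hlint : ∫⁻ t, ENNReal.ofReal (2 * |ql t|) ∂m = ENNReal.ofReal (2 * I) := by
    rw [← ofReal_integral_eq_lintegral_ofReal (hqli.abs.const_mul 2)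
      (Filter.Eventually.of_forall fun t => by positivity)]
    congr 1
    rw [hI, integral_const_mul]
  rw [hlint] at hfatou
  have hCk : ∀ k, (∫⁻ t, ENNReal.ofReal (|q k t| + |ql t| - |q k t - ql t|) ∂m)
      = ENNReal.ofReal (c k) := fun k =>
    (ofReal_integral_eq_lintegral_ofReal (hcint k)
      (Filter.Eventually.of_forall fun t => hcnonneg k t)).symm
  simp_rw [hCk] at hfatou
  -- conclude
  rw [Metric.tendsto_nhds]
  intro ε hε
  have hb2 : ∀ᶠ k in atTop, b k < 2 * I + ε / 4 := hbtend.eventually_lt_const (by linarith)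
  have hc2 : ∀ᶠ k in atTop, 2 * I - ε / 2 ≤ c k := by
    rcases le_or_gt (2 * I - ε / 2) 0 with h | h
    · filter_upwards with k
      exact le_trans h (integral_nonneg fun t => hcnonneg k t)
    · have hlt : ENNReal.ofReal (2 * I - ε / 2) < liminf (fun k => ENNReal.ofReal (c k)) atTop := by
        refine lt_of_lt_of_le ?_ hfatou
        rw [ENNReal.ofReal_lt_ofReal_iff (by linarith)]
        linarith
      filter_upwards [Filter.eventually_lt_of_lt_liminf hlt] with k hk
      have := (ENNReal.ofReal_lt_ofReal_iff_of_nonneg h.le).mp hk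
      linarith
  filter_upwards [hb2, hc2] with k h1 h2
  have hak : a k = b k - c k := by rw [hck k]; ring
  have hanneg : 0 ≤ a k := integral_nonneg fun t => abs_nonneg _
  rw [Real.dist_eq, sub_zero, abs_of_nonneg hanneg, hak]
  linarith

lemma pot_zero (β : Measure ℝ) : pot β 0 = ∫ x, |x| ∂β := by
  simp [pot]

lemma integrable_Q (β : Measure ℝ) [IsProbabilityMeasure β]
    (hi : Integrable (fun x => |x|) β) :
    Integrable (Q β) (volume.restrict (Ioo (0:ℝ) 1)) := by
  have h1 : Integrable (fun x : ℝ => x) ((volume.restrict (Ioo (0:ℝ) 1)).map (Q β)) := by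
    rw [map_Q β]
    exact integrable_id_of_abs hi
  exact (integrable_map_measure measurable_id.aestronglyMeasurable (aemeasurable_Q β)).mp h1

lemma integral_abs_Q (β : Measure ℝ) [IsProbabilityMeasure β] :
    ∫ t, |Q β t| ∂(volume.restrict (Ioo (0:ℝ) 1)) = ∫ x, |x| ∂β := by
  conv_rhs => rw [← map_Q β]
  rw [integral_map (aemeasurable_Q β) measurable_abs.aestronglyMeasurable]

lemma W1R_tendsto_zero {αk : ℕ → Measure ℝ} {α : Measure ℝ}
    [∀ k, IsProbabilityMeasure (αk k)] [IsProbabilityMeasure α]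
    (hik : ∀ k, Integrable (fun x => |x|) (αk k)) (hi : Integrable (fun x => |x|) α)
    (hmean : ∀ k, ∫ x, x ∂(αk k) = ∫ x, x ∂α)
    (hpot : ∀ y, Tendsto (fun k => pot (αk k) y) atTop (nhds (pot α y))) :
    Tendsto (fun k => W1R (αk k) α) atTop (nhds 0) := by
  have hT : ∀ y, Tendsto (fun k => TF (αk k) y) atTop (nhds (TF α y)) := by
    intro y
    have hk : ∀ k, TF (αk k) y = (pot (αk k) y - y + ∫ x, x ∂α) / 2 := fun k => by
      rw [TF_eq (hik k), hmean k]
    rw [show (fun k => TF (αk k) y) = fun k => (pot (αk k) y - y + ∫ x, x ∂α) / 2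
      from funext hk, TF_eq hi y]
    exact (((hpot y).sub_const y).add_const _).div_const 2
  have hcdf : ∀ x, ContinuousAt (cdf α) x →
      Tendsto (fun k => cdf (αk k) x) atTop (nhds (cdf α x)) :=
    fun x hx => tendsto_cdf_of_tendsto_TF hik hi hT hx
  have haeQ := ae_tendsto_Q (αk := αk) (α := α) hcdf
  have hnorm : Tendsto (fun k => ∫ t, |Q (αk k) t| ∂(volume.restrict (Ioo (0:ℝ) 1))) atTop
      (nhds (∫ t, |Q α t| ∂(volume.restrict (Ioo (0:ℝ) 1)))) := by
    rw [show (fun k => ∫ t, |Q (αk k) t| ∂(volume.restrict (Ioo (0:ℝ) 1)))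
        = fun k => pot (αk k) 0 from funext fun k => by rw [integral_abs_Q, pot_zero],
      integral_abs_Q, ← pot_zero]
    exact hpot 0
  have hconv := scheffe (fun k => integrable_Q _ (hik k)) (integrable_Q _ hi) haeQ hnorm
  have hmem : ∀ k, (∫ t, |Q (αk k) t - Q α t| ∂(volume.restrict (Ioo (0:ℝ) 1)))
      ∈ cset (αk k) α := by
    intro k
    have hpair : AEMeasurable (fun t => (Q (αk k) t, Q α t))
        (volume.restrict (Ioo (0:ℝ) 1)) :=
      (aemeasurable_Q _).prodMk (aemeasurable_Q _)
    refine ⟨(volume.restrict (Ioo (0:ℝ) 1)).map (fun t => (Q (αk k) t, Q α t)), ?_, ?_, ?_⟩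
    · rw [AEMeasurable.map_map_of_aemeasurable measurable_fst.aemeasurable hpair]
      exact map_Q _
    · rw [AEMeasurable.map_map_of_aemeasurable measurable_snd.aemeasurable hpair]
      exact map_Q _
    · rw [integral_map (f := fun p : ℝ × ℝ => |p.1 - p.2|) hpair ((continuous_fst.sub continuous_snd).abs.aestronglyMeasurable)]
  have hle : ∀ k, W1R (αk k) α ≤ ∫ t, |Q (αk k) t - Q α t| ∂(volume.restrict (Ioo (0:ℝ) 1)) :=
    fun k => csInf_le ⟨0, fun c hc => cset_nonneg hc⟩ (hmem k)
  exact squeeze_zero (fun k => W1R_nonneg _ _) hle hconv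

lemma tendsto_pot_of_W1R {αk : ℕ → Measure ℝ} {α : Measure ℝ}
    [∀ k, IsProbabilityMeasure (αk k)] [IsProbabilityMeasure α]
    (hik : ∀ k, Integrable (fun x => |x|) (αk k)) (hi : Integrable (fun x => |x|) α)
    (hW : Tendsto (fun k => W1R (αk k) α) atTop (nhds 0)) (y : ℝ) :
    Tendsto (fun k => pot (αk k) y) atTop (nhds (pot α y)) := by
  rw [tendsto_iff_norm_sub_tendsto_zero]
  refine squeeze_zero (fun k => norm_nonneg _) (fun k => ?_) hW
  rw [Real.norm_eq_abs]
  exact abs_pot_sub_le_W1R (hik k) hi y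

lemma sub_max_eq_min (a b c : ℝ) : a - max b c = min (a - b) (a - c) := by
  rcases le_total b c with h | h
  · rw [max_eq_right h, min_eq_right (by linarith)]
  · rw [max_eq_left h, min_eq_left (by linarith)]

end Wp

open Wp

/-- Continuity of the convex-order supremum and infimum (characterised via potential
functions) under `W_1`-convergence, for probability measures with common barycentre. -/
theorem stmt10 (μ ν : Measure ℝ) (μk νk σk ιk : ℕ → Measure ℝ) (σ ι : Measure ℝ) (m₁ : ℝ)
    [IsProbabilityMeasure μ] [IsProbabilityMeasure ν]
    [∀ k, IsProbabilityMeasure (μk k)] [∀ k, IsProbabilityMeasure (νk k)]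
    [IsProbabilityMeasure σ] [IsProbabilityMeasure ι]
    [∀ k, IsProbabilityMeasure (σk k)] [∀ k, IsProbabilityMeasure (ιk k)]
    (hμi : Integrable (fun x => |x|) μ) (hνi : Integrable (fun x => |x|) ν)
    (hμki : ∀ k, Integrable (fun x => |x|) (μk k))
    (hνki : ∀ k, Integrable (fun x => |x|) (νk k))
    (hbμ : ∫ x, x ∂μ = m₁) (hbν : ∫ x, x ∂ν = m₁)
    (hbμk : ∀ k, ∫ x, x ∂(μk k) = m₁) (hbνk : ∀ k, ∫ x, x ∂(νk k) = m₁)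
    (hWμ : Filter.Tendsto (fun k => W1R (μk k) μ) Filter.atTop (nhds 0))
    (hWν : Filter.Tendsto (fun k => W1R (νk k) ν) Filter.atTop (nhds 0))
    (hσk : ∀ k y, pot (σk k) y = max (pot (μk k) y) (pot (νk k) y))
    (hσ : ∀ y, pot σ y = max (pot μ y) (pot ν y))
    (hιk : ∀ k y, pot (ιk k) y = coFun (fun z => min (pot (μk k) z) (pot (νk k) z)) y)
    (hι : ∀ y, pot ι y = coFun (fun z => min (pot μ z) (pot ν z)) y) :
    Filter.Tendsto (fun k => W1R (σk k) σ) Filter.atTop (nhds 0) ∧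
      Filter.Tendsto (fun k => W1R (ιk k) ι) Filter.atTop (nhds 0) := by
  -- pointwise convergence of the potentials of μk and νk
  have hpotμ : ∀ y, Tendsto (fun k => pot (μk k) y) atTop (nhds (pot μ y)) :=
    tendsto_pot_of_W1R hμki hμi hWμ
  have hpotν : ∀ y, Tendsto (fun k => pot (νk k) y) atTop (nhds (pot ν y)) :=
    tendsto_pot_of_W1R hνki hνi hWν
  -- Jensen lower bounds
  have hJμ : ∀ z, |z - m₁| ≤ pot μ z := fun z => by
    simpa [hbμ] using abs_sub_mean_le_pot hμi z
  have hJν : ∀ z, |z - m₁| ≤ pot ν z := fun z => by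
    simpa [hbν] using abs_sub_mean_le_pot hνi z
  have hJμk : ∀ k z, |z - m₁| ≤ pot (μk k) z := fun k z => by
    simpa [hbμk k] using abs_sub_mean_le_pot (hμki k) z
  have hJνk : ∀ k z, |z - m₁| ≤ pot (νk k) z := fun k z => by
    simpa [hbνk k] using abs_sub_mean_le_pot (hνki k) z
  constructor
  · -- the supremum part
    have hσi : Integrable (fun x => |x|) σ := by
      refine integrable_abs_of_pot_ne_zero (y := m₁ + 1) ?_
      have h1 : (1:ℝ) ≤ pot σ (m₁ + 1) := by
        rw [hσ]
        refine le_trans ?_ (le_max_left _ _)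
        simpa using hJμ (m₁ + 1)
      linarith
    have hσki : ∀ k, Integrable (fun x => |x|) (σk k) := by
      intro k
      refine integrable_abs_of_pot_ne_zero (y := m₁ + 1) ?_
      have h1 : (1:ℝ) ≤ pot (σk k) (m₁ + 1) := by
        rw [hσk]
        refine le_trans ?_ (le_max_left _ _)
        simpa using hJμk k (m₁ + 1)
      linarith
    have hmσ : ∫ x, x ∂σ = m₁ := by
      refine tendsto_nhds_unique (tendsto_nat_sub_pot hσi) ?_
      have heq : (fun n : ℕ => (n:ℝ) - pot σ n)
          = fun n : ℕ => min ((n:ℝ) - pot μ n) ((n:ℝ) - pot ν n) :=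
        funext fun n => by rw [hσ, sub_max_eq_min]
      rw [heq]
      have h1 := tendsto_nat_sub_pot hμi; rw [hbμ] at h1
      have h2 := tendsto_nat_sub_pot hνi; rw [hbν] at h2
      simpa using h1.min h2
    have hmσk : ∀ k, ∫ x, x ∂(σk k) = m₁ := by
      intro k
      refine tendsto_nhds_unique (tendsto_nat_sub_pot (hσki k)) ?_
      have heq : (fun n : ℕ => (n:ℝ) - pot (σk k) n)
          = fun n : ℕ => min ((n:ℝ) - pot (μk k) n) ((n:ℝ) - pot (νk k) n) :=
        funext fun n => by rw [hσk, sub_max_eq_min]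
      rw [heq]
      have h1 := tendsto_nat_sub_pot (hμki k); rw [hbμk k] at h1
      have h2 := tendsto_nat_sub_pot (hνki k); rw [hbνk k] at h2
      simpa using h1.min h2
    have hpotσ : ∀ y, Tendsto (fun k => pot (σk k) y) atTop (nhds (pot σ y)) := by
      intro y
      have heq : (fun k => pot (σk k) y)
          = fun k => max (pot (μk k) y) (pot (νk k) y) := funext fun k => hσk k y
      rw [heq, hσ]
      exact (hpotμ y).max (hpotν y)
    exact W1R_tendsto_zero hσki hσi (fun k => by rw [hmσk k, hmσ]) hpotσ
  · -- the infimum part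
    have hg0 : ∀ z, |z - m₁| ≤ min (pot μ z) (pot ν z) := fun z => le_min (hJμ z) (hJν z)
    have hg0k : ∀ k z, |z - m₁| ≤ min (pot (μk k) z) (pot (νk k) z) :=
      fun k z => le_min (hJμk k z) (hJνk k z)
    have hιlow : ∀ y, |y - m₁| ≤ pot ι y := fun y => by
      rw [hι]; exact le_coFun (convexOn_abs_sub m₁) hg0 y
    have hιup : ∀ y, pot ι y ≤ min (pot μ y) (pot ν y) := fun y => by
      rw [hι]; exact coFun_le ⟨_, convexOn_abs_sub m₁, hg0⟩ y
    have hιklow : ∀ k y, |y - m₁| ≤ pot (ιk k) y := fun k y => by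
      rw [hιk]; exact le_coFun (convexOn_abs_sub m₁) (hg0k k) y
    have hιkup : ∀ k y, pot (ιk k) y ≤ min (pot (μk k) y) (pot (νk k) y) := fun k y => by
      rw [hιk]; exact coFun_le ⟨_, convexOn_abs_sub m₁, hg0k k⟩ y
    have hιi : Integrable (fun x => |x|) ι := by
      refine integrable_abs_of_pot_ne_zero (y := m₁ + 1) ?_
      have h1 : (1:ℝ) ≤ pot ι (m₁ + 1) := by simpa using hιlow (m₁ + 1)
      linarith
    have hιki : ∀ k, Integrable (fun x => |x|) (ιk k) := by
      intro k
      refine integrable_abs_of_pot_ne_zero (y := m₁ + 1) ?_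
      have h1 : (1:ℝ) ≤ pot (ιk k) (m₁ + 1) := by simpa using hιklow k (m₁ + 1)
      linarith
    -- means via squeeze
    have hmean_aux : ∀ (β : Measure ℝ) (_ : IsProbabilityMeasure β)
        (_ : Integrable (fun x => |x|) β)
        (_ : ∀ y, |y - m₁| ≤ pot β y)
        (lo : ℕ → ℝ) (_ : Tendsto lo atTop (nhds m₁))
        (_ : ∀ n : ℕ, lo n ≤ (n:ℝ) - pot β n), ∫ x, x ∂β = m₁ := by
      intro β hβ hβi hlow lo hlo hle
      refine tendsto_nhds_unique (tendsto_nat_sub_pot hβi) ?_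
      refine tendsto_of_tendsto_of_tendsto_of_le_of_le hlo tendsto_const_nhds hle ?_
      intro n
      show (n:ℝ) - pot β n ≤ m₁
      have := hlow (n : ℝ)
      have h2 : (n:ℝ) - m₁ ≤ |(n:ℝ) - m₁| := le_abs_self _
      linarith
    have hmι : ∫ x, x ∂ι = m₁ := by
      refine hmean_aux ι inferInstance hιi hιlow
        (fun n => max ((n:ℝ) - pot μ n) ((n:ℝ) - pot ν n)) ?_ ?_
      · have h1 := tendsto_nat_sub_pot hμi; rw [hbμ] at h1
        have h2 := tendsto_nat_sub_pot hνi; rw [hbν] at h2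
        simpa using h1.max h2
      · intro n
        have := hιup (n : ℝ)
        rcases le_total (pot μ (n:ℝ)) (pot ν (n:ℝ)) with h | h
        · rw [min_eq_left h] at this
          refine max_le (by linarith) (by linarith)
        · rw [min_eq_right h] at this
          refine max_le (by linarith) (by linarith)
    have hmιk : ∀ k, ∫ x, x ∂(ιk k) = m₁ := by
      intro k
      refine hmean_aux (ιk k) inferInstance (hιki k) (hιklow k)
        (fun n => max ((n:ℝ) - pot (μk k) n) ((n:ℝ) - pot (νk k) n)) ?_ ?_
      · have h1 := tendsto_nat_sub_pot (hμki k); rw [hbμk k] at h1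
        have h2 := tendsto_nat_sub_pot (hνki k); rw [hbνk k] at h2
        simpa using h1.max h2
      · intro n
        have := hιkup k (n : ℝ)
        rcases le_total (pot (μk k) (n:ℝ)) (pot (νk k) (n:ℝ)) with h | h
        · rw [min_eq_left h] at this
          refine max_le (by linarith) (by linarith)
        · rw [min_eq_right h] at this
          refine max_le (by linarith) (by linarith)
    -- potential convergence
    have hpotι : ∀ y, Tendsto (fun k => pot (ιk k) y) atTop (nhds (pot ι y)) := by
      intro y
      rw [tendsto_iff_norm_sub_tendsto_zero]
      have hεt : Tendsto (fun k => W1R (μk k) μ + W1R (νk k) ν) atTop (nhds 0) := by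
        simpa using hWμ.add hWν
      refine squeeze_zero (fun k => norm_nonneg _) (fun k => ?_) hεt
      set ε := W1R (μk k) μ + W1R (νk k) ν with hε
      have hε0 : 0 ≤ ε := add_nonneg (W1R_nonneg _ _) (W1R_nonneg _ _)
      have hbμ' : ∀ z, |pot (μk k) z - pot μ z| ≤ ε := fun z =>
        le_trans (abs_pot_sub_le_W1R (hμki k) hμi z) (by
          have := W1R_nonneg (νk k) ν; rw [hε]; linarith)
      have hbν' : ∀ z, |pot (νk k) z - pot ν z| ≤ ε := fun z =>
        le_trans (abs_pot_sub_le_W1R (hνki k) hνi z) (by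
          have := W1R_nonneg (μk k) μ; rw [hε]; linarith)
      have hup : pot (ιk k) y ≤ pot ι y + ε := by
        rw [hιk, hι]
        refine coFun_le_coFun_add ⟨_, convexOn_abs_sub m₁, hg0k k⟩ (fun z => ?_) y
        have h1 := abs_le.mp (hbμ' z)
        have h2 := abs_le.mp (hbν' z)
        have : min (pot (μk k) z) (pot (νk k) z) ≤ min (pot μ z + ε) (pot ν z + ε) :=
          min_le_min (by linarith [h1.2]) (by linarith [h2.2])
        rw [min_add_add_right] at this
        exact this
      have hdown : pot ι y ≤ pot (ιk k) y + ε := by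
        rw [hιk, hι]
        refine coFun_le_coFun_add ⟨_, convexOn_abs_sub m₁, hg0⟩ (fun z => ?_) y
        have h1 := abs_le.mp (hbμ' z)
        have h2 := abs_le.mp (hbν' z)
        have : min (pot μ z) (pot ν z) ≤ min (pot (μk k) z + ε) (pot (νk k) z + ε) :=
          min_le_min (by linarith [h1.1]) (by linarith [h2.1])
        rw [min_add_add_right] at this
        exact this
      rw [Real.norm_eq_abs, abs_le]
      constructor <;> linarith
    exact W1R_tendsto_zero hιki hιi (fun k => by rw [hmιk k, hmι]) hpotι
end

section
/- Let r ≥ 1 and μ be a finite positive measure on ℝ^d with finite r-th moment and barycentre m₁ (mean of μ normalized appropriately; for finite measures interpret m₁ = (1/μ(ℝ^d))∫x dμ, or take μ a probability measure). For α ≥ 0 let μ^α be the pushforward of μ under y ↦ α(y - m₁) + m₁. Then for all α, β ≥ 0, W_r(μ^α, μ^β) = |β - α| (∫ |x - m₁|^r dμ(x))^{1/r}. -/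
open MeasureTheory
open scoped ENNReal NNReal

section Aux

variable {d : ℕ} {r : ℝ}

local notation "X" => EuclideanSpace ℝ (Fin d)

lemma ofReal_norm_eq_coe_nnnorm {E : Type*} [SeminormedAddCommGroup E] (a : E) :
    ENNReal.ofReal ‖a‖ = (‖a‖₊ : ℝ≥0∞) :=
  ofReal_norm a

private lemma meas_g (m₁ : X) (r : ℝ) :
    Measurable (fun x : X => (‖x - m₁‖₊ : ℝ≥0∞) ^ r) := by
  fun_prop

/-- marginal computation -/
private lemma marg_aux (hr0 : 0 ≤ r) (μ : Measure X) (m₁ : X) {γ : ℝ} (hγ : 0 ≤ γ)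
    (π : Measure (X × X)) (f : X × X → X) (hf : Measurable f)
    (hmarg : π.map f = μ.map (fun y => γ • (y - m₁) + m₁)) :
    ∫⁻ p, (‖f p - m₁‖₊ : ℝ≥0∞) ^ r ∂π
      = ENNReal.ofReal γ ^ r * ∫⁻ y, (‖y - m₁‖₊ : ℝ≥0∞) ^ r ∂μ := by
  have hg := meas_g m₁ r
  have hT : Measurable (fun y : X => γ • (y - m₁) + m₁) := by fun_prop
  calc ∫⁻ p, (‖f p - m₁‖₊ : ℝ≥0∞) ^ r ∂π
      = ∫⁻ x, (‖x - m₁‖₊ : ℝ≥0∞) ^ r ∂(π.map f) := (lintegral_map hg hf).symm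
    _ = ∫⁻ y, (‖(γ • (y - m₁) + m₁) - m₁‖₊ : ℝ≥0∞) ^ r ∂μ := by
        rw [hmarg, lintegral_map hg hT]
    _ = ∫⁻ y, ENNReal.ofReal γ ^ r * (‖y - m₁‖₊ : ℝ≥0∞) ^ r ∂μ := by
        refine lintegral_congr fun y => ?_
        rw [add_sub_cancel_right, nnnorm_smul, ENNReal.coe_mul,
          ENNReal.mul_rpow_of_nonneg _ _ hr0, ← enorm_eq_nnnorm γ, Real.enorm_eq_ofReal hγ]
    _ = _ := lintegral_const_mul _ hg

private lemma two_rpow_bound (hr0 : 0 ≤ r) (a b : ℝ≥0∞) :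
    (a + b) ^ r ≤ (2:ℝ≥0∞) ^ r * (a ^ r + b ^ r) := by
  have h1 : a + b ≤ 2 * max a b := by
    rw [two_mul]
    exact add_le_add (le_max_left a b) (le_max_right a b)
  calc (a + b) ^ r ≤ (2 * max a b) ^ r := ENNReal.rpow_le_rpow h1 hr0
    _ = (2:ℝ≥0∞) ^ r * (max a b) ^ r := ENNReal.mul_rpow_of_nonneg _ _ hr0
    _ ≤ (2:ℝ≥0∞) ^ r * (a ^ r + b ^ r) := by
        gcongr
        rcases le_total a b with h | h
        · rw [max_eq_right h]; exact le_add_self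
        · rw [max_eq_left h]; exact self_le_add_right _ _

/-- Minkowski step: `A^{1/r} ≤ C^{1/r} + B^{1/r}` for a coupling. -/
private lemma mink_aux (hr : 1 ≤ r) (π : Measure (X × X)) (m₁ : X) :
    (∫⁻ p : X × X, (‖p.1 - m₁‖₊ : ℝ≥0∞) ^ r ∂π) ^ (1/r)
      ≤ (∫⁻ p : X × X, (‖p.1 - p.2‖₊ : ℝ≥0∞) ^ r ∂π) ^ (1/r)
        + (∫⁻ p : X × X, (‖p.2 - m₁‖₊ : ℝ≥0∞) ^ r ∂π) ^ (1/r) := by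
  have hr0 : (0:ℝ) ≤ r := le_trans zero_le_one hr
  have hf : Measurable (fun p : X × X => (‖p.1 - p.2‖₊ : ℝ≥0∞)) := by fun_prop
  have hg : Measurable (fun p : X × X => (‖p.2 - m₁‖₊ : ℝ≥0∞)) := by fun_prop
  have key := ENNReal.lintegral_Lp_add_le (μ := π) hf.aemeasurable hg.aemeasurable hr
  refine le_trans (le_trans ?_ key) le_rfl
  refine ENNReal.rpow_le_rpow (lintegral_mono fun p => ?_) (by positivity)
  refine ENNReal.rpow_le_rpow ?_ hr0
  have := norm_sub_le_norm_sub_add_norm_sub p.1 p.2 m₁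
  simp only [Pi.add_apply]
  rw [← ofReal_norm_eq_coe_nnnorm, ← ofReal_norm_eq_coe_nnnorm, ← ofReal_norm_eq_coe_nnnorm,
    ← ENNReal.ofReal_add (norm_nonneg _) (norm_nonneg _)]
  exact ENNReal.ofReal_le_ofReal this

end Aux

/-- For the dilations `μ^α` of `μ` about its barycentre `m₁`,
`W_r(μ^α, μ^β) = |β - α| (∫ |x - m₁|^r dμ)^{1/r}`. -/
theorem stmt12 {d : ℕ} (r : ℝ) (hr : 1 ≤ r)
    (μ : Measure (EuclideanSpace ℝ (Fin d))) [IsProbabilityMeasure μ]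
    (hmom : Integrable (fun x => ‖x‖ ^ r) μ)
    (m₁ : EuclideanSpace ℝ (Fin d)) (hm : ∫ x, x ∂μ = m₁)
    (α β : ℝ) (hα : 0 ≤ α) (hβ : 0 ≤ β) :
    (WrRpow r (μ.map (fun y => α • (y - m₁) + m₁))
        (μ.map (fun y => β • (y - m₁) + m₁))) ^ (1 / r)
      = |β - α| * (∫ x, ‖x - m₁‖ ^ r ∂μ) ^ (1 / r) := by
  have hr0 : (0:ℝ) ≤ r := le_trans zero_le_one hr
  have hrne : r ≠ 0 := by linarith
  set I : ℝ := ∫ x, ‖x - m₁‖ ^ r ∂μ with hIdef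
  have hI0 : 0 ≤ I := integral_nonneg fun x => by positivity
  -- integrability of x ↦ ‖x - m₁‖ ^ r
  have hcont : Continuous fun x : EuclideanSpace ℝ (Fin d) => ‖x - m₁‖ ^ r :=
    ((continuous_id.sub continuous_const).norm).rpow_const (fun x => Or.inr hr0)
  have hI : Integrable (fun x => ‖x - m₁‖ ^ r) μ := by
    refine ((hmom.const_mul ((2:ℝ)^r)).add (integrable_const ((2:ℝ)^r * ‖m₁‖^r))).mono'
      hcont.aestronglyMeasurable ?_
    filter_upwards with x
    have h2 : ‖x - m₁‖ ^ r ≤ (‖x‖ + ‖m₁‖) ^ r :=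
      Real.rpow_le_rpow (norm_nonneg _) (norm_sub_le x m₁) hr0
    have h3 : (‖x‖ + ‖m₁‖) ^ r ≤ (2 * max ‖x‖ ‖m₁‖) ^ r := by
      refine Real.rpow_le_rpow (by positivity) ?_ hr0
      have := le_max_left ‖x‖ ‖m₁‖
      have := le_max_right ‖x‖ ‖m₁‖
      linarith
    have h4 : (2 * max ‖x‖ ‖m₁‖) ^ r = 2 ^ r * (max ‖x‖ ‖m₁‖) ^ r :=
      Real.mul_rpow (by norm_num) (le_max_of_le_left (norm_nonneg _))
    have h5 : (max ‖x‖ ‖m₁‖) ^ r ≤ ‖x‖ ^ r + ‖m₁‖ ^ r := by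
      rcases le_total ‖x‖ ‖m₁‖ with h | h
      · rw [max_eq_right h]
        have : (0:ℝ) ≤ ‖x‖ ^ r := by positivity
        linarith
      · rw [max_eq_left h]
        have : (0:ℝ) ≤ ‖m₁‖ ^ r := by positivity
        linarith
    have hnn : (0:ℝ) ≤ (2:ℝ)^r := by positivity
    rw [Real.norm_of_nonneg (by positivity)]
    simp only [Pi.add_apply]
    calc ‖x - m₁‖ ^ r ≤ 2 ^ r * (max ‖x‖ ‖m₁‖) ^ r := by rw [← h4]; linarith
      _ ≤ 2 ^ r * (‖x‖ ^ r + ‖m₁‖ ^ r) := by nlinarith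
      _ = 2 ^ r * ‖x‖ ^ r + 2 ^ r * ‖m₁‖ ^ r := by ring
  set J : ℝ≥0∞ := ∫⁻ y, (‖y - m₁‖₊ : ℝ≥0∞) ^ r ∂μ with hJdef
  have hJ : ENNReal.ofReal I = J := by
    rw [hIdef, ofReal_integral_eq_lintegral_ofReal hI
      (Filter.Eventually.of_forall fun x => by positivity), hJdef]
    refine lintegral_congr fun y => ?_
    rw [← ofReal_norm_eq_coe_nnnorm, ENNReal.ofReal_rpow_of_nonneg (norm_nonneg _) hr0]
  have hJfin : J ≠ ⊤ := by rw [← hJ]; exact ENNReal.ofReal_ne_top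
  -- the transport maps
  have hTmeas : ∀ γ : ℝ, Measurable
      (fun y : EuclideanSpace ℝ (Fin d) => γ • (y - m₁) + m₁) := fun γ => by fun_prop
  have hcost : Continuous fun p : EuclideanSpace ℝ (Fin d) × EuclideanSpace ℝ (Fin d) =>
      dist p.1 p.2 ^ r :=
    (continuous_fst.dist continuous_snd).rpow_const fun _ => Or.inr hr0
  set S : Set ℝ := {c : ℝ | ∃ π : Measure (EuclideanSpace ℝ (Fin d) × EuclideanSpace ℝ (Fin d)),
    π.map Prod.fst = μ.map (fun y => α • (y - m₁) + m₁) ∧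
    π.map Prod.snd = μ.map (fun y => β • (y - m₁) + m₁) ∧
    c = ∫ p, dist p.1 p.2 ^ r ∂π} with hSdef
  -- membership
  have hmem : |β - α| ^ r * I ∈ S := by
    refine ⟨μ.map (fun y => (α • (y - m₁) + m₁, β • (y - m₁) + m₁)), ?_, ?_, ?_⟩
    · rw [Measure.map_map measurable_fst ((hTmeas α).prodMk (hTmeas β))]; rfl
    · rw [Measure.map_map measurable_snd ((hTmeas α).prodMk (hTmeas β))]; rfl
    · rw [integral_map ((hTmeas α).prodMk (hTmeas β)).aemeasurable
        hcost.aestronglyMeasurable]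
      have : ∀ y : EuclideanSpace ℝ (Fin d),
          dist (α • (y - m₁) + m₁) (β • (y - m₁) + m₁) ^ r = |β - α| ^ r * ‖y - m₁‖ ^ r := by
        intro y
        rw [dist_eq_norm]
        have : (α • (y - m₁) + m₁) - (β • (y - m₁) + m₁) = (α - β) • (y - m₁) := by
          rw [sub_smul]; abel
        rw [this, norm_smul, Real.norm_eq_abs,
          Real.mul_rpow (abs_nonneg _) (norm_nonneg _), abs_sub_comm]
      simp_rw [this]
      rw [integral_const_mul]
  -- lower bound
  have hlb : ∀ c ∈ S, |β - α| ^ r * I ≤ c := by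
    rintro c ⟨π, hfstm, hsndm, rfl⟩
    have hAm := marg_aux hr0 μ m₁ hα π Prod.fst measurable_fst hfstm
    have hBm := marg_aux hr0 μ m₁ hβ π Prod.snd measurable_snd hsndm
    set C : ℝ≥0∞ := ∫⁻ p, (‖p.1 - p.2‖₊ : ℝ≥0∞) ^ r ∂π with hCdef
    have hfC : Measurable (fun p : EuclideanSpace ℝ (Fin d) × EuclideanSpace ℝ (Fin d) =>
        (‖p.1 - p.2‖₊ : ℝ≥0∞) ^ r) := by fun_prop
    have hfA : Measurable (fun p : EuclideanSpace ℝ (Fin d) × EuclideanSpace ℝ (Fin d) =>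
        (‖p.1 - m₁‖₊ : ℝ≥0∞) ^ r) := by fun_prop
    have hfB : Measurable (fun p : EuclideanSpace ℝ (Fin d) × EuclideanSpace ℝ (Fin d) =>
        (‖p.2 - m₁‖₊ : ℝ≥0∞) ^ r) := by fun_prop
    -- C is finite
    have hCfin : C ≠ ⊤ := by
      have hb : C ≤ (2:ℝ≥0∞) ^ r *
          (ENNReal.ofReal α ^ r * J + ENNReal.ofReal β ^ r * J) := by
        rw [← hAm, ← hBm, ← lintegral_add_left hfA, ← lintegral_const_mul _ (by fun_prop)]
        refine lintegral_mono fun p => ?_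
        have htri : (‖p.1 - p.2‖₊ : ℝ≥0∞) ≤ (‖p.1 - m₁‖₊ : ℝ≥0∞) + (‖p.2 - m₁‖₊ : ℝ≥0∞) := by
          have := norm_sub_le_norm_sub_add_norm_sub p.1 m₁ p.2
          rw [← ofReal_norm_eq_coe_nnnorm, ← ofReal_norm_eq_coe_nnnorm,
            ← ofReal_norm_eq_coe_nnnorm, ← ENNReal.ofReal_add (norm_nonneg _) (norm_nonneg _)]
          refine ENNReal.ofReal_le_ofReal ?_
          rw [norm_sub_rev p.2 m₁]
          exact this
        calc (‖p.1 - p.2‖₊ : ℝ≥0∞) ^ r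
            ≤ ((‖p.1 - m₁‖₊ : ℝ≥0∞) + (‖p.2 - m₁‖₊ : ℝ≥0∞)) ^ r :=
              ENNReal.rpow_le_rpow htri hr0
          _ ≤ (2:ℝ≥0∞) ^ r * ((‖p.1 - m₁‖₊ : ℝ≥0∞) ^ r + (‖p.2 - m₁‖₊ : ℝ≥0∞) ^ r) :=
              two_rpow_bound hr0 _ _
      refine ne_top_of_le_ne_top ?_ hb
      have h2 : (2:ℝ≥0∞) ^ r ≠ ⊤ :=
        (ENNReal.rpow_lt_top_of_nonneg hr0 (by norm_num)).ne
      have hα' : ENNReal.ofReal α ^ r ≠ ⊤ :=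
        (ENNReal.rpow_lt_top_of_nonneg hr0 ENNReal.ofReal_ne_top).ne
      have hβ' : ENNReal.ofReal β ^ r ≠ ⊤ :=
        (ENNReal.rpow_lt_top_of_nonneg hr0 ENNReal.ofReal_ne_top).ne
      exact ENNReal.mul_ne_top h2
        (ENNReal.add_ne_top.2 ⟨ENNReal.mul_ne_top hα' hJfin, ENNReal.mul_ne_top hβ' hJfin⟩)
    -- the real integral equals C
    have hofC : ∫⁻ p, ENNReal.ofReal (dist p.1 p.2 ^ r) ∂π = C := by
      refine lintegral_congr fun p => ?_
      rw [dist_eq_norm, ← ENNReal.ofReal_rpow_of_nonneg (norm_nonneg _) hr0,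
        ofReal_norm_eq_coe_nnnorm]
    have hint : Integrable (fun p => dist p.1 p.2 ^ r) π := by
      refine ⟨hcost.aestronglyMeasurable, ?_⟩
      rw [hasFiniteIntegral_iff_norm]
      have : ∫⁻ p, ENNReal.ofReal ‖dist p.1 p.2 ^ r‖ ∂π = C := by
        rw [← hofC]
        exact lintegral_congr fun p => by rw [Real.norm_of_nonneg (by positivity)]
      rw [this]
      exact hCfin.lt_top
    have hofc : ENNReal.ofReal (∫ p, dist p.1 p.2 ^ r ∂π) = C := by
      rw [ofReal_integral_eq_lintegral_ofReal hint
        (Filter.Eventually.of_forall fun p => by positivity), hofC]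
    -- Minkowski both ways
    set J' : ℝ≥0∞ := J ^ (1/r) with hJ'def
    have hJ'fin : J' ≠ ⊤ := by
      rw [hJ'def]
      exact (ENNReal.rpow_lt_top_of_nonneg (by positivity) hJfin).ne
    have hsimp : ∀ γ : ℝ, 0 ≤ γ → (ENNReal.ofReal γ ^ r * J) ^ (1/r)
        = ENNReal.ofReal γ * J' := by
      intro γ hγ
      rw [ENNReal.mul_rpow_of_nonneg _ _ (by positivity), ← ENNReal.rpow_mul,
        mul_one_div_cancel hrne, ENNReal.rpow_one, hJ'def]
    have hm1 : ENNReal.ofReal α * J' ≤ C ^ (1/r) + ENNReal.ofReal β * J' := by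
      have := mink_aux hr π m₁
      rw [hAm, hBm, hsimp α hα, hsimp β hβ, ← hCdef] at this
      exact this
    have hm2 : ENNReal.ofReal β * J' ≤ C ^ (1/r) + ENNReal.ofReal α * J' := by
      have hswap : (Measure.map (fun p : EuclideanSpace ℝ (Fin d) ×
          EuclideanSpace ℝ (Fin d) => (p.2, p.1)) π).map Prod.fst
            = μ.map (fun y => β • (y - m₁) + m₁) := by
        rw [Measure.map_map measurable_fst (measurable_snd.prodMk measurable_fst)]
        exact hsndm
      have hswap2 : (Measure.map (fun p : EuclideanSpace ℝ (Fin d) ×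
          EuclideanSpace ℝ (Fin d) => (p.2, p.1)) π).map Prod.snd
            = μ.map (fun y => α • (y - m₁) + m₁) := by
        rw [Measure.map_map measurable_snd (measurable_snd.prodMk measurable_fst)]
        exact hfstm
      have hAm' := marg_aux hr0 μ m₁ hβ _ Prod.fst measurable_fst hswap
      have hBm' := marg_aux hr0 μ m₁ hα _ Prod.snd measurable_snd hswap2
      have := mink_aux hr (Measure.map (fun p : EuclideanSpace ℝ (Fin d) ×
          EuclideanSpace ℝ (Fin d) => (p.2, p.1)) π) m₁
      rw [hAm', hBm', hsimp β hβ, hsimp α hα] at this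
      have hCswap : ∫⁻ p : EuclideanSpace ℝ (Fin d) × EuclideanSpace ℝ (Fin d),
          (‖p.1 - p.2‖₊ : ℝ≥0∞) ^ r
          ∂(Measure.map (fun p : EuclideanSpace ℝ (Fin d) ×
            EuclideanSpace ℝ (Fin d) => (p.2, p.1)) π) = C := by
        rw [lintegral_map hfC (measurable_snd.prodMk measurable_fst), hCdef]
        refine lintegral_congr fun p => ?_
        show (‖p.2 - p.1‖₊ : ℝ≥0∞) ^ r = (‖p.1 - p.2‖₊ : ℝ≥0∞) ^ r
        rw [← neg_sub p.1 p.2, nnnorm_neg]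
      rw [hCswap] at this
      exact this
    have hkey : ENNReal.ofReal |β - α| * J' ≤ C ^ (1/r) := by
      rcases le_total α β with h | h
      · rw [abs_of_nonneg (by linarith), ENNReal.ofReal_sub _ hα, ENNReal.sub_mul
          (fun _ _ => hJ'fin)]
        exact tsub_le_iff_right.2 hm2
      · rw [abs_of_nonpos (by linarith), neg_sub, ENNReal.ofReal_sub _ hβ, ENNReal.sub_mul
          (fun _ _ => hJ'fin)]
        exact tsub_le_iff_right.2 hm1
    -- raise to the power r
    have hCge : ENNReal.ofReal (|β - α| ^ r * I) ≤ C := by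
      have := ENNReal.rpow_le_rpow hkey hr0
      rw [← ENNReal.rpow_mul, one_div_mul_cancel hrne, ENNReal.rpow_one,
        ENNReal.mul_rpow_of_nonneg _ _ hr0, hJ'def, ← ENNReal.rpow_mul,
        one_div_mul_cancel hrne, ENNReal.rpow_one] at this
      calc ENNReal.ofReal (|β - α| ^ r * I)
          = ENNReal.ofReal (|β - α| ^ r) * ENNReal.ofReal I :=
            ENNReal.ofReal_mul (by positivity)
        _ = ENNReal.ofReal |β - α| ^ r * J := by
            rw [hJ, ENNReal.ofReal_rpow_of_nonneg (abs_nonneg _) hr0]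
        _ ≤ C := this
    rw [← hofc] at hCge
    exact (ENNReal.ofReal_le_ofReal_iff (integral_nonneg fun p => by positivity)).1 hCge
  -- conclude
  have hsInf : WrRpow r (μ.map (fun y => α • (y - m₁) + m₁))
      (μ.map (fun y => β • (y - m₁) + m₁)) = |β - α| ^ r * I := by
    rw [WrRpow]
    exact le_antisymm (csInf_le ⟨_, hlb⟩ hmem) (le_csInf ⟨_, hmem⟩ hlb)
  rw [hsInf, Real.mul_rpow (by positivity) hI0, ← Real.rpow_mul (abs_nonneg _),
    mul_one_div_cancel hrne, Real.rpow_one]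
end

section
/- Let μ be a probability measure on ℝ^d with finite first moment and barycentre m₁, and for α ≥ 0 let μ^α be the pushforward of μ under y ↦ α(y - m₁) + m₁. Then (μ^α)_{α ≥ 0} is a peacock: for 0 ≤ α ≤ β, μ^α ≤_c μ^β in the convex order. -/
open MeasureTheory

/-- The dilations `(μ^α)_{α ≥ 0}` of a probability measure about its barycentre form a
peacock: `μ^α ≤_c μ^β` for `0 ≤ α ≤ β`. -/
theorem stmt13 {d : ℕ} (μ : Measure (EuclideanSpace ℝ (Fin d))) [IsProbabilityMeasure μ]
    (hμi : Integrable (fun x => ‖x‖) μ)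
    (m₁ : EuclideanSpace ℝ (Fin d)) (hm : ∫ x, x ∂μ = m₁)
    (α β : ℝ) (h0 : 0 ≤ α) (hαβ : α ≤ β) :
    ∀ f : EuclideanSpace ℝ (Fin d) → ℝ, ConvexOn ℝ Set.univ f →
      Integrable f (μ.map (fun y => α • (y - m₁) + m₁)) →
      Integrable f (μ.map (fun y => β • (y - m₁) + m₁)) →
      ∫ x, f x ∂(μ.map (fun y => α • (y - m₁) + m₁))
        ≤ ∫ x, f x ∂(μ.map (fun y => β • (y - m₁) + m₁)) := by
  intro f hf hfα hfβ
  -- f is continuous since it's convex on univ in a finite-dimensional space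
  have hfc : Continuous f := by
    have := hf.continuousOn isOpen_univ
    rwa [← continuousOn_univ]
  -- the maps are measurable
  have hTα : Measurable (fun y : EuclideanSpace ℝ (Fin d) => α • (y - m₁) + m₁) := by
    fun_prop
  have hTβ : Measurable (fun y : EuclideanSpace ℝ (Fin d) => β • (y - m₁) + m₁) := by
    fun_prop
  rw [integral_map hTα.aemeasurable hfc.aestronglyMeasurable,
    integral_map hTβ.aemeasurable hfc.aestronglyMeasurable]
  have hfα' : Integrable (fun y => f (α • (y - m₁) + m₁)) μ := by
    rwa [integrable_map_measure hfc.aestronglyMeasurable hTα.aemeasurable] at hfα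
  have hfβ' : Integrable (fun y => f (β • (y - m₁) + m₁)) μ := by
    rwa [integrable_map_measure hfc.aestronglyMeasurable hTβ.aemeasurable] at hfβ
  rcases eq_or_lt_of_le (h0.trans hαβ) with hβ0 | hβ0
  · -- β = 0, hence α = 0
    have hα0 : α = 0 := le_antisymm (hαβ.trans hβ0.symm.le) h0
    simp [hα0, ← hβ0]
  -- β > 0
  have hμid : Integrable (fun x : EuclideanSpace ℝ (Fin d) => x) μ :=
    ⟨aestronglyMeasurable_id, by simpa [HasFiniteIntegral] using hμi.hasFiniteIntegral⟩
  -- barycentre of the β-dilation is m₁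
  have hbar : ∫ y, (β • (y - m₁) + m₁) ∂μ = m₁ := by
    have h1 : Integrable (fun y : EuclideanSpace ℝ (Fin d) => β • (y - m₁)) μ :=
      ((hμid.sub (integrable_const m₁)).smul β)
    rw [integral_add h1 (integrable_const m₁), integral_smul,
      integral_sub hμid (integrable_const m₁), integral_const]
    simp [hm]
  -- Jensen: f m₁ ≤ ∫ f(β • (y - m₁) + m₁) dμ
  have hJ : f m₁ ≤ ∫ y, f (β • (y - m₁) + m₁) ∂μ := by
    have := hf.map_integral_le (hfc.continuousOn) isClosed_univ
      (Filter.Eventually.of_forall fun x => Set.mem_univ _)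
      ((hμid.sub (integrable_const m₁)).smul β |>.add (integrable_const m₁)) hfβ'
    simpa [hbar, Function.comp] using this
  set t : ℝ := α / β with ht
  have ht0 : 0 ≤ t := div_nonneg h0 hβ0.le
  have ht1 : t ≤ 1 := (div_le_one hβ0).mpr hαβ
  -- pointwise convexity estimate
  have hpt : ∀ y, f (α • (y - m₁) + m₁)
      ≤ t * f (β • (y - m₁) + m₁) + (1 - t) * f m₁ := by
    intro y
    have key : α • (y - m₁) + m₁ = t • (β • (y - m₁) + m₁) + (1 - t) • m₁ := by
      rw [smul_add, smul_smul, div_mul_cancel₀ _ hβ0.ne']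
      module
    rw [key]
    exact hf.2 (Set.mem_univ _) (Set.mem_univ _) ht0 (by linarith) (by ring)
  calc ∫ y, f (α • (y - m₁) + m₁) ∂μ
      ≤ ∫ y, (t * f (β • (y - m₁) + m₁) + (1 - t) * f m₁) ∂μ :=
        integral_mono hfα' ((hfβ'.const_mul t).add (integrable_const _)) hpt
    _ = t * ∫ y, f (β • (y - m₁) + m₁) ∂μ + (1 - t) * f m₁ := by
        rw [integral_add (hfβ'.const_mul t) (integrable_const _), integral_const_mul,
          integral_const]
        simp
    _ ≤ t * ∫ y, f (β • (y - m₁) + m₁) ∂μ + (1 - t) * ∫ y, f (β • (y - m₁) + m₁) ∂μ := by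
        nlinarith [hJ]
    _ = ∫ y, f (β • (y - m₁) + m₁) ∂μ := by ring
end

section
/- Let X, Y be Polish spaces, r ≥ 1, and μ^k, ν^k, μ, ν probability measures (μ's on X, ν's on Y) with finite r-th moments such that W_r(μ^k, μ) → 0 and W_r(ν^k, ν) → 0. For any coupling π ∈ Π(μ, ν), the couplings π^k defined by gluing W_r-optimal couplings η^k ∈ Π(μ^k, μ) and τ^k ∈ Π(ν, ν^k) with π, i.e. π^k(dx^k, dy^k) = ∫ η^k(dx^k, dx) π_x(dy) τ^k_y(dy^k), satisfy π^k ∈ Π(μ^k, ν^k) and W_r^r(π, π^k) ≤ W_r^r(μ, μ^k) + W_r^r(ν, ν^k) when X×Y carries the metric ((x,y),(x',y')) ↦ (d_X(x,x')^r + d_Y(y,y')^r)^{1/r}. -/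
open MeasureTheory ProbabilityTheory

section helpers
variable {α β γ : Type*} [MeasurableSpace α] [MeasurableSpace β] [MeasurableSpace γ]

lemma my_map_bind {m : Measure α} {f : α → Measure β} {g : β → γ}
    (hf : Measurable f) (hg : Measurable g) :
    (m.bind f).map g = m.bind fun a => (f a).map g := by
  have hdg : Measurable fun x : β => Measure.dirac (g x) := Measure.measurable_dirac.comp hg
  rw [← Measure.bind_dirac_eq_map _ hg, Measure.bind_bind hf.aemeasurable hdg.aemeasurable]
  congr 1
  funext a
  rw [Measure.bind_dirac_eq_map _ hg]

lemma my_bind_map {m : Measure α} {f : β → Measure γ} {g : α → β}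
    (hf : Measurable f) (hg : Measurable g) :
    (m.map g).bind f = m.bind fun a => f (g a) := by
  have hdg : Measurable fun x : α => Measure.dirac (g x) := Measure.measurable_dirac.comp hg
  rw [← Measure.bind_dirac_eq_map _ hg, Measure.bind_bind hdg.aemeasurable hf.aemeasurable]
  congr 1
  funext a
  rw [Measure.dirac_bind hf]

lemma my_measurable_map_prodMk (κ : Kernel α β) [IsSFiniteKernel κ] :
    Measurable fun a => (κ a).map (Prod.mk a) := by
  apply Measure.measurable_of_measurable_coe
  intro s hs
  simp_rw [Measure.map_apply measurable_prodMk_left hs]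
  exact Kernel.measurable_kernel_prodMk_left hs

lemma my_compProd_eq_bind (μ : Measure α) [SFinite μ] (κ : Kernel α β) [IsSFiniteKernel κ] :
    μ ⊗ₘ κ = μ.bind fun a => (κ a).map (Prod.mk a) := by
  ext s hs
  rw [Measure.compProd_apply hs, Measure.bind_apply hs (my_measurable_map_prodMk κ).aemeasurable]
  exact lintegral_congr fun a => (Measure.map_apply measurable_prodMk_left hs).symm

lemma my_isProbabilityMeasure_bind {m : Measure α} [IsProbabilityMeasure m]
    {f : α → Measure β} (hf : Measurable f) (h : ∀ a, IsProbabilityMeasure (f a)) :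
    IsProbabilityMeasure (m.bind f) := by
  constructor
  rw [Measure.bind_apply MeasurableSet.univ hf.aemeasurable]
  simp [measure_univ]

/-- Integrability of `dist^r` under a coupling, from integrability of moments of marginals. -/
lemma my_integrable_dist_rpow {Z : Type*} [MetricSpace Z] [MeasurableSpace Z]
    [OpensMeasurableSpace Z] [SecondCountableTopology Z] {r : ℝ} (hr0 : 0 ≤ r) (z₀ : Z) (E : Measure (Z × Z))
    (h1 : Integrable (fun z => dist z z₀ ^ r) (E.map Prod.fst))
    (h2 : Integrable (fun z => dist z z₀ ^ r) (E.map Prod.snd)) :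
    Integrable (fun q : Z × Z => dist q.1 q.2 ^ r) E := by
  have hcont : Continuous fun z : Z => dist z z₀ ^ r :=
    (continuous_id.dist continuous_const).rpow_const fun _ => Or.inr hr0
  have hA : Integrable (fun q : Z × Z => dist q.1 z₀ ^ r) E :=
    (integrable_map_measure hcont.aestronglyMeasurable measurable_fst.aemeasurable).mp h1
  have hB : Integrable (fun q : Z × Z => dist q.2 z₀ ^ r) E :=
    (integrable_map_measure hcont.aestronglyMeasurable measurable_snd.aemeasurable).mp h2
  refine Integrable.mono' ((hA.add hB).const_mul ((2:ℝ) ^ r)) ?_ (Filter.Eventually.of_forall ?_)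
  · exact ((continuous_fst.dist continuous_snd).rpow_const fun _ => Or.inr hr0).aestronglyMeasurable
  · intro q
    have ha : (0:ℝ) ≤ dist q.1 z₀ := dist_nonneg
    have hb : (0:ℝ) ≤ dist q.2 z₀ := dist_nonneg
    rw [Real.norm_eq_abs, abs_of_nonneg (Real.rpow_nonneg dist_nonneg r)]
    have h1' : dist q.1 q.2 ≤ 2 * max (dist q.1 z₀) (dist q.2 z₀) := by
      calc dist q.1 q.2 ≤ dist q.1 z₀ + dist z₀ q.2 := dist_triangle _ _ _
        _ = dist q.1 z₀ + dist q.2 z₀ := by rw [dist_comm z₀ q.2]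
        _ ≤ max (dist q.1 z₀) (dist q.2 z₀) + max (dist q.1 z₀) (dist q.2 z₀) :=
            add_le_add (le_max_left _ _) (le_max_right _ _)
        _ = 2 * max (dist q.1 z₀) (dist q.2 z₀) := (two_mul _).symm
    have h2' : dist q.1 q.2 ^ r ≤ (2 * max (dist q.1 z₀) (dist q.2 z₀)) ^ r :=
      Real.rpow_le_rpow dist_nonneg h1' hr0
    have h3' : (2 * max (dist q.1 z₀) (dist q.2 z₀)) ^ r
        = 2 ^ r * (max (dist q.1 z₀) (dist q.2 z₀)) ^ r :=
      Real.mul_rpow (by norm_num) (le_max_of_le_left ha)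
    have h4' : (max (dist q.1 z₀) (dist q.2 z₀)) ^ r ≤ dist q.1 z₀ ^ r + dist q.2 z₀ ^ r := by
      rcases le_total (dist q.1 z₀) (dist q.2 z₀) with h | h
      · rw [max_eq_right h]; exact le_add_of_nonneg_left (Real.rpow_nonneg ha r)
      · rw [max_eq_left h]; exact le_add_of_nonneg_right (Real.rpow_nonneg hb r)
    calc dist q.1 q.2 ^ r ≤ 2 ^ r * (max (dist q.1 z₀) (dist q.2 z₀)) ^ r := h3' ▸ h2'
      _ ≤ 2 ^ r * (dist q.1 z₀ ^ r + dist q.2 z₀ ^ r) :=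
          mul_le_mul_of_nonneg_left h4' (Real.rpow_nonneg (by norm_num) r)

end helpers

open MeasureTheory

lemma WrRpow_symm {X : Type*} [MetricSpace X] [MeasurableSpace X] [OpensMeasurableSpace X]
    [SecondCountableTopology X]
    {r : ℝ} (hr0 : 0 ≤ r) (μ ν : Measure X) : WrRpow r μ ν = WrRpow r ν μ := by
  have hcont : Continuous fun p : X × X => dist p.1 p.2 ^ r :=
    (continuous_fst.dist continuous_snd).rpow_const fun _ => Or.inr hr0
  have key : ∀ a b : Measure X,
      {c : ℝ | ∃ π : Measure (X × X), π.map Prod.fst = a ∧ π.map Prod.snd = b ∧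
        c = ∫ p, dist p.1 p.2 ^ r ∂π} ⊆
      {c : ℝ | ∃ π : Measure (X × X), π.map Prod.fst = b ∧ π.map Prod.snd = a ∧
        c = ∫ p, dist p.1 p.2 ^ r ∂π} := by
    rintro a b c ⟨p, h1, h2, rfl⟩
    refine ⟨p.map Prod.swap, ?_, ?_, ?_⟩
    · rw [Measure.map_map measurable_fst measurable_swap]
      exact h2
    · rw [Measure.map_map measurable_snd measurable_swap]
      exact h1
    · rw [integral_map measurable_swap.aemeasurable hcont.aestronglyMeasurable]
      exact integral_congr_ae (Filter.Eventually.of_forall fun q => by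
        simp only [Prod.fst_swap, Prod.snd_swap, Function.comp]
        rw [dist_comm])
  unfold WrRpow
  rw [Set.Subset.antisymm (key μ ν) (key ν μ)]

/-- Stability of couplings: the couplings `π^k` obtained by gluing `W_r`-optimal
couplings `η^k ∈ Π(μ^k, μ)` and `τ^k ∈ Π(ν, ν^k)` with `π ∈ Π(μ, ν)` are couplings of
`μ^k` and `ν^k` satisfying `W_r^r(π, π^k) ≤ W_r^r(μ, μ^k) + W_r^r(ν, ν^k)` for the
product metric `(d_X^r + d_Y^r)^{1/r}` on `X × Y`. -/
theorem stmt15 {X Y : Type*}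
    [MetricSpace X] [CompleteSpace X] [SecondCountableTopology X]
    [MeasurableSpace X] [BorelSpace X]
    [MetricSpace Y] [CompleteSpace Y] [SecondCountableTopology Y]
    [MeasurableSpace Y] [BorelSpace Y] [Nonempty Y]
    (r : ℝ) (hr : 1 ≤ r) (x₀ : X) (y₀ : Y)
    (μ : Measure X) (ν : Measure Y) (μk : ℕ → Measure X) (νk : ℕ → Measure Y)
    [IsProbabilityMeasure μ] [IsProbabilityMeasure ν]
    [∀ k, IsProbabilityMeasure (μk k)] [∀ k, IsProbabilityMeasure (νk k)]
    (hmomμ : Integrable (fun x => dist x x₀ ^ r) μ)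
    (hmomν : Integrable (fun y => dist y y₀ ^ r) ν)
    (hmomμk : ∀ k, Integrable (fun x => dist x x₀ ^ r) (μk k))
    (hmomνk : ∀ k, Integrable (fun y => dist y y₀ ^ r) (νk k))
    (hWμ : Filter.Tendsto (fun k => WrRpow r (μk k) μ) Filter.atTop (nhds 0))
    (hWν : Filter.Tendsto (fun k => WrRpow r (νk k) ν) Filter.atTop (nhds 0))
    (π : Measure (X × Y)) [IsProbabilityMeasure π]
    (hπ1 : π.map Prod.fst = μ) (hπ2 : π.map Prod.snd = ν)
    (η : ℕ → Measure (X × X)) [∀ k, IsFiniteMeasure (η k)]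
    (hη1 : ∀ k, (η k).map Prod.fst = μk k) (hη2 : ∀ k, (η k).map Prod.snd = μ)
    (hηopt : ∀ k, ∫ p, dist p.1 p.2 ^ r ∂(η k) = WrRpow r (μk k) μ)
    (τ : ℕ → Measure (Y × Y)) [∀ k, IsFiniteMeasure (τ k)]
    (hτ1 : ∀ k, (τ k).map Prod.fst = ν) (hτ2 : ∀ k, (τ k).map Prod.snd = νk k)
    (hτopt : ∀ k, ∫ p, dist p.1 p.2 ^ r ∂(τ k) = WrRpow r ν (νk k)) :
    ∀ k, letI πk : Measure (X × Y) :=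
        (η k).bind (fun q : X × X =>
          (π.condKernel q.2).bind (fun y : Y =>
            ((τ k).condKernel y).map (fun yk : Y => (q.1, yk))))
      (πk.map Prod.fst = μk k ∧ πk.map Prod.snd = νk k) ∧
        sInf {c : ℝ | ∃ ρ : Measure ((X × Y) × (X × Y)),
            ρ.map Prod.fst = π ∧ ρ.map Prod.snd = πk ∧
            c = ∫ q, (dist q.1.1 q.2.1 ^ r + dist q.1.2 q.2.2 ^ r) ∂ρ}
          ≤ WrRpow r μ (μk k) + WrRpow r ν (νk k) := by
  intro k
  have hr0 : (0:ℝ) ≤ r := le_trans zero_le_one hr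
  set E := η k with hE
  set T := τ k with hT
  -- the building blocks
  set gB : Y → Measure (Y × Y) := fun y => (T.condKernel y).map (Prod.mk y) with hgBdef
  have hgB : Measurable gB := my_measurable_map_prodMk T.condKernel
  have hgBP : ∀ y, IsProbabilityMeasure (gB y) :=
    fun y => Measure.isProbabilityMeasure_map measurable_prodMk_left.aemeasurable
  set gA : X → Measure (Y × Y) := fun x => (π.condKernel x).bind gB with hgAdef
  have hgA : Measurable gA := (Measure.measurable_bind' hgB).comp (Kernel.measurable _)
  have hgAP : ∀ x, IsProbabilityMeasure (gA x) :=
    fun x => my_isProbabilityMeasure_bind hgB hgBP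
  set KA : Kernel (X × X) (Y × Y) := ⟨fun q => gA q.2, hgA.comp measurable_snd⟩ with hKAdef
  haveI : IsMarkovKernel KA := ⟨fun q => hgAP q.2⟩
  have hKA : ∀ q : X × X, KA q = gA q.2 := fun _ => rfl
  set Θ : (X × X) → Measure ((X × X) × (Y × Y)) := fun q => (KA q).map (Prod.mk q) with hΘdef
  have hΘ : Measurable Θ := my_measurable_map_prodMk KA
  set M : Measure ((X × X) × (Y × Y)) := E.bind Θ with hMdef
  -- first marginal of M is E
  have hM1 : M.map Prod.fst = E := by
    rw [hMdef, my_map_bind hΘ measurable_fst]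
    have h : ∀ q : X × X, (Θ q).map Prod.fst = Measure.dirac q := by
      intro q
      rw [hΘdef]
      rw [Measure.map_map measurable_fst measurable_prodMk_left]
      have h1 : (Prod.fst ∘ Prod.mk q : Y × Y → X × X) = fun _ => q := rfl
      rw [h1, Measure.map_const, measure_univ, one_smul]
    simp_rw [h]
    exact Measure.bind_dirac
  -- μ.bind (condKernel π) = ν
  have hbindπ : μ.bind (fun x => π.condKernel x) = ν := by
    have h := π.disintegrate π.condKernel
    have hfst : π.fst = μ := hπ1
    rw [hfst, my_compProd_eq_bind μ π.condKernel] at h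
    have h2 := congrArg (fun m : Measure (X × Y) => m.map Prod.snd) h
    rw [my_map_bind (my_measurable_map_prodMk π.condKernel) measurable_snd] at h2
    rw [hπ2] at h2
    rw [← h2]
    congr 1
    funext x
    rw [Measure.map_map measurable_snd measurable_prodMk_left]
    have : (Prod.snd ∘ Prod.mk x : Y → Y) = id := rfl
    rw [this, Measure.map_id]
  -- second marginal of M is T
  have hM2 : M.map Prod.snd = T := by
    rw [hMdef, my_map_bind hΘ measurable_snd]
    have h : ∀ q : X × X, (Θ q).map Prod.snd = gA q.2 := by
      intro q
      rw [hΘdef]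
      rw [Measure.map_map measurable_snd measurable_prodMk_left, hKA]
      have : (Prod.snd ∘ Prod.mk q : Y × Y → Y × Y) = id := rfl
      rw [this, Measure.map_id]
    simp_rw [h]
    have h2 : E.bind (fun q : X × X => gA q.2) = (E.map Prod.snd).bind gA :=
      (my_bind_map hgA measurable_snd).symm
    rw [h2, hη2 k, hgAdef]
    rw [← Measure.bind_bind (Kernel.measurable _).aemeasurable hgB.aemeasurable, hbindπ]
    have h3 : ν.bind gB = ν ⊗ₘ T.condKernel := (my_compProd_eq_bind ν T.condKernel).symm
    rw [h3]
    have hfst : T.fst = ν := hτ1 k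
    rw [← hfst]
    exact T.disintegrate T.condKernel
  -- the measure πk as a map of M
  have hgA_map2 : ∀ (c : X) (x : X),
      (gA x).map (fun v : Y × Y => (c, v.2)) =
        (π.condKernel x).bind (fun y => (T.condKernel y).map (fun yk => (c, yk))) := by
    intro c x
    rw [hgAdef]
    have hm : Measurable fun v : Y × Y => (c, v.2) := measurable_const.prodMk measurable_snd
    rw [my_map_bind hgB hm]
    congr 1
    funext y
    rw [hgBdef]
    rw [Measure.map_map hm measurable_prodMk_left]
    rfl
  have hψ : Measurable fun w : (X × X) × (Y × Y) => (w.1.1, w.2.2) :=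
    measurable_fst.fst.prodMk measurable_snd.snd
  have hπk : (E.bind (fun q : X × X =>
      (π.condKernel q.2).bind (fun y : Y =>
        (T.condKernel y).map (fun yk : Y => (q.1, yk))))) =
      M.map (fun w : (X × X) × (Y × Y) => (w.1.1, w.2.2)) := by
    rw [hMdef, my_map_bind hΘ hψ]
    congr 1
    funext q
    rw [hΘdef, Measure.map_map hψ measurable_prodMk_left, hKA]
    have : ((fun w : (X × X) × (Y × Y) => (w.1.1, w.2.2)) ∘ Prod.mk q) =
        fun v : Y × Y => (q.1, v.2) := rfl
    rw [this, hgA_map2 q.1 q.2]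
  -- map lemma for the first component of ρ
  have hgA_map1 : ∀ x : X, (gA x).map (fun v : Y × Y => (x, v.1)) =
      (π.condKernel x).map (Prod.mk x) := by
    intro x
    rw [hgAdef]
    have hm : Measurable fun v : Y × Y => (x, v.1) := measurable_const.prodMk measurable_fst
    rw [my_map_bind hgB hm]
    have h : ∀ y : Y, (gB y).map (fun v : Y × Y => (x, v.1)) = Measure.dirac (x, y) := by
      intro y
      rw [hgBdef]
      rw [Measure.map_map hm measurable_prodMk_left]
      have : ((fun v : Y × Y => (x, v.1)) ∘ Prod.mk y : Y → X × Y) = fun _ => (x, y) := rfl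
      rw [this, Measure.map_const, measure_univ, one_smul]
    simp_rw [h]
    exact Measure.bind_dirac_eq_map _ measurable_prodMk_left
  -- the coupling ρ between π and πk
  set φ : (X × X) × (Y × Y) → (X × Y) × (X × Y) :=
    fun w => ((w.1.2, w.2.1), (w.1.1, w.2.2)) with hφdef
  have hφ : Measurable φ :=
    ((measurable_fst.snd.prodMk measurable_snd.fst).prodMk
      (measurable_fst.fst.prodMk measurable_snd.snd))
  set ρ : Measure ((X × Y) × (X × Y)) := M.map φ with hρdef
  have hρ1 : ρ.map Prod.fst = π := by
    rw [hρdef, Measure.map_map measurable_fst hφ]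
    have h0 : (Prod.fst ∘ φ) = fun w : (X × X) × (Y × Y) => (w.1.2, w.2.1) := rfl
    rw [h0]
    have hm : Measurable fun w : (X × X) × (Y × Y) => (w.1.2, w.2.1) :=
      measurable_fst.snd.prodMk measurable_snd.fst
    rw [hMdef, my_map_bind hΘ hm]
    have h : ∀ q : X × X, (Θ q).map (fun w : (X × X) × (Y × Y) => (w.1.2, w.2.1)) =
        (π.condKernel q.2).map (Prod.mk q.2) := by
      intro q
      rw [hΘdef, Measure.map_map hm measurable_prodMk_left, hKA]
      have : ((fun w : (X × X) × (Y × Y) => (w.1.2, w.2.1)) ∘ Prod.mk q) =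
          fun v : Y × Y => (q.2, v.1) := rfl
      rw [this]
      exact hgA_map1 q.2
    simp_rw [h]
    have h2 : E.bind (fun q : X × X => (π.condKernel q.2).map (Prod.mk q.2)) =
        (E.map Prod.snd).bind (fun x => (π.condKernel x).map (Prod.mk x)) :=
      (my_bind_map (my_measurable_map_prodMk π.condKernel) measurable_snd).symm
    rw [h2, hη2 k, ← my_compProd_eq_bind μ π.condKernel]
    have hfst : π.fst = μ := hπ1
    rw [← hfst]
    exact π.disintegrate π.condKernel
  -- integrability of the cost pieces
  have hcontX : Continuous fun q : X × X => dist q.1 q.2 ^ r :=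
    (continuous_fst.dist continuous_snd).rpow_const fun _ => Or.inr hr0
  have hcontY : Continuous fun q : Y × Y => dist q.1 q.2 ^ r :=
    (continuous_fst.dist continuous_snd).rpow_const fun _ => Or.inr hr0
  have hEint : Integrable (fun q : X × X => dist q.1 q.2 ^ r) E := by
    refine my_integrable_dist_rpow hr0 x₀ E ?_ ?_
    · rw [hη1 k]; exact hmomμk k
    · rw [hη2 k]; exact hmomμ
  have hTint : Integrable (fun q : Y × Y => dist q.1 q.2 ^ r) T := by
    refine my_integrable_dist_rpow hr0 y₀ T ?_ ?_
    · rw [hτ1 k]; exact hmomν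
    · rw [hτ2 k]; exact hmomνk k
  have hIf : Integrable (fun w : (X × X) × (Y × Y) => dist w.1.2 w.1.1 ^ r) M := by
    have hEint' : Integrable (fun q : X × X => dist q.2 q.1 ^ r) E := by
      have : (fun q : X × X => dist q.2 q.1 ^ r) = fun q : X × X => dist q.1 q.2 ^ r := by
        funext q; rw [dist_comm]
      rw [this]; exact hEint
    rw [← hM1] at hEint'
    have hc : Continuous fun q : X × X => dist q.2 q.1 ^ r :=
      (continuous_snd.dist continuous_fst).rpow_const fun _ => Or.inr hr0
    exact (integrable_map_measure hc.aestronglyMeasurable measurable_fst.aemeasurable).mp hEint'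
  have hIg : Integrable (fun w : (X × X) × (Y × Y) => dist w.2.1 w.2.2 ^ r) M := by
    have hTint' := hTint
    rw [← hM2] at hTint'
    exact (integrable_map_measure hcontY.aestronglyMeasurable
      measurable_snd.aemeasurable).mp hTint'
  -- value of the cost
  have hcost : WrRpow r μ (μk k) + WrRpow r ν (νk k) =
      ∫ q, (dist q.1.1 q.2.1 ^ r + dist q.1.2 q.2.2 ^ r) ∂ρ := by
    have hcont2 : Continuous fun q : (X × Y) × (X × Y) =>
        dist q.1.1 q.2.1 ^ r + dist q.1.2 q.2.2 ^ r :=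
      ((continuous_fst.fst.dist continuous_snd.fst).rpow_const fun _ => Or.inr hr0).add
        ((continuous_fst.snd.dist continuous_snd.snd).rpow_const fun _ => Or.inr hr0)
    rw [hρdef, integral_map hφ.aemeasurable hcont2.aestronglyMeasurable]
    have hcomp : (fun w : (X × X) × (Y × Y) =>
        dist (φ w).1.1 (φ w).2.1 ^ r + dist (φ w).1.2 (φ w).2.2 ^ r) =
        fun w => dist w.1.2 w.1.1 ^ r + dist w.2.1 w.2.2 ^ r := rfl
    show _ = ∫ w : (X × X) × (Y × Y), (dist w.1.2 w.1.1 ^ r + dist w.2.1 w.2.2 ^ r) ∂M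
    rw [integral_add hIf hIg]
    have e1 : ∫ w : (X × X) × (Y × Y), dist w.1.2 w.1.1 ^ r ∂M = WrRpow r μ (μk k) := by
      have hc : Continuous fun q : X × X => dist q.2 q.1 ^ r :=
        (continuous_snd.dist continuous_fst).rpow_const fun _ => Or.inr hr0
      have := integral_map (μ := M) measurable_fst.aemeasurable
        (f := fun q : X × X => dist q.2 q.1 ^ r) hc.aestronglyMeasurable
      rw [hM1] at this
      rw [← this]
      have : (fun q : X × X => dist q.2 q.1 ^ r) = fun q : X × X => dist q.1 q.2 ^ r := by
        funext q; rw [dist_comm]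
      rw [this, hηopt k, WrRpow_symm hr0]
    have e2 : ∫ w : (X × X) × (Y × Y), dist w.2.1 w.2.2 ^ r ∂M = WrRpow r ν (νk k) := by
      have := integral_map (μ := M) measurable_snd.aemeasurable
        (f := fun q : Y × Y => dist q.1 q.2 ^ r) hcontY.aestronglyMeasurable
      rw [hM2] at this
      rw [← this, hτopt k]
    rw [e1, e2]
  refine ⟨⟨?_, ?_⟩, ?_⟩
  · -- first marginal of πk
    show (E.bind (fun q : X × X =>
      (π.condKernel q.2).bind (fun y : Y =>
        (T.condKernel y).map (fun yk : Y => (q.1, yk))))).map Prod.fst = μk k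
    rw [hπk, Measure.map_map measurable_fst hψ]
    rw [show (Prod.fst ∘ fun w : (X × X) × (Y × Y) => (w.1.1, w.2.2))
        = Prod.fst ∘ (Prod.fst : (X × X) × (Y × Y) → X × X) from rfl]
    rw [← Measure.map_map measurable_fst measurable_fst, hM1, hE, hη1 k]
  · -- second marginal of πk
    show (E.bind (fun q : X × X =>
      (π.condKernel q.2).bind (fun y : Y =>
        (T.condKernel y).map (fun yk : Y => (q.1, yk))))).map Prod.snd = νk k
    rw [hπk, Measure.map_map measurable_snd hψ]
    rw [show (Prod.snd ∘ fun w : (X × X) × (Y × Y) => (w.1.1, w.2.2))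
        = Prod.snd ∘ (Prod.snd : (X × X) × (Y × Y) → Y × Y) from rfl]
    rw [← Measure.map_map measurable_snd measurable_snd, hM2, hT, hτ2 k]
  · -- the Wasserstein estimate
    have hρ2 : ρ.map Prod.snd = E.bind (fun q : X × X =>
        (π.condKernel q.2).bind (fun y : Y =>
          (T.condKernel y).map (fun yk : Y => (q.1, yk)))) := by
      rw [hρdef, Measure.map_map measurable_snd hφ]
      rw [show (Prod.snd ∘ φ) = fun w : (X × X) × (Y × Y) => (w.1.1, w.2.2) from rfl]
      exact hπk.symm
    refine csInf_le ⟨0, ?_⟩ ⟨ρ, hρ1, hρ2, hcost⟩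
    rintro c ⟨ρ', -, -, rfl⟩
    exact integral_nonneg fun q => add_nonneg (Real.rpow_nonneg dist_nonneg r)
      (Real.rpow_nonneg dist_nonneg r)
end

section
/- Let X, Y be Polish spaces and m₀ > 0. For finite positive measures π, π' on X×Y with common mass m₀ and finite r-th moments, the adapted Wasserstein distance AW_r(π, π') = inf over χ ∈ Π(μ, μ') of ( ∫ (d_X(x,x')^r + W_r^r(π_x, π'_{x'})) dχ )^{1/r} satisfies AW_r(π, π') = W_r(J(π), J(π')), where J(π)(dx, dp) = μ(dx) δ_{π_x}(dp) is the canonical embedding into measures on X × P(Y), and X × P_r(Y) carries the metric ((x,p),(x',p')) ↦ (d_X(x,x')^r + W_r^r(p, p'))^{1/r}. -/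
open MeasureTheory MeasurableSpace ProbabilityTheory

/-- The canonical embedding `J(π)(dx,dp) = μ(dx) δ_{π_x}(dp)` of a measure on `X × Y`
into the measures on `X × P(Y)`. -/
noncomputable def Jembed {X Y : Type*}
    [MeasurableSpace X]
    [MetricSpace Y] [CompleteSpace Y] [SecondCountableTopology Y]
    [MeasurableSpace Y] [BorelSpace Y] [Nonempty Y]
    (π : Measure (X × Y)) [IsFiniteMeasure π] : Measure (X × Measure Y) :=
  (π.map Prod.fst).map (fun x => (x, π.condKernel x))

lemma countable_generatePiSystem' {α : Type*} {S : Set (Set α)} (hS : S.Countable) :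
    (generatePiSystem S).Countable := by
  have : Countable ↥S := hS.to_subtype
  have hfold : ∀ (l : List (Set α)) (c : Set α),
      l.foldr (· ∩ ·) c = l.foldr (· ∩ ·) Set.univ ∩ c := by
    intro l
    induction l with
    | nil => intro c; simp
    | cons a l ih =>
      intro c
      rw [List.foldr_cons, List.foldr_cons, ih, ih Set.univ, Set.inter_univ, Set.inter_assoc]
  refine Set.Countable.mono ?_
    (Set.countable_range (fun l : List ↥S => (l.map Subtype.val).foldr (· ∩ ·) Set.univ))
  intro t ht
  induction ht with
  | base hs => exact ⟨[⟨_, hs⟩], Set.inter_univ _⟩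
  | inter h_s h_t _ ih1 ih2 =>
    obtain ⟨l1, hl1⟩ := ih1
    obtain ⟨l2, hl2⟩ := ih2
    refine ⟨l1 ++ l2, ?_⟩
    show ((l1 ++ l2).map Subtype.val).foldr (· ∩ ·) Set.univ = _
    rw [List.map_append, List.foldr_append, hfold, ← hl1, ← hl2]

lemma measurableSet_kernel_graph {X Y : Type*} [MeasurableSpace X] [MeasurableSpace Y]
    [MeasurableSpace.CountablyGenerated Y]
    (κ : Kernel X Y) [IsMarkovKernel κ] :
    MeasurableSet {z : X × Measure Y | z.2 = κ z.1} := by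
  set S := MeasurableSpace.countableGeneratingSet Y with hSdef
  set C := generatePiSystem S with hCdef
  have hCc : C.Countable :=
    countable_generatePiSystem' (MeasurableSpace.countable_countableGeneratingSet)
  have hCm : ∀ A ∈ C, MeasurableSet A := fun A hA =>
    generatePiSystem_measurableSet
      (fun s hs => MeasurableSpace.measurableSet_countableGeneratingSet hs) A hA
  have hgen : ‹MeasurableSpace Y› = MeasurableSpace.generateFrom C := by
    rw [hCdef, generateFrom_generatePiSystem_eq,
      MeasurableSpace.generateFrom_countableGeneratingSet]
  have hmeq : ∀ (A : Set Y), MeasurableSet A →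
      MeasurableSet {z : X × Measure Y | z.2 A = κ z.1 A} := by
    intro A hA
    have h1 : Measurable fun z : X × Measure Y => z.2 A :=
      (Measure.measurable_coe hA).comp measurable_snd
    have h2 : Measurable fun z : X × Measure Y => κ z.1 A :=
      (κ.measurable_coe hA).comp measurable_fst
    have : {z : X × Measure Y | z.2 A = κ z.1 A}
        = {z | z.2 A ≤ κ z.1 A} ∩ {z | κ z.1 A ≤ z.2 A} := by
      ext z; simp [le_antisymm_iff]
    rw [this]
    exact (measurableSet_le h1 h2).inter (measurableSet_le h2 h1)
  have hset : {z : X × Measure Y | z.2 = κ z.1}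
      = {z : X × Measure Y | z.2 Set.univ = κ z.1 Set.univ}
        ∩ ⋂ A ∈ C, {z | z.2 A = κ z.1 A} := by
    ext z
    simp only [Set.mem_setOf_eq, Set.mem_inter_iff, Set.mem_iInter]
    constructor
    · rintro h; rw [h]; exact ⟨rfl, fun A _ => rfl⟩
    · rintro ⟨hu, hA⟩
      haveI : IsFiniteMeasure z.2 := ⟨by rw [hu]; exact measure_lt_top _ _⟩
      exact MeasureTheory.ext_of_generate_finite C hgen (isPiSystem_generatePiSystem S) hA hu
  rw [hset]
  exact (hmeq _ MeasurableSet.univ).inter (MeasurableSet.biInter hCc fun A hA => hmeq A (hCm A hA))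

lemma measurableEmbedding_graphMap {X Y : Type*} [MeasurableSpace X] [MeasurableSpace Y]
    [MeasurableSpace.CountablyGenerated Y]
    (κ : Kernel X Y) [IsMarkovKernel κ] :
    MeasurableEmbedding (fun x : X => ((x, κ x) : X × Measure Y)) := by
  refine ⟨fun a b h => congrArg Prod.fst h, measurable_id.prodMk κ.measurable, ?_⟩
  intro s hs
  have : (fun x : X => ((x, κ x) : X × Measure Y)) '' s
      = (Prod.fst ⁻¹' s) ∩ {z : X × Measure Y | z.2 = κ z.1} := by
    ext z
    constructor
    · rintro ⟨x, hx, rfl⟩; exact ⟨hx, rfl⟩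
    · rintro ⟨hz, hgz⟩
      exact ⟨z.1, hz, Prod.ext rfl hgz.symm⟩
  rw [this]
  exact (measurable_fst hs).inter (measurableSet_kernel_graph κ)

/-- The adapted Wasserstein distance coincides with the Wasserstein distance between the
embedded measures: `AW_r(π, π') = W_r(J(π), J(π'))`, where `X × P_r(Y)` carries the metric
`((x,p),(x',p')) ↦ (d_X(x,x')^r + W_r^r(p,p'))^{1/r}`. -/
theorem stmt17 {X Y : Type*}
    [MetricSpace X] [CompleteSpace X] [SecondCountableTopology X]
    [MeasurableSpace X] [BorelSpace X]
    [MetricSpace Y] [CompleteSpace Y] [SecondCountableTopology Y]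
    [MeasurableSpace Y] [BorelSpace Y] [Nonempty Y]
    (r : ℝ) (hr : 1 ≤ r) (x₀ : X) (y₀ : Y) (m₀ : ℝ) (hm₀ : 0 < m₀)
    (π π' : Measure (X × Y)) [IsFiniteMeasure π] [IsFiniteMeasure π']
    (hmass : π Set.univ = ENNReal.ofReal m₀) (hmass' : π' Set.univ = ENNReal.ofReal m₀)
    (hmom : Integrable (fun q : X × Y => dist q.1 x₀ ^ r + dist q.2 y₀ ^ r) π)
    (hmom' : Integrable (fun q : X × Y => dist q.1 x₀ ^ r + dist q.2 y₀ ^ r) π') :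
    (sInf {c : ℝ | ∃ χ : Measure (X × X),
        χ.map Prod.fst = π.map Prod.fst ∧ χ.map Prod.snd = π'.map Prod.fst ∧
        c = ∫ q, (dist q.1 q.2 ^ r + WrRpow r (π.condKernel q.1) (π'.condKernel q.2)) ∂χ})
        ^ (1 / r)
      = (sInf {c : ℝ | ∃ ρ : Measure ((X × Measure Y) × (X × Measure Y)),
          ρ.map Prod.fst = Jembed π ∧ ρ.map Prod.snd = Jembed π' ∧
          c = ∫ q, (dist q.1.1 q.2.1 ^ r + WrRpow r q.1.2 q.2.2) ∂ρ}) ^ (1 / r) := by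
  have hembe := measurableEmbedding_graphMap (X := X) π.condKernel
  have hembe' := measurableEmbedding_graphMap (X := X) π'.condKernel
  set e : X → X × Measure Y := fun x => (x, π.condKernel x) with he
  set e' : X → X × Measure Y := fun x => (x, π'.condKernel x) with he'
  set g : X × X → (X × Measure Y) × (X × Measure Y) := fun q => (e q.1, e' q.2) with hgdef
  have hg : MeasurableEmbedding g := hembe.prodMap hembe'
  have hh : Measurable (fun z : (X × Measure Y) × (X × Measure Y) => ((z.1.1, z.2.1) : X × X)) :=
    (measurable_fst.comp measurable_fst).prodMk (measurable_fst.comp measurable_snd)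
  have hJ : Jembed π = (π.map Prod.fst).map e := rfl
  have hJ' : Jembed π' = (π'.map Prod.fst).map e' := rfl
  congr 2
  ext c
  simp only [Set.mem_setOf_eq]
  constructor
  · rintro ⟨χ, h1, h2, rfl⟩
    refine ⟨χ.map g, ?_, ?_, ?_⟩
    · rw [Measure.map_map measurable_fst hg.measurable]
      have : (Prod.fst ∘ g : X × X → X × Measure Y) = e ∘ Prod.fst := rfl
      rw [this, ← Measure.map_map hembe.measurable measurable_fst, h1, hJ]
    · rw [Measure.map_map measurable_snd hg.measurable]
      have : (Prod.snd ∘ g : X × X → X × Measure Y) = e' ∘ Prod.snd := rfl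
      rw [this, ← Measure.map_map hembe'.measurable measurable_snd, h2, hJ']
    · rw [hg.integral_map]
  · rintro ⟨ρ, h1, h2, rfl⟩
    set h : (X × Measure Y) × (X × Measure Y) → X × X := fun z => (z.1.1, z.2.1) with hhdef
    have hΓ : MeasurableSet {w : X × Measure Y | w.2 = π.condKernel w.1} :=
      measurableSet_kernel_graph π.condKernel
    have hΓ' : MeasurableSet {w : X × Measure Y | w.2 = π'.condKernel w.1} :=
      measurableSet_kernel_graph π'.condKernel
    have hae1 : ∀ᵐ z ∂ρ, z.1 ∈ {w : X × Measure Y | w.2 = π.condKernel w.1} := by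
      rw [ae_iff]
      have : {z : (X × Measure Y) × (X × Measure Y) |
          ¬ z.1 ∈ {w : X × Measure Y | w.2 = π.condKernel w.1}}
          = Prod.fst ⁻¹' {w : X × Measure Y | w.2 = π.condKernel w.1}ᶜ := rfl
      rw [this, ← Measure.map_apply measurable_fst hΓ.compl, h1, hJ,
        Measure.map_apply hembe.measurable hΓ.compl]
      have hpre : e ⁻¹' {w : X × Measure Y | w.2 = π.condKernel w.1}ᶜ = ∅ := by
        ext x; simp [e]
      rw [hpre]
      exact measure_empty
    have hae2 : ∀ᵐ z ∂ρ, z.2 ∈ {w : X × Measure Y | w.2 = π'.condKernel w.1} := by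
      rw [ae_iff]
      have : {z : (X × Measure Y) × (X × Measure Y) |
          ¬ z.2 ∈ {w : X × Measure Y | w.2 = π'.condKernel w.1}}
          = Prod.snd ⁻¹' {w : X × Measure Y | w.2 = π'.condKernel w.1}ᶜ := rfl
      rw [this, ← Measure.map_apply measurable_snd hΓ'.compl, h2, hJ',
        Measure.map_apply hembe'.measurable hΓ'.compl]
      have hpre : e' ⁻¹' {w : X × Measure Y | w.2 = π'.condKernel w.1}ᶜ = ∅ := by
        ext x; simp [e']
      rw [hpre]
      exact measure_empty
    have hae : (g ∘ h) =ᵐ[ρ] id := by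
      filter_upwards [hae1, hae2] with z hz1 hz2
      have : g (h z) = ((z.1.1, π.condKernel z.1.1), (z.2.1, π'.condKernel z.2.1)) := rfl
      rw [Function.comp_apply, this, id_eq]
      exact Prod.ext (Prod.ext rfl hz1.symm) (Prod.ext rfl hz2.symm)
    have hρ : (ρ.map h).map g = ρ := by
      rw [Measure.map_map hg.measurable hh, Measure.map_congr hae, Measure.map_id]
    refine ⟨ρ.map h, ?_, ?_, ?_⟩
    · rw [Measure.map_map measurable_fst hh]
      have : (Prod.fst ∘ h : _ → X) = Prod.fst ∘ (Prod.fst : (X × Measure Y) × (X × Measure Y) → X × Measure Y) := rfl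
      rw [this, ← Measure.map_map measurable_fst measurable_fst, h1, hJ,
        Measure.map_map measurable_fst hembe.measurable]
      have : ((Prod.fst ∘ e) : X → X) = id := rfl
      rw [this, Measure.map_id]
    · rw [Measure.map_map measurable_snd hh]
      have : (Prod.snd ∘ h : _ → X) = Prod.fst ∘ (Prod.snd : (X × Measure Y) × (X × Measure Y) → X × Measure Y) := rfl
      rw [this, ← Measure.map_map measurable_fst measurable_snd, h2, hJ',
        Measure.map_map measurable_fst hembe'.measurable]
      have : ((Prod.fst ∘ e') : X → X) = id := rfl
      rw [this, Measure.map_id]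
    · conv_lhs => rw [← hρ]
      rw [hg.integral_map]
end
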